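/- arXiv:1311.0194 — 2 statements merged into one kernel-verified Lean document; each statement's English description precedes it below -/
import Mathlib

section
/- Let Y = M_1, the Banach space of L^1-bounded martingales adapted to (Σ_n), with its norm topology. Then the set {(f, x) ∈ Y × K : limsup_{n→∞} f_n(x) = +∞ and liminf_{n→∞} f_n(x) = −∞} is a dense G_δ subset of Y × K. In particular, there is a dense G_δ set of f ∈ Y such that {x ∈ K : limsup_{n→∞} f_n(x) = +∞ and liminf_{n→∞} f_n(x) = −∞} is a dense G_δ subset of K. -/
open MeasureTheory Filter Set
open scoped ENNReal Topology

noncomputable section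

namespace MartingalePaper

variable {Ω : Type}

/-- The discrete topology on `Set Ω`; each finite partition `D n` thus carries the
discrete topology, and `ℕ → Set Ω` the product topology. -/
instance : TopologicalSpace (Set Ω) := ⊥

/-- `(D n)` is a sequence of finite measurable partitions of `Ω`, each refined by the next. -/
def IsPartitionSeq [MeasurableSpace Ω] (D : ℕ → Finset (Set Ω)) : Prop :=
  (∀ n, ∀ A ∈ D n, MeasurableSet A) ∧
  (∀ n, ∀ A ∈ D n, A.Nonempty) ∧
  (∀ n, (D n : Set (Set Ω)).PairwiseDisjoint id) ∧
  (∀ n, ⋃ A ∈ D n, A = (Set.univ : Set Ω)) ∧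
  (∀ n, ∀ A ∈ D (n + 1), ∃ B ∈ D n, A ⊆ B)

/-- Standing Assumptions (A). -/
def AssumptionA [MeasurableSpace Ω] (P : Measure Ω) (D : ℕ → Finset (Set Ω)) : Prop :=
  (∀ n, ∀ A ∈ D n, 0 < P A) ∧ (∀ n, ∀ A ∈ D n, ∃ m, n < m ∧ A ∉ D m)

/-- The compact metrizable space `K` associated to the filtration: decreasing chains of atoms. -/
abbrev Kt (D : ℕ → Finset (Set Ω)) : Type _ :=
  {x : ℕ → Set Ω // (∀ n, x n ∈ D n) ∧ ∀ n m : ℕ, n ≤ m → x m ⊆ x n}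

/-- The function on `Ω` determined by the values `f n A` on the atoms `A ∈ D n`. -/
def mval (D : ℕ → Finset (Set Ω)) (f : ℕ → Set Ω → ℝ) (n : ℕ) (w : Ω) : ℝ :=
  ∑ A ∈ D n, A.indicator (fun _ => f n A) w

/-- A martingale adapted to the filtration `(σ(D n))`, in its canonical representation by
the (a.e. constant) values on the atoms:  `f n A` is the value of the `n`-th function on
the atom `A ∈ D n`. -/
def IsMart [MeasurableSpace Ω] (P : Measure Ω) (D : ℕ → Finset (Set Ω))
    (f : ℕ → Set Ω → ℝ) : Prop :=
  (∀ n, ∀ A : Set Ω, A ∉ D n → f n A = 0) ∧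
  ∀ n m : ℕ, n ≤ m → ∀ A ∈ D n,
    ∫ w in A, mval D f n w ∂P = ∫ w in A, mval D f m w ∂P

/-- `‖f_n‖_{L^p}`. -/
def lpNorm [MeasurableSpace Ω] (P : Measure Ω) (D : ℕ → Finset (Set Ω)) (p : ℝ≥0∞)
    (f : ℕ → Set Ω → ℝ) (n : ℕ) : ℝ≥0∞ :=
  eLpNorm (mval D f n) p P

/-- `‖f‖_p = sup_n ‖f_n‖_{L^p}`. -/
def martNorm [MeasurableSpace Ω] (P : Measure Ω) (D : ℕ → Finset (Set Ω)) (p : ℝ≥0∞)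
    (f : ℕ → Set Ω → ℝ) : ℝ≥0∞ :=
  ⨆ n, lpNorm P D p f n

/-- `M_p`, the space of `L^p`-bounded martingales adapted to the filtration. -/
def Mart [MeasurableSpace Ω] (P : Measure Ω) (D : ℕ → Finset (Set Ω)) (p : ℝ≥0∞) : Type _ :=
  {f : ℕ → Set Ω → ℝ // IsMart P D f ∧ martNorm P D p f ≠ ∞}

/-- The norm topology on `M_p`: the topology generated by the balls of the norm `‖·‖_p`
(which is exactly the topology of this metric). -/
instance [MeasurableSpace Ω] (P : Measure Ω) (D : ℕ → Finset (Set Ω)) (p : ℝ≥0∞) :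
    TopologicalSpace (Mart P D p) :=
  TopologicalSpace.generateFrom
    {s | ∃ (f : Mart P D p) (ε : ℝ≥0∞), 0 < ε ∧
      s = {g : Mart P D p | martNorm P D p (fun k A => g.1 k A - f.1 k A) < ε}}

/-- `limsup f_n(x) = +∞` and `liminf f_n(x) = -∞`. -/
def DivergesAt (D : ℕ → Finset (Set Ω)) (f : ℕ → Set Ω → ℝ) (x : Kt D) : Prop :=
  Filter.limsup (fun n => ((f n (x.1 n) : ℝ) : EReal)) Filter.atTop = ⊤ ∧
  Filter.liminf (fun n => ((f n (x.1 n) : ℝ) : EReal)) Filter.atTop = ⊥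

set_option linter.unusedSectionVars false
set_option linter.unusedVariables false
set_option maxHeartbeats 1000000

------------------------------------------------------------------
-- Part A : partition combinatorics and integral formulas
------------------------------------------------------------------
namespace Aux
open scoped Classical NNReal

variable [MeasurableSpace Ω] {P : Measure Ω} [IsProbabilityMeasure P]
  {D : ℕ → Finset (Set Ω)}

section Part
variable (hp : IsPartitionSeq D)
include hp

lemma meas {n A} (hA : A ∈ D n) : MeasurableSet A := hp.1 n A hA

lemma nonemp {n A} (hA : A ∈ D n) : A.Nonempty := hp.2.1 n A hA

lemma atom_eq {n} {A B : Set Ω} (hA : A ∈ D n) (hB : B ∈ D n)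
    (h : (A ∩ B).Nonempty) : A = B := by
  by_contra hne
  have hd : Disjoint A B := hp.2.2.1 n hA hB hne
  rw [Set.disjoint_iff_inter_eq_empty.1 hd] at h
  exact Set.not_nonempty_empty h

lemma exists_mem_atom (w : Ω) (n : ℕ) : ∃ A ∈ D n, w ∈ A := by
  have : w ∈ ⋃ A ∈ D n, A := by rw [hp.2.2.2.1 n]; trivial
  simpa using this

lemma exists_ancestor : ∀ {m n : ℕ}, n ≤ m → ∀ {B}, B ∈ D m → ∃ A ∈ D n, B ⊆ A := by
  intro m
  induction m with
  | zero => intro n hn B hB; exact ⟨B, by simpa [Nat.le_zero.1 hn] using hB, subset_rfl⟩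
  | succ m ih =>
    intro n hn B hB
    rcases Nat.lt_or_ge n (m+1) with h | h
    · rcases hp.2.2.2.2 m B hB with ⟨C, hC, hBC⟩
      rcases ih (Nat.lt_succ_iff.1 h) hC with ⟨A, hA, hCA⟩
      exact ⟨A, hA, hBC.trans hCA⟩
    · exact ⟨B, by simpa [Nat.le_antisymm hn h] using hB, subset_rfl⟩

lemma subset_or_disjoint {n m : ℕ} (h : n ≤ m) {A B : Set Ω}
    (hA : A ∈ D n) (hB : B ∈ D m) : B ⊆ A ∨ B ∩ A = ∅ := by
  rcases exists_ancestor hp h hB with ⟨A', hA', hBA'⟩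
  rcases Set.eq_empty_or_nonempty (B ∩ A) with he | hne
  · exact Or.inr he
  · rcases hne with ⟨w, hwB, hwA⟩
    have : A' = A := atom_eq hp hA' hA ⟨w, hBA' hwB, hwA⟩
    exact Or.inl (this ▸ hBA')

lemma subset_of_mem_inter {n m : ℕ} (h : n ≤ m) {A B : Set Ω}
    (hA : A ∈ D n) (hB : B ∈ D m) {w : Ω} (hwB : w ∈ B) (hwA : w ∈ A) : B ⊆ A := by
  rcases subset_or_disjoint hp h hA hB with h' | h'
  · exact h'
  · exact absurd (Set.mem_inter hwB hwA) (by simp [h'])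

/-- the unique ancestor is unique -/
lemma ancestor_unique {n m : ℕ} (_h : n ≤ m) {A A' B : Set Ω}
    (hA : A ∈ D n) (hA' : A' ∈ D n) (hB : B.Nonempty)
    (h1 : B ⊆ A) (h2 : B ⊆ A') : A = A' := by
  rcases hB with ⟨w, hw⟩
  exact atom_eq hp hA hA' ⟨w, h1 hw, h2 hw⟩

end Part

/-- The set of atoms of `D m` contained in `A`. -/
def Chil (D : ℕ → Finset (Set Ω)) (m : ℕ) (A : Set Ω) : Finset (Set Ω) :=
  (D m).filter (· ⊆ A)

lemma mem_chil {D : ℕ → Finset (Set Ω)} {m A B} :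
    B ∈ Chil D m A ↔ B ∈ D m ∧ B ⊆ A := by simp [Chil]

section Part2
variable (hp : IsPartitionSeq D)
include hp

lemma chil_cover {n m : ℕ} (h : n ≤ m) {A : Set Ω} (hA : A ∈ D n)
    {w : Ω} (hw : w ∈ A) : ∃ B ∈ Chil D m A, w ∈ B := by
  rcases exists_mem_atom hp w m with ⟨B, hB, hwB⟩
  exact ⟨B, mem_chil.2 ⟨hB, subset_of_mem_inter hp h hA hB hwB hw⟩, hwB⟩

lemma chil_eq_biUnion {n m : ℕ} (h : n ≤ m) {A : Set Ω} (hA : A ∈ D n) :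
    ⋃ B ∈ Chil D m A, B = A := by
  apply Set.Subset.antisymm
  · intro w hw
    simp only [Set.mem_iUnion] at hw
    rcases hw with ⟨B, hB, hwB⟩
    exact (mem_chil.1 hB).2 hwB
  · intro w hw
    rcases chil_cover hp h hA hw with ⟨B, hB, hwB⟩
    exact Set.mem_biUnion hB hwB

lemma measure_finset_sum {m : ℕ} {s : Finset (Set Ω)} (hs : s ⊆ D m) :
    P (⋃ B ∈ s, B) = ∑ B ∈ s, P B := by
  apply measure_biUnion_finset
  · intro a ha b hb hab
    exact hp.2.2.1 m (hs ha) (hs hb) hab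
  · intro b hb; exact meas hp (hs hb)

lemma chil_measure {n m : ℕ} (h : n ≤ m) {A : Set Ω} (hA : A ∈ D n) :
    P A = ∑ B ∈ Chil D m A, P B := by
  have h2 := measure_finset_sum (P := P) hp (s := Chil D m A) (fun _ hB => (mem_chil.1 hB).1)
  rwa [chil_eq_biUnion hp h hA] at h2

lemma chil_nonempty {n m : ℕ} (h : n ≤ m) {A : Set Ω} (hA : A ∈ D n) :
    (Chil D m A).Nonempty := by
  rcases nonemp hp hA with ⟨w, hw⟩
  rcases chil_cover hp h hA hw with ⟨B, hB, _⟩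
  exact ⟨B, hB⟩

/-- once split, always split -/
lemma not_mem_later {n m₁ m₂ : ℕ} (h1 : n ≤ m₁) (h2 : m₁ ≤ m₂) {A : Set Ω}
    (hA : A ∈ D n) (hm : A ∉ D m₁) : A ∉ D m₂ := by
  intro hA2
  rcases exists_ancestor hp h2 hA2 with ⟨A₁, hA₁, hsub⟩
  have h3 : A₁ ⊆ A ∨ A₁ ∩ A = ∅ := subset_or_disjoint hp h1 hA hA₁
  rcases nonemp hp hA2 with ⟨w, hw⟩
  rcases h3 with h3 | h3
  · exact hm (by rwa [Set.Subset.antisymm h3 hsub] at hA₁)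
  · exact absurd (Set.mem_inter (hsub hw) hw) (by simp [h3])

lemma chil_card_two {n m : ℕ} (h : n ≤ m) {A : Set Ω} (hA : A ∈ D n) (hm : A ∉ D m) :
    2 ≤ (Chil D m A).card := by
  rcases chil_nonempty hp h hA with ⟨B, hB⟩
  rcases Finset.eq_singleton_or_nontrivial hB with hs | hs
  · exfalso
    have : A = B := by
      have := chil_eq_biUnion hp h hA
      rw [hs] at this; simpa using this.symm
    exact hm (this ▸ (mem_chil.1 hB).1)
  · exact Finset.one_lt_card_iff_nontrivial.mpr hs

lemma chil_card_mono {n m m' : ℕ} (h : n ≤ m) (h' : m ≤ m') {A : Set Ω} (hA : A ∈ D n) :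
    (Chil D m A).card ≤ (Chil D m' A).card := by
  classical
  -- map each child to a grandchild inside it
  have hsel : ∀ B ∈ Chil D m A, ∃ C, C ∈ Chil D m' A ∧ C ⊆ B := by
    intro B hB
    rcases mem_chil.1 hB with ⟨hB1, hB2⟩
    rcases chil_nonempty hp h' hB1 with ⟨C, hC⟩
    rcases mem_chil.1 hC with ⟨hC1, hC2⟩
    exact ⟨C, mem_chil.2 ⟨hC1, hC2.trans hB2⟩, hC2⟩
  choose sel hsel1 hsel2 using hsel
  apply Finset.card_le_card_of_injOn (fun B => if hB : B ∈ Chil D m A then sel B hB else ∅)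
  · intro B hB; simp only [Finset.mem_coe] at hB ⊢; simp only [hB, dif_pos]; exact hsel1 B hB
  · intro B₁ hB₁ B₂ hB₂ he
    simp only [Finset.mem_coe] at hB₁ hB₂
    simp only [hB₁, hB₂, dif_pos] at he
    by_contra hne
    have hd : Disjoint B₁ B₂ :=
      hp.2.2.1 m (mem_chil.1 hB₁).1 (mem_chil.1 hB₂).1 hne
    have h1 := hsel2 B₁ hB₁
    have h2 := hsel2 B₂ hB₂
    rw [he] at h1
    rcases nonemp hp (mem_chil.1 (hsel1 B₂ hB₂)).1 with ⟨w, hw⟩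
    exact Set.disjoint_iff.1 hd (Set.mem_inter (h1 hw) (h2 hw)) 

lemma chil_card_unbounded (hA' : AssumptionA P D) {n : ℕ} {A : Set Ω} (hA : A ∈ D n) :
    ∀ c : ℕ, ∃ m, n < m ∧ c ≤ (Chil D m A).card := by
  intro c
  induction c with
  | zero => exact ⟨n+1, Nat.lt_succ_self n, Nat.zero_le _⟩
  | succ c ih =>
    rcases ih with ⟨m, hm, hc⟩
    -- find a level where every current child has split
    have hsplit : ∀ B ∈ Chil D m A, ∃ mB, m < mB ∧ B ∉ D mB := by
      intro B hB; exact hA'.2 m B (mem_chil.1 hB).1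
    choose mB hmB1 hmB2 using hsplit
    set S : ℕ := (Chil D m A).sup (fun B => if hB : B ∈ Chil D m A then mB B hB else 0) with hS
    have hle : ∀ B (hB : B ∈ Chil D m A), mB B hB ≤ S := by
      intro B hB
      exact le_trans (le_of_eq (by simp [hB])) (Finset.le_sup hB)
    have hone : 1 ≤ (Chil D m A).card :=
      Finset.card_pos.2 (chil_nonempty hp (le_of_lt hm) hA)
    have hmS : m < S := by
      rcases chil_nonempty hp (le_of_lt hm) hA with ⟨B, hB⟩
      exact lt_of_lt_of_le (hmB1 B hB) (hle B hB)
    refine ⟨S + 1, by omega, ?_⟩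
    have key : ∀ B ∈ Chil D m A, 2 ≤ (Chil D (S+1) B).card := by
      intro B hB
      apply chil_card_two hp (by have := hmS; omega) (mem_chil.1 hB).1
      exact not_mem_later hp (le_of_lt (hmB1 B hB)) (by have := hle B hB; omega)
        (mem_chil.1 hB).1 (hmB2 B hB)
    have hdisj : (Chil D m A : Set (Set Ω)).PairwiseDisjoint (fun B => Chil D (S+1) B) := by
      intro B₁ hB₁ B₂ hB₂ hne
      simp only [Function.onFun, Finset.disjoint_left]
      intro C hC1 hC2
      have hd : Disjoint B₁ B₂ := hp.2.2.1 m (mem_chil.1 hB₁).1 (mem_chil.1 hB₂).1 hne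
      rcases nonemp hp (mem_chil.1 hC1).1 with ⟨w, hw⟩
      exact Set.disjoint_iff.1 hd ⟨(mem_chil.1 hC1).2 hw, (mem_chil.1 hC2).2 hw⟩
    have hsub : (Chil D m A).biUnion (fun B => Chil D (S+1) B) ⊆ Chil D (S+1) A := by
      intro C hC
      rcases Finset.mem_biUnion.1 hC with ⟨B, hB, hCB⟩
      exact mem_chil.2 ⟨(mem_chil.1 hCB).1, (mem_chil.1 hCB).2.trans (mem_chil.1 hB).2⟩
    have hsum : (Chil D m A).card • 2 ≤ ∑ B ∈ Chil D m A, (Chil D (S+1) B).card :=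
      Finset.card_nsmul_le_sum _ _ _ key
    rw [smul_eq_mul] at hsum
    have hcb : ∑ B ∈ Chil D m A, (Chil D (S+1) B).card
        = ((Chil D m A).biUnion (fun B => Chil D (S+1) B)).card := by
      rw [Finset.card_biUnion]
      intro B₁ h₁ B₂ h₂ hne; exact hdisj h₁ h₂ hne
    have := Finset.card_le_card hsub
    omega

end Part2

section PartB
variable (hp : IsPartitionSeq D)
include hp

lemma mval_eq_on {n : ℕ} {A : Set Ω} (hA : A ∈ D n) (f : ℕ → Set Ω → ℝ) {w : Ω}
    (hw : w ∈ A) : mval D f n w = f n A := by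
  unfold mval
  rw [Finset.sum_eq_single A]
  · simp [Set.indicator_of_mem hw]
  · intro B hB hne
    have hnw : w ∉ B := fun hwB => hne (atom_eq hp hB hA ⟨w, hwB, hw⟩)
    simp [Set.indicator_of_notMem hnw]
  · intro h; exact absurd hA h

lemma mval_meas (f : ℕ → Set Ω → ℝ) (n : ℕ) : Measurable (mval D f n) := by
  apply Finset.measurable_sum
  intro A hA
  exact measurable_const.indicator (meas hp hA)

lemma mval_integrable (f : ℕ → Set Ω → ℝ) (n : ℕ) : Integrable (mval D f n) P := by
  apply integrable_finset_sum
  intro A hA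
  exact (integrable_const (f n A)).indicator (meas hp hA)

lemma setIntegral_mval {n m : ℕ} (h : n ≤ m) {A : Set Ω} (hA : A ∈ D n)
    (f : ℕ → Set Ω → ℝ) :
    ∫ w in A, mval D f m w ∂P = ∑ B ∈ Chil D m A, f m B * (P B).toReal := by
  unfold mval
  rw [integral_finset_sum _
    (fun B hB => ((integrable_const (f m B)).indicator (meas hp hB)).integrableOn)]
  have hco : ∀ B ∈ D m,
      (∫ w in A, B.indicator (fun _ => f m B) w ∂P)
        = if B ⊆ A then f m B * (P B).toReal else 0 := by
    intro B hB
    rw [setIntegral_indicator (meas hp hB), setIntegral_const]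
    rcases subset_or_disjoint hp h hA hB with hs | hs
    · rw [if_pos hs, Set.inter_eq_self_of_subset_right hs, smul_eq_mul, mul_comm, measureReal_def]
    · have hAB : A ∩ B = ∅ := by rwa [Set.inter_comm] at hs
      rw [if_neg, hAB]
      · simp
      · intro hsub
        rcases nonemp hp hB with ⟨w, hw⟩
        exact absurd (Set.mem_inter hw (hsub hw)) (by simp [hs])
  rw [Finset.sum_congr rfl hco, ← Finset.sum_filter]
  rfl

lemma lpNorm_one (f : ℕ → Set Ω → ℝ) (m : ℕ) :
    lpNorm P D 1 f m = ∑ B ∈ D m, (‖f m B‖₊ : ℝ≥0∞) * P B := by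
  unfold lpNorm
  rw [eLpNorm_one_eq_lintegral_enorm]
  simp only [enorm_eq_nnnorm]
  have hpt : (fun w => (‖mval D f m w‖₊ : ℝ≥0∞))
      = fun w => ∑ B ∈ D m, B.indicator (fun _ => (‖f m B‖₊ : ℝ≥0∞)) w := by
    funext w
    rcases exists_mem_atom hp w m with ⟨A, hA, hwA⟩
    rw [mval_eq_on hp hA f hwA, Finset.sum_eq_single A]
    · simp [Set.indicator_of_mem hwA]
    · intro B hB hne
      have hnw : w ∉ B := fun hwB => hne (atom_eq hp hB hA ⟨w, hwB, hwA⟩)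
      simp [Set.indicator_of_notMem hnw]
    · intro h; exact absurd hA h
  rw [hpt, lintegral_finset_sum _ (fun B hB => measurable_const.indicator (meas hp hB))]
  apply Finset.sum_congr rfl
  intro B hB
  rw [lintegral_indicator (meas hp hB), setLIntegral_const]

omit hp in
lemma mval_addf (f g : ℕ → Set Ω → ℝ) (n : ℕ) :
    mval D (fun k A => f k A + g k A) n = fun w => mval D f n w + mval D g n w := by
  funext w
  unfold mval
  rw [← Finset.sum_add_distrib]
  apply Finset.sum_congr rfl
  intro A hA
  by_cases hw : w ∈ A <;> simp [hw]

omit hp in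
lemma lpNorm_le_martNorm (f : ℕ → Set Ω → ℝ) (p : ℝ≥0∞) (n : ℕ) :
    lpNorm P D p f n ≤ martNorm P D p f := le_iSup _ n

lemma martNorm_add_le (f g : ℕ → Set Ω → ℝ) :
    martNorm P D 1 (fun k A => f k A + g k A)
      ≤ martNorm P D 1 f + martNorm P D 1 g := by
  apply iSup_le
  intro n
  have h1 : lpNorm P D 1 (fun k A => f k A + g k A) n
      ≤ lpNorm P D 1 f n + lpNorm P D 1 g n := by
    unfold lpNorm
    rw [mval_addf]
    exact eLpNorm_add_le (mval_meas hp f n).aestronglyMeasurable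
      (mval_meas hp g n).aestronglyMeasurable le_rfl
  exact le_trans h1 (add_le_add (lpNorm_le_martNorm _ _ _) (lpNorm_le_martNorm _ _ _))

lemma sum_abs_le (f : ℕ → Set Ω → ℝ) (hf : martNorm P D 1 f ≠ ∞) (m : ℕ) :
    ∑ B ∈ D m, |f m B| * (P B).toReal ≤ (martNorm P D 1 f).toReal := by
  have h1 : (lpNorm P D 1 f m).toReal = ∑ B ∈ D m, |f m B| * (P B).toReal := by
    rw [lpNorm_one hp]
    rw [ENNReal.toReal_sum (fun B _ => ENNReal.mul_ne_top ENNReal.coe_ne_top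
      (measure_ne_top P B))]
    apply Finset.sum_congr rfl
    intro B hB
    rw [ENNReal.toReal_mul]
    simp [Real.norm_eq_abs]
  rw [← h1]
  exact ENNReal.toReal_mono hf (lpNorm_le_martNorm _ _ _)

lemma good_child (hA' : AssumptionA P D) (f : ℕ → Set Ω → ℝ) (R : ℝ)
    (hR : ∀ m, ∑ B ∈ D m, |f m B| * (P B).toReal ≤ R)
    {n : ℕ} {A : Set Ω} (hA : A ∈ D n) {δ : ℝ} (hδ : 0 < δ) (n' : ℕ) :
    ∃ m, n' < m ∧ n < m ∧ ∃ B ∈ D m, B ⊆ A ∧ (P B).toReal ≤ δ ∧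
      |f m B| * (P B).toReal ≤ δ := by
  classical
  set c₁ : ℕ := Nat.floor ((P A).toReal / δ) with hc₁
  set c₂ : ℕ := Nat.floor (max R 0 / δ) with hc₂
  rcases chil_card_unbounded hp hA' hA (c₁ + c₂ + 1) with ⟨m₀, hm₀, hcard₀⟩
  set m : ℕ := max m₀ (n' + 1) with hm
  have hnm : n < m := lt_of_lt_of_le hm₀ (le_max_left _ _)
  have hcard : c₁ + c₂ + 1 ≤ (Chil D m A).card :=
    le_trans hcard₀ (chil_card_mono hp (le_of_lt hm₀) (le_max_left _ _) hA)
  set bad₁ := (Chil D m A).filter (fun B => δ < (P B).toReal) with hb₁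
  set bad₂ := (Chil D m A).filter (fun B => δ < |f m B| * (P B).toReal) with hb₂
  have hsum₁ : ∑ B ∈ Chil D m A, (P B).toReal = (P A).toReal := by
    rw [chil_measure hp (le_of_lt hnm) hA,
      ENNReal.toReal_sum (fun B _ => measure_ne_top P B)]
  have hcard₁ : bad₁.card ≤ c₁ := by
    apply Nat.le_floor
    rw [le_div_iff₀ hδ]
    calc (bad₁.card : ℝ) * δ = bad₁.card • δ := by rw [nsmul_eq_mul]
      _ ≤ ∑ B ∈ bad₁, (P B).toReal := Finset.card_nsmul_le_sum _ _ _
          (fun B hB => le_of_lt (Finset.mem_filter.1 hB).2)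
      _ ≤ ∑ B ∈ Chil D m A, (P B).toReal := Finset.sum_le_sum_of_subset_of_nonneg
          (Finset.filter_subset _ _) (fun B _ _ => ENNReal.toReal_nonneg)
      _ = (P A).toReal := hsum₁
  have hcard₂ : bad₂.card ≤ c₂ := by
    apply Nat.le_floor
    rw [le_div_iff₀ hδ]
    calc (bad₂.card : ℝ) * δ = bad₂.card • δ := by rw [nsmul_eq_mul]
      _ ≤ ∑ B ∈ bad₂, |f m B| * (P B).toReal := Finset.card_nsmul_le_sum _ _ _
          (fun B hB => le_of_lt (Finset.mem_filter.1 hB).2)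
      _ ≤ ∑ B ∈ Chil D m A, |f m B| * (P B).toReal :=
          Finset.sum_le_sum_of_subset_of_nonneg (Finset.filter_subset _ _)
          (fun B _ _ => mul_nonneg (abs_nonneg _) ENNReal.toReal_nonneg)
      _ ≤ ∑ B ∈ D m, |f m B| * (P B).toReal :=
          Finset.sum_le_sum_of_subset_of_nonneg
          (fun B hB => (mem_chil.1 hB).1)
          (fun B _ _ => mul_nonneg (abs_nonneg _) ENNReal.toReal_nonneg)
      _ ≤ R := hR m
      _ ≤ max R 0 := le_max_left _ _
  have : ∃ B ∈ Chil D m A, B ∉ bad₁ ∪ bad₂ := by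
    by_contra hcon
    push_neg at hcon
    have hsub : Chil D m A ⊆ bad₁ ∪ bad₂ := fun B hB => hcon B hB
    have := Finset.card_le_card hsub
    have := Finset.card_union_le bad₁ bad₂
    omega
  rcases this with ⟨B, hB, hBg⟩
  rw [Finset.mem_union] at hBg
  push_neg at hBg
  rcases hBg with ⟨hg₁, hg₂⟩
  refine ⟨m, lt_of_lt_of_le (Nat.lt_succ_self n') (le_max_right _ _), hnm,
    B, (mem_chil.1 hB).1, (mem_chil.1 hB).2, ?_, ?_⟩
  · by_contra hlt
    exact hg₁ (Finset.mem_filter.2 ⟨hB, lt_of_not_ge hlt⟩)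
  · by_contra hlt
    exact hg₂ (Finset.mem_filter.2 ⟨hB, lt_of_not_ge hlt⟩)

end PartB


------------------------------------------------------------------
-- Part C : elementary spike martingales
------------------------------------------------------------------
section PartC

structure SpikeData (Ω : Type) where
  t : ℕ
  l : ℕ
  c : ℝ
  e : ℝ
  B : Set Ω
  W : Set Ω

/-- value of the elementary spike martingale on an atom `E` of `D n` -/
def spikeVal (s : SpikeData Ω) (n : ℕ) (E : Set Ω) : ℝ :=
  (if s.l ≤ n ∧ E ⊆ s.B then s.c else 0) +
  (if s.l ≤ n ∧ E ⊆ s.W ∧ E ∩ s.B = ∅ then s.e else 0)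

variable {P : Measure Ω} [IsProbabilityMeasure P] {D : ℕ → Finset (Set Ω)}

/-- structural soundness of a spike -/
def Placed (P : Measure Ω) (D : ℕ → Finset (Set Ω)) (s : SpikeData Ω) : Prop :=
  (s.c = 0 ∧ s.e = 0) ∨
  (1 ≤ s.l ∧ s.l ≤ s.t ∧ s.B ∈ D s.t ∧ s.B ∈ D s.l ∧ s.W ∈ D (s.l - 1) ∧ s.B ⊆ s.W ∧
   0 < P (s.W \ s.B) ∧ s.e * (P (s.W \ s.B)).toReal = -(s.c * (P s.B).toReal))

lemma spikeVal_trivial {s : SpikeData Ω} (h : s.c = 0 ∧ s.e = 0) (n : ℕ) (E : Set Ω) :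
    spikeVal s n E = 0 := by simp [spikeVal, h.1, h.2]

lemma spikeVal_inactive {s : SpikeData Ω} {n : ℕ} (h : ¬ s.l ≤ n) (E : Set Ω) :
    spikeVal s n E = 0 := by simp [spikeVal, h]

variable (hp : IsPartitionSeq D)
include hp

lemma mass_toReal {m : ℕ} (F : Finset (Set Ω)) (hF : F ⊆ D m) :
    ∑ E ∈ F, (P E).toReal = (P (⋃ E ∈ F, E)).toReal := by
  rw [measure_finset_sum (P := P) hp hF,
    ENNReal.toReal_sum (fun E _ => measure_ne_top P E)]

lemma spike_sum {s : SpikeData Ω} (hs : Placed P D s) {n m : ℕ} (h : n ≤ m)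
    {A : Set Ω} (hA : A ∈ D n) :
    ∑ E ∈ Chil D m A, spikeVal s m E * (P E).toReal
      = spikeVal s n A * (P A).toReal := by
  classical
  rcases hs with htriv | ⟨hl1, hlt, hBt, hBl, hW, hBW, hpos, hrel⟩
  · simp [spikeVal_trivial htriv]
  by_cases hlm : s.l ≤ m
  swap
  · have hln : ¬ s.l ≤ n := fun hc => hlm (le_trans hc h)
    simp [spikeVal_inactive hlm, spikeVal_inactive hln]
  -- names for the two mass sets
  set F₁ := (Chil D m A).filter (· ⊆ s.B) with hF₁
  set F₂ := (Chil D m A).filter (fun E => E ⊆ s.W ∧ E ∩ s.B = ∅) with hF₂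
  have hl1m : s.l - 1 ≤ m := le_trans (Nat.sub_le _ _) hlm
  have hmass₁ : ∑ E ∈ F₁, (P E).toReal = (P (A ∩ s.B)).toReal := by
    rw [mass_toReal (P := P) hp F₁ (fun E hE => (mem_chil.1 (Finset.mem_filter.1 hE).1).1)]
    congr 2
    apply Set.Subset.antisymm
    · intro w hw
      simp only [Set.mem_iUnion] at hw
      rcases hw with ⟨E, hE, hwE⟩
      rcases Finset.mem_filter.1 hE with ⟨hE1, hE2⟩
      exact ⟨(mem_chil.1 hE1).2 hwE, hE2 hwE⟩
    · intro w hw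
      rcases chil_cover hp h hA hw.1 with ⟨E, hE, hwE⟩
      have hEB : E ⊆ s.B :=
        subset_of_mem_inter hp hlm hBl (mem_chil.1 hE).1 hwE hw.2
      exact Set.mem_biUnion (Finset.mem_filter.2 ⟨hE, hEB⟩) hwE
  have hmass₂ : ∑ E ∈ F₂, (P E).toReal = (P ((A ∩ s.W) \ s.B)).toReal := by
    rw [mass_toReal (P := P) hp F₂ (fun E hE => (mem_chil.1 (Finset.mem_filter.1 hE).1).1)]
    congr 2
    apply Set.Subset.antisymm
    · intro w hw
      simp only [Set.mem_iUnion] at hw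
      rcases hw with ⟨E, hE, hwE⟩
      rcases Finset.mem_filter.1 hE with ⟨hE1, hE2, hE3⟩
      refine ⟨⟨(mem_chil.1 hE1).2 hwE, hE2 hwE⟩, fun hwB => ?_⟩
      exact absurd (Set.mem_inter hwE hwB) (by simp [hE3])
    · intro w hw
      rcases chil_cover hp h hA hw.1.1 with ⟨E, hE, hwE⟩
      have hEm := (mem_chil.1 hE).1
      have hEW : E ⊆ s.W := subset_of_mem_inter hp hl1m hW hEm hwE hw.1.2
      have hEB : E ∩ s.B = ∅ := by
        rcases subset_or_disjoint hp hlm hBl hEm with hc | hc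
        · exact absurd (hc hwE) hw.2
        · exact hc
      exact Set.mem_biUnion (Finset.mem_filter.2 ⟨hE, hEW, hEB⟩) hwE
  have hLHS : ∑ E ∈ Chil D m A, spikeVal s m E * (P E).toReal
      = s.c * (P (A ∩ s.B)).toReal + s.e * (P ((A ∩ s.W) \ s.B)).toReal := by
    have hsplit : ∀ E ∈ Chil D m A, spikeVal s m E * (P E).toReal
        = (if E ⊆ s.B then s.c * (P E).toReal else 0)
          + (if E ⊆ s.W ∧ E ∩ s.B = ∅ then s.e * (P E).toReal else 0) := by
      intro E hE
      simp only [spikeVal, hlm, true_and, add_mul, ite_mul, zero_mul]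
    rw [Finset.sum_congr rfl hsplit, Finset.sum_add_distrib,
      ← Finset.sum_filter, ← Finset.sum_filter, ← hF₁, ← hF₂,
      ← Finset.mul_sum, ← Finset.mul_sum, hmass₁, hmass₂]
  rw [hLHS]
  by_cases hln : s.l ≤ n
  · -- A is comparable with both W and B
    rcases subset_or_disjoint hp (le_trans (Nat.sub_le _ _) hln) hW hA with hAW | hAW
    · rcases subset_or_disjoint hp hln hBl hA with hAB | hAB
      · -- A ⊆ B
        have h1 : A ∩ s.B = A := Set.inter_eq_self_of_subset_left hAB
        have h2 : (A ∩ s.W) \ s.B = ∅ := by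
          rw [Set.inter_eq_self_of_subset_left hAW, Set.diff_eq_empty.2 hAB]
        have h3 : spikeVal s n A = s.c := by
          rcases nonemp hp hA with ⟨w, hw⟩
          have hno : ¬ (s.l ≤ n ∧ A ⊆ s.W ∧ A ∩ s.B = ∅) := by
            rintro ⟨-, -, hc⟩
            exact absurd (Set.mem_inter hw (hAB hw)) (by simp [hc])
          simp only [spikeVal, if_neg hno, add_zero]
          simp [hln, hAB]
        rw [h1, h2, h3]; simp
      · -- A ⊆ W, A ∩ B = ∅
        have h1 : A ∩ s.B = ∅ := hAB
        have h2 : (A ∩ s.W) \ s.B = A := by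
          rw [Set.inter_eq_self_of_subset_left hAW]
          ext w
          constructor
          · exact fun hw => hw.1
          · intro hw
            exact ⟨hw, fun hwB => absurd (Set.mem_inter hw hwB) (by simp [h1])⟩
        have h3 : spikeVal s n A = s.e := by
          have hnab : ¬ (s.l ≤ n ∧ A ⊆ s.B) := by
            rintro ⟨-, hc⟩
            rcases nonemp hp hA with ⟨w, hw⟩
            exact absurd (Set.mem_inter hw (hc hw)) (by simp [h1])
          simp only [spikeVal, if_neg hnab, zero_add]
          simp [hln, hAW, h1]
        rw [h1, h2, h3]; simp
    · -- A ∩ W = ∅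
      have h1 : A ∩ s.B = ∅ := by
        apply Set.eq_empty_of_subset_empty
        intro w hw
        exact absurd (Set.mem_inter hw.1 (hBW hw.2)) (by simp [hAW])
      have h2 : (A ∩ s.W) \ s.B = ∅ := by
        rw [hAW]; simp
      have h3 : spikeVal s n A = 0 := by
        rcases nonemp hp hA with ⟨w, hw⟩
        have hna : ¬ (s.l ≤ n ∧ A ⊆ s.B) := fun hc =>
          absurd (Set.mem_inter hw (hc.2 hw)) (by simp [h1])
        have hnw : ¬ (s.l ≤ n ∧ A ⊆ s.W ∧ A ∩ s.B = ∅) := fun hc =>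
          absurd (Set.mem_inter hw (hc.2.1 hw)) (by simp [hAW])
        simp only [spikeVal, if_neg hna, if_neg hnw, add_zero]
      rw [h1, h2, h3]; simp
  · -- n < l : value 0, LHS cancels
    have h3 : spikeVal s n A = 0 := by simp [spikeVal, hln]
    rw [h3, zero_mul]
    rcases subset_or_disjoint hp (show n ≤ s.l - 1 by omega) hA hW with hWA | hWA
    · -- W ⊆ A
      have h1 : A ∩ s.B = s.B := Set.inter_eq_self_of_subset_right (hBW.trans hWA)
      have h2 : (A ∩ s.W) \ s.B = s.W \ s.B := by
        rw [Set.inter_eq_self_of_subset_right hWA]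
      rw [h1, h2]
      linarith [hrel]
    · -- W ∩ A = ∅
      have h1 : A ∩ s.B = ∅ := by
        apply Set.eq_empty_of_subset_empty
        intro w hw
        exact absurd (Set.mem_inter (hBW hw.2) hw.1) (by simp [hWA])
      have h2 : (A ∩ s.W) \ s.B = ∅ := by
        have : A ∩ s.W = ∅ := by rwa [Set.inter_comm] at hWA
        rw [this]; simp
      rw [h1, h2]; simp

lemma spike_lp_bound {s : SpikeData Ω} (hs : Placed P D s) (k : ℕ) :
    ∑ E ∈ D k, (‖spikeVal s k E‖₊ : ℝ≥0∞) * P E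
      ≤ ENNReal.ofReal (2 * (|s.c| * (P s.B).toReal)) := by
  classical
  rcases hs with htriv | ⟨hl1, hlt, hBt, hBl, hW, hBW, hpos, hrel⟩
  · simp [spikeVal_trivial htriv]
  have hstep : ∀ E ∈ D k, (‖spikeVal s k E‖₊ : ℝ≥0∞) * P E
      ≤ (if s.l ≤ k ∧ E ⊆ s.B then (‖s.c‖₊ : ℝ≥0∞) else 0) * P E
        + (if s.l ≤ k ∧ E ⊆ s.W ∧ E ∩ s.B = ∅ then (‖s.e‖₊ : ℝ≥0∞) else 0) * P E := by
    intro E hE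
    rw [← add_mul]
    apply mul_le_mul_left
    have hadd := nnnorm_add_le (if s.l ≤ k ∧ E ⊆ s.B then s.c else 0)
      (if s.l ≤ k ∧ E ⊆ s.W ∧ E ∩ s.B = ∅ then s.e else 0)
    calc (‖spikeVal s k E‖₊ : ℝ≥0∞)
        ≤ (‖(if s.l ≤ k ∧ E ⊆ s.B then s.c else 0)‖₊ : ℝ≥0∞)
            + (‖(if s.l ≤ k ∧ E ⊆ s.W ∧ E ∩ s.B = ∅ then s.e else 0)‖₊ : ℝ≥0∞) := by
          exact_mod_cast hadd
      _ ≤ _ := add_le_add (by split_ifs <;> simp) (by split_ifs <;> simp)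
  refine le_trans (Finset.sum_le_sum hstep) ?_
  rw [Finset.sum_add_distrib]
  have h₁ : ∑ E ∈ D k, (if s.l ≤ k ∧ E ⊆ s.B then (‖s.c‖₊ : ℝ≥0∞) else 0) * P E
      ≤ (‖s.c‖₊ : ℝ≥0∞) * P s.B := by
    have hco : ∀ E ∈ D k, (if s.l ≤ k ∧ E ⊆ s.B then (‖s.c‖₊ : ℝ≥0∞) else 0) * P E
        = if s.l ≤ k ∧ E ⊆ s.B then (‖s.c‖₊ : ℝ≥0∞) * P E else 0 := by
      intro E hE; split_ifs <;> simp
    rw [Finset.sum_congr rfl hco, ← Finset.sum_filter, ← Finset.mul_sum]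
    apply mul_le_mul_right
    rw [← measure_finset_sum (P := P) hp (Finset.filter_subset _ (D k))]
    apply measure_mono
    intro w hw
    simp only [Set.mem_iUnion] at hw
    rcases hw with ⟨E, hE, hwE⟩
    exact (Finset.mem_filter.1 hE).2.2 hwE
  have h₂ : ∑ E ∈ D k, (if s.l ≤ k ∧ E ⊆ s.W ∧ E ∩ s.B = ∅ then (‖s.e‖₊ : ℝ≥0∞) else 0) * P E
      ≤ (‖s.e‖₊ : ℝ≥0∞) * P (s.W \ s.B) := by
    have hco : ∀ E ∈ D k, (if s.l ≤ k ∧ E ⊆ s.W ∧ E ∩ s.B = ∅ then (‖s.e‖₊ : ℝ≥0∞) else 0) * P E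
        = if s.l ≤ k ∧ E ⊆ s.W ∧ E ∩ s.B = ∅ then (‖s.e‖₊ : ℝ≥0∞) * P E else 0 := by
      intro E hE; split_ifs <;> simp
    rw [Finset.sum_congr rfl hco, ← Finset.sum_filter, ← Finset.mul_sum]
    apply mul_le_mul_right
    rw [← measure_finset_sum (P := P) hp (Finset.filter_subset _ (D k))]
    apply measure_mono
    intro w hw
    simp only [Set.mem_iUnion] at hw
    rcases hw with ⟨E, hE, hwE⟩
    rcases (Finset.mem_filter.1 hE).2 with ⟨-, hEW, hEB⟩
    exact ⟨hEW hwE, fun hwB => absurd (Set.mem_inter hwE hwB) (by simp [hEB])⟩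
  have hcval : (‖s.c‖₊ : ℝ≥0∞) * P s.B = ENNReal.ofReal (|s.c| * (P s.B).toReal) := by
    rw [ENNReal.ofReal_mul (abs_nonneg _), ENNReal.ofReal_toReal (measure_ne_top P _)]
    congr 1
    rw [← enorm_eq_nnnorm, Real.enorm_eq_ofReal_abs]
  have heval : (‖s.e‖₊ : ℝ≥0∞) * P (s.W \ s.B) = ENNReal.ofReal (|s.c| * (P s.B).toReal) := by
    have hrel' : |s.e| * (P (s.W \ s.B)).toReal = |s.c| * (P s.B).toReal := by
      have h1 : |s.e * (P (s.W \ s.B)).toReal| = |s.c * (P s.B).toReal| := by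
        rw [hrel, abs_neg]
      rw [abs_mul, abs_mul, abs_of_nonneg ENNReal.toReal_nonneg,
        abs_of_nonneg ENNReal.toReal_nonneg] at h1
      exact h1
    rw [← hrel', ENNReal.ofReal_mul (abs_nonneg _),
      ENNReal.ofReal_toReal (measure_ne_top P _)]
    congr 1
    rw [← enorm_eq_nnnorm, Real.enorm_eq_ofReal_abs]
  calc _ ≤ (‖s.c‖₊ : ℝ≥0∞) * P s.B + (‖s.e‖₊ : ℝ≥0∞) * P (s.W \ s.B) := add_le_add h₁ h₂
    _ = ENNReal.ofReal (|s.c| * (P s.B).toReal) + ENNReal.ofReal (|s.c| * (P s.B).toReal) := by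
        rw [hcval, heval]
    _ = ENNReal.ofReal (2 * (|s.c| * (P s.B).toReal)) := by
        rw [← ENNReal.ofReal_add (mul_nonneg (abs_nonneg _) ENNReal.toReal_nonneg)
          (mul_nonneg (abs_nonneg _) ENNReal.toReal_nonneg), two_mul]

end PartC


------------------------------------------------------------------
-- Part D : EReal divergence characterisation, Kt topology, chains
------------------------------------------------------------------
section PartD

lemma ereal_exists_nat_gt (x : EReal) (hx : x ≠ ⊤) : ∃ n : ℕ, x < ((n : ℝ) : EReal) := by
  induction x using EReal.rec with
  | bot => exact ⟨0, EReal.bot_lt_coe _⟩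
  | coe r =>
    rcases exists_nat_gt r with ⟨n, hn⟩
    exact ⟨n, by exact_mod_cast hn⟩
  | top => exact absurd rfl hx

lemma ereal_exists_neg_nat_lt (x : EReal) (hx : x ≠ ⊥) : ∃ n : ℕ, ((-(n : ℝ) : ℝ) : EReal) < x := by
  induction x using EReal.rec with
  | bot => exact absurd rfl hx
  | coe r =>
    rcases exists_nat_gt (-r) with ⟨n, hn⟩
    exact ⟨n, by exact_mod_cast (by linarith : -(n:ℝ) < r)⟩
  | top => exact ⟨0, EReal.coe_lt_top _⟩

lemma limsup_top_iff (u : ℕ → ℝ) :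
    limsup (fun n => ((u n : ℝ) : EReal)) atTop = ⊤ ↔
      ∀ M : ℕ, ∃ m, M ≤ m ∧ (M : ℝ) < u m := by
  constructor
  · intro h M
    by_contra hc
    push_neg at hc
    have hev : ∀ᶠ n in atTop, ((u n : ℝ) : EReal) ≤ (((M : ℝ)) : EReal) := by
      filter_upwards [eventually_ge_atTop M] with m hm
      exact_mod_cast hc m hm
    have hle := Filter.limsup_le_of_le (u := fun n => ((u n : ℝ) : EReal))
      (f := atTop) (by isBoundedDefault) hev
    rw [h] at hle
    exact (EReal.coe_lt_top (M : ℝ)).not_ge hle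
  · intro h
    rw [eq_top_iff]
    by_contra hc
    have hne : limsup (fun n => ((u n : ℝ) : EReal)) atTop ≠ ⊤ := fun he => hc (le_of_eq he.symm)
    rcases ereal_exists_nat_gt _ hne with ⟨M, hM⟩
    have hub : (((M : ℝ)) : EReal) ≤ limsup (fun n => ((u n : ℝ) : EReal)) atTop := by
      apply Filter.le_limsup_of_frequently_le
      · rw [Filter.frequently_atTop]
        intro N
        rcases h (max M N) with ⟨m, hm1, hm2⟩
        refine ⟨m, le_trans (le_max_right _ _) hm1, ?_⟩
        have : (M : ℝ) ≤ u m := le_trans (by exact_mod_cast le_max_left M N) (le_of_lt hm2)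
        exact_mod_cast this
      · isBoundedDefault
    exact absurd hub (not_le_of_gt hM)

lemma liminf_bot_iff (u : ℕ → ℝ) :
    liminf (fun n => ((u n : ℝ) : EReal)) atTop = ⊥ ↔
      ∀ M : ℕ, ∃ m, M ≤ m ∧ u m < -(M : ℝ) := by
  constructor
  · intro h M
    by_contra hc
    push_neg at hc
    have hev : ∀ᶠ n in atTop, ((-(M : ℝ) : ℝ) : EReal) ≤ ((u n : ℝ) : EReal) := by
      filter_upwards [eventually_ge_atTop M] with m hm
      exact_mod_cast hc m hm
    have hle := Filter.le_liminf_of_le (u := fun n => ((u n : ℝ) : EReal))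
      (f := atTop) (by isBoundedDefault) hev
    rw [h] at hle
    exact (EReal.bot_lt_coe (-(M:ℝ))).not_ge hle
  · intro h
    rw [eq_bot_iff]
    by_contra hc
    have hne : liminf (fun n => ((u n : ℝ) : EReal)) atTop ≠ ⊥ := fun he => hc (le_of_eq he)
    rcases ereal_exists_neg_nat_lt _ hne with ⟨M, hM⟩
    have hub : liminf (fun n => ((u n : ℝ) : EReal)) atTop ≤ ((-(M : ℝ) : ℝ) : EReal) := by
      apply Filter.liminf_le_of_frequently_le
      · rw [Filter.frequently_atTop]
        intro N
        rcases h (max M N) with ⟨m, hm1, hm2⟩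
        refine ⟨m, le_trans (le_max_right _ _) hm1, ?_⟩
        have : u m ≤ -(M : ℝ) := by
          have h1 : (M : ℝ) ≤ (max M N : ℕ) := by exact_mod_cast le_max_left M N
          linarith
        exact_mod_cast this
      · isBoundedDefault
    exact absurd hub (not_le_of_gt hM)

lemma nat_rec_choice {α : Type} (init : α) (R : ℕ → α → α → Prop)
    (hstep : ∀ k a, ∃ b, R k a b) :
    ∃ g : ℕ → α, g 0 = init ∧ ∀ k, R k (g k) (g (k+1)) := by
  choose F hF using hstep
  exact ⟨fun k => Nat.rec init (fun k a => F k a) k, rfl, fun k => hF k _⟩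

end PartD

------------------------------------------------------------------
-- Part D2 : topology of Kt
------------------------------------------------------------------
section PartD2

instance : DiscreteTopology (Set Ω) := ⟨rfl⟩

variable {D : ℕ → Finset (Set Ω)}

lemma isOpen_cyl (D : ℕ → Finset (Set Ω)) (n : ℕ) (A : Set Ω) :
    IsOpen {x : Kt D | x.1 n = A} := by
  have : {x : Kt D | x.1 n = A} = (fun x : Kt D => x.1 n) ⁻¹' {A} := by
    ext x; simp
  rw [this]
  exact IsOpen.preimage ((continuous_apply n).comp continuous_subtype_val)
    (isOpen_discrete _)

variable [MeasurableSpace Ω]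

lemma cyl_basis (hp : IsPartitionSeq D) {U : Set (Kt D)} (hU : IsOpen U)
    {x : Kt D} (hx : x ∈ U) : ∃ n, {z : Kt D | z.1 n = x.1 n} ⊆ U := by
  rw [isOpen_induced_iff] at hU
  rcases hU with ⟨V, hV, rfl⟩
  rw [isOpen_pi_iff] at hV
  rcases hV x.1 hx with ⟨I, u, hIu, hsub⟩
  refine ⟨I.sup id, ?_⟩
  intro z hz
  apply hsub
  intro i hi
  have hin : i ≤ I.sup id := Finset.le_sup (f := id) hi
  have hzx : z.1 i = x.1 i := by
    apply ancestor_unique hp hin (z.2.1 i) (x.2.1 i) (nonemp hp (x.2.1 (I.sup id)))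
    · rw [← hz]; exact z.2.2 i _ hin
    · exact x.2.2 i _ hin
  rw [hzx]; exact (hIu i hi).2

/-- From a full supply of oscillation witnesses, build a diverging chain through a
given atom. -/
lemma exists_div_chain (hp : IsPartitionSeq D)
    (f : ℕ → Set Ω → ℝ)
    (hf : ∀ M n : ℕ, ∀ A ∈ D n,
      (∃ m B, n ≤ m ∧ M ≤ m ∧ B ∈ D m ∧ B ⊆ A ∧ (M:ℝ) < f m B) ∧
      (∃ m B, n ≤ m ∧ M ≤ m ∧ B ∈ D m ∧ B ⊆ A ∧ f m B < -(M:ℝ)))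
    {n₀ : ℕ} {A₀ : Set Ω} (hA₀ : A₀ ∈ D n₀) :
    ∃ y : Kt D, y.1 n₀ = A₀ ∧ DivergesAt D f y := by
  classical
  -- the recursive chain of atoms
  set R : ℕ → ℕ × Set Ω → ℕ × Set Ω → Prop := fun k p q =>
    q.2 ∈ D q.1 ∧ (p.2 ∈ D p.1 → (p.1 ≤ q.1 ∧ k + 1 ≤ q.1 ∧ q.2 ⊆ p.2 ∧
      (Even (k+1) → ((k+1 : ℕ) : ℝ) < f q.1 q.2) ∧
      (¬ Even (k+1) → f q.1 q.2 < -((k+1 : ℕ) : ℝ)))) with hR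
  have hstep : ∀ k p, ∃ q, R k p q := by
    intro k p
    by_cases hmem : p.2 ∈ D p.1
    · by_cases hk : Even (k+1)
      · rcases (hf (k+1) p.1 p.2 hmem).1 with ⟨m, B, h1, h2, h3, h4, h5⟩
        exact ⟨(m, B), h3, fun _ => ⟨h1, h2, h4, fun _ => h5, fun hc => absurd hk hc⟩⟩
      · rcases (hf (k+1) p.1 p.2 hmem).2 with ⟨m, B, h1, h2, h3, h4, h5⟩
        exact ⟨(m, B), h3, fun _ => ⟨h1, h2, h4, fun hc => absurd hc hk, fun _ => h5⟩⟩
    · exact ⟨(n₀, A₀), hA₀, fun hc => absurd hc hmem⟩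
  rcases nat_rec_choice (n₀, A₀) R hstep with ⟨g, hg0, hgs⟩
  -- basic invariants
  have hmem : ∀ k, (g k).2 ∈ D (g k).1 := by
    intro k
    induction k with
    | zero => rw [hg0]; exact hA₀
    | succ k ih => exact (hgs k).1
  have hprop : ∀ k, (g k).1 ≤ (g (k+1)).1 ∧ k + 1 ≤ (g (k+1)).1 ∧
      (g (k+1)).2 ⊆ (g k).2 ∧
      (Even (k+1) → ((k+1 : ℕ) : ℝ) < f (g (k+1)).1 (g (k+1)).2) ∧
      (¬ Even (k+1) → f (g (k+1)).1 (g (k+1)).2 < -((k+1 : ℕ) : ℝ)) :=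
    fun k => (hgs k).2 (hmem k)
  have htk : ∀ k, k ≤ (g k).1 := by
    intro k
    cases k with
    | zero => exact Nat.zero_le _
    | succ k => exact (hprop k).2.1
  have hnest : ∀ {j k : ℕ}, j ≤ k → (g k).2 ⊆ (g j).2 := by
    intro j k hjk
    induction k with
    | zero => rw [Nat.le_zero.1 hjk]
    | succ k ih =>
      rcases Nat.lt_or_ge j (k+1) with h | h
      · exact ((hprop k).2.2.1).trans (ih (Nat.lt_succ_iff.1 h))
      · rw [Nat.le_antisymm hjk h]
  -- the chain y
  have hanc : ∀ n : ℕ, ∃ A ∈ D n, (g n).2 ⊆ A := fun n =>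
    exists_ancestor hp (htk n) (hmem n)
  set y : ℕ → Set Ω := fun n => Classical.choose (hanc n) with hy
  have hyspec : ∀ n, y n ∈ D n ∧ (g n).2 ⊆ y n := by
    intro n
    rcases Classical.choose_spec (hanc n) with ⟨h1, h2⟩
    exact ⟨h1, h2⟩
  have hychain : ∀ n m : ℕ, n ≤ m → y m ⊆ y n := by
    intro n m hnm
    rcases exists_ancestor hp hnm (hyspec m).1 with ⟨A', hA', hsubA'⟩
    have h1 : (g m).2 ⊆ A' := le_trans (hyspec m).2 hsubA'
    have h2 : (g m).2 ⊆ y n := le_trans (hnest hnm) (hyspec n).2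
    have : A' = y n := ancestor_unique hp hnm hA' (hyspec n).1 (nonemp hp (hmem m)) h1 h2
    rw [← this]; exact hsubA'
  have hyatom : ∀ k, y ((g k).1) = (g k).2 := fun k =>
    ancestor_unique hp (le_refl ((g k).1)) (hyspec ((g k).1)).1 (hmem k)
      (nonemp hp (hmem ((g k).1))) (hyspec ((g k).1)).2 (hnest (htk k))
  have hsub0 : (g n₀).2 ⊆ A₀ := by
    have h0 := hnest (Nat.zero_le n₀)
    rwa [hg0] at h0
  refine ⟨⟨y, fun n => (hyspec n).1, hychain⟩, ?_, ?_, ?_⟩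
  · exact ancestor_unique hp (le_refl n₀) (hyspec n₀).1 hA₀ (nonemp hp (hmem n₀))
      (hyspec n₀).2 hsub0
  · rw [limsup_top_iff]
    intro M
    have hek : Even (2*M+1+1) := ⟨M+1, by ring⟩
    have hval := (hprop (2*M+1)).2.2.2.1 hek
    refine ⟨(g (2*M+2)).1, ?_, ?_⟩
    · calc M ≤ 2*M+2 := by omega
        _ ≤ (g (2*M+2)).1 := htk _
    · have hy2 : y ((g (2*M+2)).1) = (g (2*M+2)).2 := hyatom (2*M+2)
      show (M : ℝ) < f (g (2*M+2)).1 (y ((g (2*M+2)).1))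
      rw [hy2]
      refine lt_of_le_of_lt ?_ hval
      exact_mod_cast (by omega : M ≤ 2*M+1+1)
  · rw [liminf_bot_iff]
    intro M
    have hok : ¬ Even (2*M+0+1) := by
      rintro ⟨r, hr⟩; omega
    have hval := (hprop (2*M+0)).2.2.2.2 hok
    refine ⟨(g (2*M+1)).1, ?_, ?_⟩
    · calc M ≤ 2*M+1 := by omega
        _ ≤ (g (2*M+1)).1 := htk _
    · have hy2 : y ((g (2*M+1)).1) = (g (2*M+1)).2 := hyatom (2*M+1)
      show f (g (2*M+1)).1 (y ((g (2*M+1)).1)) < -(M : ℝ)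
      rw [hy2]
      refine lt_of_lt_of_le hval ?_
      have : (M:ℝ) ≤ ((2*M+0+1 : ℕ) : ℝ) := by exact_mod_cast (by omega : M ≤ 2*M+0+1)
      linarith

end PartD2


------------------------------------------------------------------
-- Part E : the main perturbation construction
------------------------------------------------------------------
section PartE
variable {P : Measure Ω} [IsProbabilityMeasure P] {D : ℕ → Finset (Set Ω)}

/-- the value we aim for at the spike of stage `M`. -/
def targetVal (M : ℕ) : ℝ := if Even M then (M : ℝ) + 1 else -((M : ℝ) + 1)

lemma abs_targetVal (M : ℕ) : |targetVal M| = (M : ℝ) + 1 := by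
  unfold targetVal
  split_ifs <;> [skip; rw [abs_neg]] <;> exact abs_of_nonneg (by positivity)

def histVal (L : List (SpikeData Ω)) (n : ℕ) (E : Set Ω) : ℝ :=
  (L.map (fun s => spikeVal s n E)).sum

lemma spikeVal_abs_le (s : SpikeData Ω) (n : ℕ) (E : Set Ω) :
    |spikeVal s n E| ≤ |s.c| + |s.e| := by
  unfold spikeVal
  refine le_trans (abs_add_le _ _) (add_le_add ?_ ?_) <;> (split_ifs <;> simp)

lemma histVal_abs_le (L : List (SpikeData Ω)) (n : ℕ) (E : Set Ω) :
    |histVal L n E| ≤ (L.map (fun s => |s.c| + |s.e|)).sum := by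
  induction L with
  | nil => simp [histVal]
  | cons s L ih =>
    simp only [histVal, List.map_cons, List.sum_cons] at *
    calc |spikeVal s n E + (L.map (fun s => spikeVal s n E)).sum|
        ≤ |spikeVal s n E| + |(L.map (fun s => spikeVal s n E)).sum| := abs_add_le _ _
      _ ≤ (|s.c| + |s.e|) + (L.map (fun s => |s.c| + |s.e|)).sum :=
          add_le_add (spikeVal_abs_le s n E) ih

lemma histVal_eq (stg : ℕ → SpikeData Ω) (k n : ℕ) (E : Set Ω) :
    histVal ((List.range k).map stg) n E = ∑ j ∈ Finset.range k, spikeVal (stg j) n E := by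
  induction k with
  | zero => simp [histVal]
  | succ k ih =>
    simp only [List.range_succ, List.map_append, histVal, List.sum_append,
      List.map_cons, List.map_nil, List.sum_cons, List.sum_nil, add_zero,
      Finset.sum_range_succ]
    rw [← ih]; rfl

variable (hp : IsPartitionSeq D)
include hp

lemma chil_self {n : ℕ} {A : Set Ω} (hA : A ∈ D n) : Chil D n A = {A} := by
  ext E
  rw [mem_chil, Finset.mem_singleton]
  constructor
  · rintro ⟨hE, hsub⟩
    rcases nonemp hp hE with ⟨w, hw⟩
    exact atom_eq hp hE hA ⟨w, hw, hsub hw⟩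
  · rintro rfl
    exact ⟨hA, subset_rfl⟩

lemma setIntegral_mval_self {n : ℕ} {A : Set Ω} (hA : A ∈ D n) (φ : ℕ → Set Ω → ℝ) :
    ∫ w in A, mval D φ n w ∂P = φ n A * (P A).toReal := by
  rw [setIntegral_mval hp (le_refl n) hA, chil_self hp hA, Finset.sum_singleton]

/-- The main construction: a small martingale perturbation `h` of `f` realizing, for every
`(M, n, A)`, an oscillation witness inside `A`. -/
lemma main_construction (hA' : AssumptionA P D) (f : ℕ → Set Ω → ℝ)
    (hf : IsMart P D f) (hfin : martNorm P D 1 f ≠ ∞) {ε' : ℝ} (hε' : 0 < ε') :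
    ∃ h : ℕ → Set Ω → ℝ,
      IsMart P D (fun k E => f k E + h k E) ∧
      martNorm P D 1 h ≤ ENNReal.ofReal (4 * ε') ∧
      (∀ M n : ℕ, ∀ A ∈ D n,
        (∃ m B, n ≤ m ∧ M ≤ m ∧ B ∈ D m ∧ B ⊆ A ∧ (M:ℝ) < f m B + h m B) ∧
        (∃ m B, n ≤ m ∧ M ≤ m ∧ B ∈ D m ∧ B ⊆ A ∧ f m B + h m B < -(M:ℝ))) := by
  classical
  set R : ℝ := (martNorm P D 1 f).toReal with hRdef
  have hR : ∀ m, ∑ B ∈ D m, |f m B| * (P B).toReal ≤ R := sum_abs_le hp f hfin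
  set dec : ℕ → ℕ × ℕ × ℕ := fun i => (Denumerable.eqv (ℕ × ℕ × ℕ)).symm i with hdec
  have habs_sub : ∀ x y : ℝ, |x - y| ≤ |x| + |y| := by
    intro x y
    rw [sub_eq_add_neg]
    exact (abs_add_le _ _).trans (by rw [abs_neg])
  have hstep : ∀ k (p : List (SpikeData Ω) × ℕ),
      ∃ q : List (SpikeData Ω) × ℕ, ∃ s : SpikeData Ω,
      q.1 = p.1 ++ [s] ∧ q.2 = s.t ∧ p.2 < s.l ∧ s.l ≤ s.t ∧ Placed P D s ∧
      |s.c| * (P s.B).toReal ≤ ε' * (1/2)^k ∧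
      (∀ M n j (_ : dec k = (M, n, j)) (hj : j < (D n).toList.length),
        n ≤ s.t ∧ M ≤ s.t ∧ s.B ∈ D s.t ∧ s.B ⊆ (D n).toList.get ⟨j, hj⟩ ∧
        f s.t s.B + histVal p.1 s.t s.B + s.c = targetVal M) := by
    intro k p
    rcases hdk : dec k with ⟨M, n, j⟩
    by_cases hj : j < (D n).toList.length
    case neg =>
      refine ⟨(p.1 ++ [⟨p.2 + 1, p.2 + 1, 0, 0, ∅, ∅⟩], p.2 + 1),
        ⟨p.2 + 1, p.2 + 1, 0, 0, ∅, ∅⟩, rfl, rfl, Nat.lt_succ_self _, le_refl _,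
        Or.inl ⟨rfl, rfl⟩, by simpa using by positivity, ?_⟩
      intro M' n' j' hd hj'
      obtain ⟨rfl, rfl, rfl⟩ : M = M' ∧ n = n' ∧ j = j' := by
        simpa [Prod.ext_iff] using hd
      exact absurd hj' hj
    case pos =>
      have hAn : (D n).toList.get ⟨j, hj⟩ ∈ D n :=
        Finset.mem_toList.1 (List.get_mem _ ⟨j, hj⟩)
      set A : Set Ω := (D n).toList.get ⟨j, hj⟩ with hAdef
      set Kb : ℝ := (p.1.map (fun s => |s.c| + |s.e|)).sum with hKb
      have hKb0 : 0 ≤ Kb := List.sum_nonneg (by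
        intro x hx
        rcases List.mem_map.1 hx with ⟨s, -, rfl⟩
        positivity)
      set t₀ : ℕ := max n (max M p.2) with ht₀
      obtain ⟨C, hC⟩ := chil_nonempty hp (show n ≤ t₀ + 1 by omega) hAn
      rcases mem_chil.1 hC with ⟨hCmem, hCA⟩
      have hPC : 0 < (P C).toReal :=
        ENNReal.toReal_pos (ne_of_gt (hA'.1 _ C hCmem)) (measure_ne_top P C)
      set δ : ℝ := min ((P C).toReal / 2) (ε' * (1/2)^k / ((M : ℝ) + 2 + Kb)) with hδdef
      have hδ : 0 < δ := lt_min (by positivity) (by positivity)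
      obtain ⟨m, -, hm2, B, hBm, hBC, hPB, hfB⟩ :=
        good_child hp hA' f R hR hCmem hδ (t₀ + 1)
      have hBC_ne : B ≠ C := by
        intro he
        rw [he] at hPB
        have hhalf := le_trans hPB (min_le_left _ _)
        linarith
      have hBnot : ∀ i, i ≤ t₀ + 1 → B ∉ D i := by
        intro i hi hBi
        rcases subset_or_disjoint hp hi hBi hCmem with hs | hs
        · exact hBC_ne (Set.Subset.antisymm hBC hs)
        · rcases nonemp hp hBm with ⟨w, hw⟩
          exact absurd (Set.mem_inter (hBC hw) hw) (by simp [hs])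
      have hex : ∃ i, B ∈ D i := ⟨m, hBm⟩
      set l : ℕ := Nat.find hex with hldef
      have hBl : B ∈ D l := Nat.find_spec hex
      have hlm : l ≤ m := Nat.find_min' hex hBm
      have hlgt : t₀ + 1 < l := by
        by_contra hc
        push_neg at hc
        exact hBnot l hc hBl
      have hl1 : 1 ≤ l := by omega
      obtain ⟨W, hW, hBW⟩ := exists_ancestor hp (Nat.sub_le l 1) hBl
      have hBW_ne : B ≠ W := by
        intro he
        exact Nat.find_min hex (show l - 1 < l by omega) (he ▸ hW)
      have hsib : ∃ B'' ∈ Chil D l W, B'' ≠ B := by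
        by_contra hc
        push_neg at hc
        have hWB : W ⊆ B := by
          intro w hw
          rcases chil_cover hp (show l - 1 ≤ l by omega) hW hw with ⟨B'', hB'', hwB''⟩
          rw [hc B'' hB''] at hwB''
          exact hwB''
        exact hBW_ne (Set.Subset.antisymm hBW hWB)
      obtain ⟨B'', hB''mem, hB''ne⟩ := hsib
      have hWBpos : 0 < P (W \ B) := by
        have hsubdiff : B'' ⊆ W \ B := by
          intro w hw
          refine ⟨(mem_chil.1 hB''mem).2 hw, fun hwB => ?_⟩
          have hd : Disjoint B'' B := hp.2.2.1 l (mem_chil.1 hB''mem).1 hBl hB''ne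
          exact Set.disjoint_iff.1 hd ⟨hw, hwB⟩
        exact lt_of_lt_of_le (hA'.1 l B'' (mem_chil.1 hB''mem).1) (measure_mono hsubdiff)
      have hWBpos' : 0 < (P (W \ B)).toReal :=
        ENNReal.toReal_pos (ne_of_gt hWBpos) (measure_ne_top P _)
      set c : ℝ := targetVal M - f m B - histVal p.1 m B with hcdef
      set e : ℝ := -(c * (P B).toReal) / (P (W \ B)).toReal with hedef
      have hn_le : n ≤ t₀ := le_max_left _ _
      have hM_le : M ≤ t₀ := le_trans (le_max_left _ _) (le_max_right _ _)
      have hp2_le : p.2 ≤ t₀ := le_trans (le_max_right _ _) (le_max_right _ _)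
      have hH : |histVal p.1 m B| ≤ Kb := histVal_abs_le p.1 m B
      have habs : |c| ≤ ((M:ℝ) + 1 + Kb) + |f m B| := by
        rw [hcdef]
        calc |targetVal M - f m B - histVal p.1 m B|
            ≤ |targetVal M - f m B| + |histVal p.1 m B| := habs_sub _ _
          _ ≤ (|targetVal M| + |f m B|) + Kb := add_le_add (habs_sub _ _) hH
          _ = ((M:ℝ) + 1 + Kb) + |f m B| := by rw [abs_targetVal]; ring
      have habs' : |c| * (P B).toReal ≤ ε' * (1/2)^k := by
        have hPBnn : 0 ≤ (P B).toReal := ENNReal.toReal_nonneg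
        have hstep1 : |c| * (P B).toReal
            ≤ ((M:ℝ) + 1 + Kb) * (P B).toReal + |f m B| * (P B).toReal := by
          rw [← add_mul]
          exact mul_le_mul_of_nonneg_right habs hPBnn
        have hstep2 : ((M:ℝ) + 1 + Kb) * (P B).toReal ≤ ((M:ℝ) + 1 + Kb) * δ :=
          mul_le_mul_of_nonneg_left hPB (by positivity)
        have hδle : δ ≤ ε' * (1/2)^k / ((M : ℝ) + 2 + Kb) := min_le_right _ _
        have hdenom : 0 < (M:ℝ) + 2 + Kb := by positivity
        have hfinal : ((M:ℝ) + 1 + Kb) * δ + δ ≤ ε' * (1/2)^k := by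
          have hmul : ((M:ℝ) + 2 + Kb) * δ
              ≤ ((M:ℝ) + 2 + Kb) * (ε' * (1/2)^k / ((M : ℝ) + 2 + Kb)) :=
            mul_le_mul_of_nonneg_left hδle (le_of_lt hdenom)
          rw [mul_comm ((M:ℝ) + 2 + Kb) (ε' * (1/2)^k / ((M : ℝ) + 2 + Kb)),
            div_mul_cancel₀ _ (ne_of_gt hdenom)] at hmul
          linarith
        linarith [hfB]
      refine ⟨(p.1 ++ [⟨m, l, c, e, B, W⟩], m), ⟨m, l, c, e, B, W⟩, rfl, rfl,
        by simp only []; omega, by simp only []; exact hlm,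
        Or.inr ⟨hl1, hlm, hBm, hBl, hW, hBW, hWBpos, by
          simp only []
          rw [hedef]
          exact div_mul_cancel₀ _ (ne_of_gt hWBpos')⟩,
        by simp only []; exact habs', ?_⟩
      intro M' n' j' hd hj'
      obtain ⟨rfl, rfl, rfl⟩ : M = M' ∧ n = n' ∧ j = j' := by
        simpa [Prod.ext_iff] using hd
      refine ⟨by simp only []; omega, by simp only []; omega, hBm, hBC.trans hCA,
        by simp only []; rw [hcdef]; ring⟩
  -- run the recursion
  rcases nat_rec_choice (([], 0) : List (SpikeData Ω) × ℕ)
    (fun k p q => ∃ s : SpikeData Ω,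
      q.1 = p.1 ++ [s] ∧ q.2 = s.t ∧ p.2 < s.l ∧ s.l ≤ s.t ∧ Placed P D s ∧
      |s.c| * (P s.B).toReal ≤ ε' * (1/2)^k ∧
      (∀ M n j (_ : dec k = (M, n, j)) (hj : j < (D n).toList.length),
        n ≤ s.t ∧ M ≤ s.t ∧ s.B ∈ D s.t ∧ s.B ⊆ (D n).toList.get ⟨j, hj⟩ ∧
        f s.t s.B + histVal p.1 s.t s.B + s.c = targetVal M)) hstep with ⟨g, hg0, hgs⟩
  set stg : ℕ → SpikeData Ω := fun k => Classical.choose (hgs k) with hstgdef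
  have hsp : ∀ k, (g (k+1)).1 = (g k).1 ++ [stg k] ∧ (g (k+1)).2 = (stg k).t ∧
      (g k).2 < (stg k).l ∧ (stg k).l ≤ (stg k).t ∧ Placed P D (stg k) ∧
      |(stg k).c| * (P (stg k).B).toReal ≤ ε' * (1/2)^k ∧
      (∀ M n j (_ : dec k = (M, n, j)) (hj : j < (D n).toList.length),
        n ≤ (stg k).t ∧ M ≤ (stg k).t ∧ (stg k).B ∈ D (stg k).t ∧
        (stg k).B ⊆ (D n).toList.get ⟨j, hj⟩ ∧
        f (stg k).t (stg k).B + histVal (g k).1 (stg k).t (stg k).B + (stg k).c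
          = targetVal M) :=
    fun k => Classical.choose_spec (hgs k)
  have hlist : ∀ k, (g k).1 = (List.range k).map stg := by
    intro k
    induction k with
    | zero => rw [hg0]; simp
    | succ k ih =>
      rw [(hsp k).1, ih, List.range_succ, List.map_append]
      rfl
  have hτmono : ∀ k, (g k).2 < (g (k+1)).2 := by
    intro k
    rw [(hsp k).2.1]
    exact lt_of_lt_of_le (hsp k).2.2.1 (hsp k).2.2.2.1
  have hτk : ∀ k, k ≤ (g k).2 := by
    intro k
    induction k with
    | zero => exact Nat.zero_le _
    | succ k ih => exact Nat.succ_le_of_lt (lt_of_le_of_lt ih (hτmono k))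
  have hτle : ∀ {a b : ℕ}, a ≤ b → (g a).2 ≤ (g b).2 := by
    intro a b hab
    induction b with
    | zero => rw [Nat.le_zero.1 hab]
    | succ b ih =>
      rcases Nat.lt_or_ge a (b+1) with hc | hc
      · exact le_trans (ih (Nat.lt_succ_iff.1 hc)) (le_of_lt (hτmono b))
      · rw [Nat.le_antisymm hab hc]
  -- the perturbation martingale
  set hval : ℕ → Set Ω → ℝ := fun nn E =>
    if E ∈ D nn then ∑ j ∈ Finset.range (nn+1), spikeVal (stg j) nn E else 0 with hhval
  have hval_eq : ∀ {nn : ℕ} {E : Set Ω} (N : ℕ), E ∈ D nn → nn + 1 ≤ N →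
      hval nn E = ∑ j ∈ Finset.range N, spikeVal (stg j) nn E := by
    intro nn E N hE hN
    rw [hhval]
    simp only [if_pos hE]
    apply Finset.sum_subset (Finset.range_subset_range.2 hN)
    intro j hjN hjn
    rw [Finset.mem_range] at hjn
    apply spikeVal_inactive
    have h1 : j ≤ (g j).2 := hτk j
    have h2 := (hsp j).2.2.1
    omega
  have hval_sum : ∀ {n m : ℕ}, n ≤ m → ∀ {A : Set Ω}, A ∈ D n →
      ∑ E ∈ Chil D m A, hval m E * (P E).toReal = hval n A * (P A).toReal := by
    intro n m hnm A hA
    have hterm : ∀ E ∈ Chil D m A, hval m E * (P E).toReal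
        = ∑ j ∈ Finset.range (m+1), spikeVal (stg j) m E * (P E).toReal := by
      intro E hE
      rw [hhval]
      simp only [if_pos (mem_chil.1 hE).1]
      rw [Finset.sum_mul]
    rw [Finset.sum_congr rfl hterm, Finset.sum_comm]
    have hspike : ∀ j ∈ Finset.range (m+1),
        ∑ E ∈ Chil D m A, spikeVal (stg j) m E * (P E).toReal
          = spikeVal (stg j) n A * (P A).toReal := by
      intro j _
      exact spike_sum hp (hsp j).2.2.2.2.1 hnm hA
    rw [Finset.sum_congr rfl hspike, ← Finset.sum_mul,
      ← hval_eq (m+1) hA (by omega)]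
  have hmart : IsMart P D (fun k E => f k E + hval k E) := by
    constructor
    · intro nn A hA
      show f nn A + hval nn A = 0
      rw [hf.1 nn A hA, hhval]
      simp [hA]
    · intro n m hnm A hA
      have h1 : ∫ w in A, mval D (fun k E => f k E + hval k E) n w ∂P
          = (∫ w in A, mval D f n w ∂P) + ∫ w in A, mval D hval n w ∂P := by
        rw [mval_addf]
        exact integral_add ((mval_integrable hp f n).integrableOn)
          ((mval_integrable hp hval n).integrableOn)
      have h2 : ∫ w in A, mval D (fun k E => f k E + hval k E) m w ∂P
          = (∫ w in A, mval D f m w ∂P) + ∫ w in A, mval D hval m w ∂P := by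
        rw [mval_addf]
        exact integral_add ((mval_integrable hp f m).integrableOn)
          ((mval_integrable hp hval m).integrableOn)
      rw [h1, h2, hf.2 n m hnm A hA]
      congr 1
      rw [setIntegral_mval_self hp hA hval, setIntegral_mval hp hnm hA hval,
        hval_sum hnm hA]
  have hnorm : martNorm P D 1 hval ≤ ENNReal.ofReal (4 * ε') := by
    apply iSup_le
    intro nn
    rw [lpNorm_one hp]
    have hterm : ∀ E ∈ D nn, (‖hval nn E‖₊ : ℝ≥0∞) * P E
        ≤ ∑ j ∈ Finset.range (nn+1), (‖spikeVal (stg j) nn E‖₊ : ℝ≥0∞) * P E := by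
      intro E hE
      rw [← Finset.sum_mul]
      apply mul_le_mul_left
      rw [hhval]
      simp only [if_pos hE]
      calc (‖∑ j ∈ Finset.range (nn+1), spikeVal (stg j) nn E‖₊ : ℝ≥0∞)
          ≤ ((∑ j ∈ Finset.range (nn+1), ‖spikeVal (stg j) nn E‖₊ : ℝ≥0) : ℝ≥0∞) :=
            ENNReal.coe_le_coe.2 (nnnorm_sum_le _ _)
        _ = ∑ j ∈ Finset.range (nn+1), (‖spikeVal (stg j) nn E‖₊ : ℝ≥0∞) :=
            ENNReal.coe_finset_sum _ _
    calc ∑ E ∈ D nn, (‖hval nn E‖₊ : ℝ≥0∞) * P E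
        ≤ ∑ E ∈ D nn, ∑ j ∈ Finset.range (nn+1),
            (‖spikeVal (stg j) nn E‖₊ : ℝ≥0∞) * P E := Finset.sum_le_sum hterm
      _ = ∑ j ∈ Finset.range (nn+1), ∑ E ∈ D nn,
            (‖spikeVal (stg j) nn E‖₊ : ℝ≥0∞) * P E := Finset.sum_comm
      _ ≤ ∑ j ∈ Finset.range (nn+1),
            ENNReal.ofReal (2 * (|(stg j).c| * (P (stg j).B).toReal)) :=
          Finset.sum_le_sum (fun j _ => spike_lp_bound hp (hsp j).2.2.2.2.1 nn)
      _ ≤ ∑ j ∈ Finset.range (nn+1), ENNReal.ofReal (2 * (ε' * (1/2)^j)) :=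
          Finset.sum_le_sum (fun j _ => ENNReal.ofReal_le_ofReal (by
            have hb := (hsp j).2.2.2.2.2.1
            linarith))
      _ = ENNReal.ofReal (∑ j ∈ Finset.range (nn+1), 2 * (ε' * (1/2)^j)) := by
          rw [ENNReal.ofReal_sum_of_nonneg]
          intro j _
          positivity
      _ ≤ ENNReal.ofReal (4 * ε') := by
          apply ENNReal.ofReal_le_ofReal
          have hgeo := sum_geometric_two_le (nn+1)
          have hre : ∑ j ∈ Finset.range (nn+1), 2 * (ε' * (1/2)^j)
              = (2 * ε') * ∑ j ∈ Finset.range (nn+1), (1/2 : ℝ)^j := by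
            rw [Finset.mul_sum]
            apply Finset.sum_congr rfl
            intro j _
            ring
          rw [hre]
          calc (2 * ε') * ∑ j ∈ Finset.range (nn+1), (1/2 : ℝ)^j
              ≤ (2 * ε') * 2 := mul_le_mul_of_nonneg_left hgeo (by positivity)
            _ = 4 * ε' := by ring
  -- value identity at the designated stages
  have hkt : ∀ k, k < (stg k).t + 1 := by
    intro k
    have h1 := hτk k
    have h2 := (hsp k).2.2.1
    have h3 := (hsp k).2.2.2.1
    omega
  have hvalue : ∀ k, (stg k).B ∈ D (stg k).t →
      hval (stg k).t (stg k).B = histVal (g k).1 (stg k).t (stg k).B + (stg k).c := by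
    intro k hB
    rw [hval_eq ((stg k).t + 1) hB (le_refl _)]
    have htrunc : ∑ j ∈ Finset.range ((stg k).t + 1), spikeVal (stg j) (stg k).t (stg k).B
        = ∑ j ∈ Finset.range (k+1), spikeVal (stg j) (stg k).t (stg k).B := by
      symm
      apply Finset.sum_subset (Finset.range_subset_range.2 (hkt k))
      intro jj hj1 hj2
      rw [Finset.mem_range] at hj2
      apply spikeVal_inactive
      have h1 : (g (k+1)).2 ≤ (g jj).2 := hτle (by omega)
      have h2 := (hsp jj).2.2.1
      have h3 := (hsp k).2.1
      omega
    rw [htrunc, Finset.sum_range_succ]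
    congr 1
    · rw [hlist k, histVal_eq]
    · unfold spikeVal
      rcases nonemp hp hB with ⟨w, hw⟩
      rw [if_pos ⟨(hsp k).2.2.2.1, subset_rfl⟩, if_neg, add_zero]
      rintro ⟨-, -, hcon⟩
      exact absurd (Set.mem_inter hw hw) (by simp [hcon])
  refine ⟨hval, hmart, hnorm, ?_⟩
  intro M n A hAn
  obtain ⟨j, hj, hjA⟩ := List.mem_iff_getElem.1 (Finset.mem_toList.2 hAn)
  constructor
  · set k := (Denumerable.eqv (ℕ × ℕ × ℕ)) (2*M, n, j) with hk
    have hdk : dec k = (2*M, n, j) := by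
      rw [hdec]
      simp only [hk]
      exact Equiv.symm_apply_apply _ _
    obtain ⟨hn1, hM1, hB1, hsub1, hval1⟩ := (hsp k).2.2.2.2.2.2 (2*M) n j hdk hj
    refine ⟨(stg k).t, (stg k).B, hn1, by omega, hB1, ?_, ?_⟩
    · rw [← hjA]
      exact hsub1
    · have hvv : f (stg k).t (stg k).B + hval (stg k).t (stg k).B = targetVal (2*M) := by
        rw [hvalue k hB1]
        linarith [hval1]
      rw [hvv]
      unfold targetVal
      rw [if_pos ⟨M, by ring⟩]
      push_cast
      linarith
  · set k := (Denumerable.eqv (ℕ × ℕ × ℕ)) (2*M+1, n, j) with hk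
    have hdk : dec k = (2*M+1, n, j) := by
      rw [hdec]
      simp only [hk]
      exact Equiv.symm_apply_apply _ _
    obtain ⟨hn1, hM1, hB1, hsub1, hval1⟩ := (hsp k).2.2.2.2.2.2 (2*M+1) n j hdk hj
    refine ⟨(stg k).t, (stg k).B, hn1, by omega, hB1, ?_, ?_⟩
    · rw [← hjA]
      exact hsub1
    · have hvv : f (stg k).t (stg k).B + hval (stg k).t (stg k).B = targetVal (2*M+1) := by
        rw [hvalue k hB1]
        linarith [hval1]
      rw [hvv]
      unfold targetVal
      rw [if_neg (by rintro ⟨r, hr⟩; omega)]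
      push_cast
      linarith

end PartE


------------------------------------------------------------------
-- Part F : topology of Mart, the set T, and assembly
------------------------------------------------------------------
section PartF
variable {P : Measure Ω} [IsProbabilityMeasure P] {D : ℕ → Finset (Set Ω)}

/-- ball of the martingale norm -/
def ball (P : Measure Ω) [IsProbabilityMeasure P] (D : ℕ → Finset (Set Ω))
    (f : Mart P D 1) (ε : ℝ≥0∞) : Set (Mart P D 1) :=
  {g : Mart P D 1 | martNorm P D 1 (fun k A => g.1 k A - f.1 k A) < ε}

lemma isOpen_ball (f : Mart P D 1) {ε : ℝ≥0∞} (hε : 0 < ε) : IsOpen (ball P D f ε) :=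
  TopologicalSpace.isOpen_generateFrom_of_mem ⟨f, ε, hε, rfl⟩

lemma martNorm_self_zero (a : ℕ → Set Ω → ℝ) :
    martNorm P D 1 (fun k A => a k A - a k A) = 0 := by
  have h0 : (fun k A => a k A - a k A) = fun _ _ => (0:ℝ) := by
    funext k A
    ring
  rw [h0]
  have : ∀ n, lpNorm P D 1 (fun _ _ => (0:ℝ)) n = 0 := by
    intro n
    unfold lpNorm
    have : mval D (fun _ _ => (0:ℝ)) n = fun _ => 0 := by
      funext w
      simp [mval]
    rw [this]
    exact eLpNorm_zero
  unfold martNorm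
  simp [this]

lemma mem_ball_self (f : Mart P D 1) {ε : ℝ≥0∞} (hε : 0 < ε) : f ∈ ball P D f ε := by
  show martNorm P D 1 (fun k A => f.1 k A - f.1 k A) < ε
  rw [martNorm_self_zero]
  exact hε

variable (hp : IsPartitionSeq D)
include hp

lemma martNorm_sub_triangle (a b c : ℕ → Set Ω → ℝ) :
    martNorm P D 1 (fun k A => a k A - c k A)
      ≤ martNorm P D 1 (fun k A => a k A - b k A)
        + martNorm P D 1 (fun k A => b k A - c k A) := by
  have h0 : (fun k A => a k A - c k A)
      = fun k A => (a k A - b k A) + (b k A - c k A) := by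
    funext k A
    ring
  rw [h0]
  exact martNorm_add_le hp _ _

lemma exists_ball_subset {U : Set (Mart P D 1)} (hU : IsOpen U) :
    ∀ f ∈ U, ∃ ε, 0 < ε ∧ ball P D f ε ⊆ U := by
  have hU' : TopologicalSpace.GenerateOpen
      {s | ∃ (f : Mart P D 1) (ε : ℝ≥0∞), 0 < ε ∧
        s = {g : Mart P D 1 | martNorm P D 1 (fun k A => g.1 k A - f.1 k A) < ε}} U := hU
  clear hU
  induction hU' with
  | basic s hs =>
    rcases hs with ⟨f₀, ε₀, hε₀, rfl⟩
    intro f hf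
    have hd : martNorm P D 1 (fun k A => f.1 k A - f₀.1 k A) < ε₀ := hf
    by_cases htop : ε₀ = ⊤
    · refine ⟨1, zero_lt_one, ?_⟩
      intro g hg
      show martNorm P D 1 (fun k A => g.1 k A - f₀.1 k A) < ε₀
      rw [htop] at hd ⊢
      apply lt_of_le_of_lt (martNorm_sub_triangle hp g.1 f.1 f₀.1)
      have hg' : martNorm P D 1 (fun k A => g.1 k A - f.1 k A) < 1 := hg
      exact ENNReal.add_lt_top.2 ⟨lt_of_lt_of_le hg' le_top, hd⟩
    · have hdt : martNorm P D 1 (fun k A => f.1 k A - f₀.1 k A) ≠ ⊤ :=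
        ne_top_of_lt hd
      refine ⟨ε₀ - martNorm P D 1 (fun k A => f.1 k A - f₀.1 k A), tsub_pos_of_lt hd, ?_⟩
      intro g hg
      show martNorm P D 1 (fun k A => g.1 k A - f₀.1 k A) < ε₀
      apply lt_of_le_of_lt (martNorm_sub_triangle hp g.1 f.1 f₀.1)
      calc martNorm P D 1 (fun k A => g.1 k A - f.1 k A)
            + martNorm P D 1 (fun k A => f.1 k A - f₀.1 k A)
          < (ε₀ - martNorm P D 1 (fun k A => f.1 k A - f₀.1 k A))
            + martNorm P D 1 (fun k A => f.1 k A - f₀.1 k A) :=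
            ENNReal.add_lt_add_right hdt hg
        _ = ε₀ := tsub_add_cancel_of_le (le_of_lt hd)
  | univ =>
    intro f _
    exact ⟨1, zero_lt_one, Set.subset_univ _⟩
  | inter s t _ _ ihs iht =>
    intro f hf
    rcases ihs f hf.1 with ⟨ε₁, hε₁, hb₁⟩
    rcases iht f hf.2 with ⟨ε₂, hε₂, hb₂⟩
    refine ⟨min ε₁ ε₂, lt_min hε₁ hε₂, ?_⟩
    intro g hg
    have hg' : martNorm P D 1 (fun k A => g.1 k A - f.1 k A) < min ε₁ ε₂ := hg
    exact ⟨hb₁ (lt_of_lt_of_le hg' (min_le_left _ _)),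
      hb₂ (lt_of_lt_of_le hg' (min_le_right _ _))⟩
  | sUnion S _ ih =>
    intro f hf
    rcases hf with ⟨s, hsS, hfs⟩
    rcases ih s hsS f hfs with ⟨ε, hε, hb⟩
    exact ⟨ε, hε, hb.trans (Set.subset_sUnion_of_mem hsS)⟩

omit hp in
lemma enorm_mul_eq (r : ℝ) (B : Set Ω) :
    (‖r‖₊ : ℝ≥0∞) * P B = ENNReal.ofReal (|r| * (P B).toReal) := by
  rw [ENNReal.ofReal_mul (abs_nonneg _), ENNReal.ofReal_toReal (measure_ne_top P _)]
  congr 1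
  rw [← enorm_eq_nnnorm, Real.enorm_eq_ofReal_abs]

lemma value_close (hA' : AssumptionA P D) {m : ℕ} {B : Set Ω} (hB : B ∈ D m)
    {f g : Mart P D 1} {c : ℝ} (hc : 0 < c)
    (hg : g ∈ ball P D f (ENNReal.ofReal (c * (P B).toReal))) :
    |g.1 m B - f.1 m B| < c := by
  have hPB : 0 < (P B).toReal :=
    ENNReal.toReal_pos (ne_of_gt (hA'.1 m B hB)) (measure_ne_top P B)
  have h1 : (‖g.1 m B - f.1 m B‖₊ : ℝ≥0∞) * P B
      ≤ lpNorm P D 1 (fun k A => g.1 k A - f.1 k A) m := by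
    rw [lpNorm_one hp]
    exact Finset.single_le_sum (f := fun B' => (‖g.1 m B' - f.1 m B'‖₊ : ℝ≥0∞) * P B')
      (fun B' _ => zero_le) hB
  have h2 : (‖g.1 m B - f.1 m B‖₊ : ℝ≥0∞) * P B < ENNReal.ofReal (c * (P B).toReal) :=
    lt_of_le_of_lt (h1.trans (lpNorm_le_martNorm _ _ _)) hg
  rw [enorm_mul_eq] at h2
  have h3 : |g.1 m B - f.1 m B| * (P B).toReal < c * (P B).toReal := by
    have := (ENNReal.ofReal_lt_ofReal_iff (by positivity)).1 h2
    exact this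
  exact lt_of_mul_lt_mul_right h3 (le_of_lt hPB)

lemma isOpen_val_gt (hA' : AssumptionA P D) (m : ℕ) {B : Set Ω} (hB : B ∈ D m) (r : ℝ) :
    IsOpen {g : Mart P D 1 | r < g.1 m B} := by
  rw [isOpen_iff_forall_mem_open]
  intro f hf
  have hc : 0 < f.1 m B - r := by
    simp only [Set.mem_setOf_eq] at hf
    linarith
  have hPB : 0 < (P B).toReal :=
    ENNReal.toReal_pos (ne_of_gt (hA'.1 m B hB)) (measure_ne_top P B)
  refine ⟨ball P D f (ENNReal.ofReal ((f.1 m B - r) * (P B).toReal)), ?_, ?_, ?_⟩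
  · intro g hg
    have := value_close hp hA' hB hc hg
    have h1 := abs_lt.1 this
    simp only [Set.mem_setOf_eq]
    linarith [h1.1]
  · exact isOpen_ball f (by positivity)
  · exact mem_ball_self f (by positivity)

lemma isOpen_val_lt (hA' : AssumptionA P D) (m : ℕ) {B : Set Ω} (hB : B ∈ D m) (r : ℝ) :
    IsOpen {g : Mart P D 1 | g.1 m B < r} := by
  rw [isOpen_iff_forall_mem_open]
  intro f hf
  have hc : 0 < r - f.1 m B := by
    simp only [Set.mem_setOf_eq] at hf
    linarith
  have hPB : 0 < (P B).toReal :=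
    ENNReal.toReal_pos (ne_of_gt (hA'.1 m B hB)) (measure_ne_top P B)
  refine ⟨ball P D f (ENNReal.ofReal ((r - f.1 m B) * (P B).toReal)), ?_, ?_, ?_⟩
  · intro g hg
    have := value_close hp hA' hB hc hg
    have h1 := abs_lt.1 this
    simp only [Set.mem_setOf_eq]
    linarith [h1.2]
  · exact isOpen_ball f (by positivity)
  · exact mem_ball_self f (by positivity)

end PartF


------------------------------------------------------------------
-- Part G : the set T and final assembly
------------------------------------------------------------------
section PartG
variable {P : Measure Ω} [IsProbabilityMeasure P] {D : ℕ → Finset (Set Ω)}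

def Tset (P : Measure Ω) [IsProbabilityMeasure P] (D : ℕ → Finset (Set Ω)) :
    Set (Mart P D 1) :=
  ⋂ (M : ℕ), ⋂ (n : ℕ), ⋂ (A ∈ (D n : Set (Set Ω))),
    ({g : Mart P D 1 | ∃ m B, n ≤ m ∧ M ≤ m ∧ B ∈ D m ∧ B ⊆ A ∧ (M:ℝ) < g.1 m B} ∩
     {g : Mart P D 1 | ∃ m B, n ≤ m ∧ M ≤ m ∧ B ∈ D m ∧ B ⊆ A ∧ g.1 m B < -(M:ℝ)})

lemma mem_Tset {g : Mart P D 1} : g ∈ Tset P D ↔ ∀ M n : ℕ, ∀ A ∈ D n,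
    (∃ m B, n ≤ m ∧ M ≤ m ∧ B ∈ D m ∧ B ⊆ A ∧ (M:ℝ) < g.1 m B) ∧
    (∃ m B, n ≤ m ∧ M ≤ m ∧ B ∈ D m ∧ B ⊆ A ∧ g.1 m B < -(M:ℝ)) := by
  simp only [Tset, Set.mem_iInter, Set.mem_inter_iff, Set.mem_setOf_eq, Finset.mem_coe]

omit [IsProbabilityMeasure P] in
lemma div_iff (f : ℕ → Set Ω → ℝ) (x : Kt D) :
    DivergesAt D f x ↔ ∀ M : ℕ,
      (∃ m, M ≤ m ∧ (M:ℝ) < f m (x.1 m)) ∧ (∃ m, M ≤ m ∧ f m (x.1 m) < -(M:ℝ)) := by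
  constructor
  · rintro ⟨h1, h2⟩ M
    exact ⟨(limsup_top_iff _).1 h1 M, (liminf_bot_iff _).1 h2 M⟩
  · intro h
    exact ⟨(limsup_top_iff _).2 fun M => (h M).1, (liminf_bot_iff _).2 fun M => (h M).2⟩

omit [IsProbabilityMeasure P] in
lemma isGδ_div_K (f : ℕ → Set Ω → ℝ) : IsGδ {x : Kt D | DivergesAt D f x} := by
  have he : {x : Kt D | DivergesAt D f x}
      = ⋂ (M : ℕ), ({x : Kt D | ∃ m, M ≤ m ∧ (M:ℝ) < f m (x.1 m)}
          ∩ {x : Kt D | ∃ m, M ≤ m ∧ f m (x.1 m) < -(M:ℝ)}) := by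
    ext x
    simp only [Set.mem_setOf_eq, Set.mem_iInter, Set.mem_inter_iff]
    exact div_iff f x
  rw [he]
  apply IsGδ.iInter
  intro M
  apply IsOpen.isGδ
  apply IsOpen.inter
  · have h2 : {x : Kt D | ∃ m, M ≤ m ∧ (M:ℝ) < f m (x.1 m)}
        = ⋃ (m : ℕ), ⋃ (_ : M ≤ m), ⋃ (B ∈ (D m : Set (Set Ω))), ⋃ (_ : (M:ℝ) < f m B),
            {x : Kt D | x.1 m = B} := by
      ext x
      simp only [Set.mem_iUnion, Set.mem_setOf_eq, Finset.mem_coe]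
      constructor
      · rintro ⟨m, h1, h2⟩
        exact ⟨m, h1, x.1 m, x.2.1 m, h2, rfl⟩
      · rintro ⟨m, h1, B, hB, h3, h4⟩
        exact ⟨m, h1, by rw [h4]; exact h3⟩
    rw [h2]
    exact isOpen_iUnion fun m => isOpen_iUnion fun _ => isOpen_iUnion fun B =>
      isOpen_iUnion fun _ => isOpen_iUnion fun _ => isOpen_cyl D m B
  · have h2 : {x : Kt D | ∃ m, M ≤ m ∧ f m (x.1 m) < -(M:ℝ)}
        = ⋃ (m : ℕ), ⋃ (_ : M ≤ m), ⋃ (B ∈ (D m : Set (Set Ω))), ⋃ (_ : f m B < -(M:ℝ)),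
            {x : Kt D | x.1 m = B} := by
      ext x
      simp only [Set.mem_iUnion, Set.mem_setOf_eq, Finset.mem_coe]
      constructor
      · rintro ⟨m, h1, h2⟩
        exact ⟨m, h1, x.1 m, x.2.1 m, h2, rfl⟩
      · rintro ⟨m, h1, B, hB, h3, h4⟩
        exact ⟨m, h1, by rw [h4]; exact h3⟩
    rw [h2]
    exact isOpen_iUnion fun m => isOpen_iUnion fun _ => isOpen_iUnion fun B =>
      isOpen_iUnion fun _ => isOpen_iUnion fun _ => isOpen_cyl D m B

variable (hp : IsPartitionSeq D)
include hp

lemma isGδ_Tset (hA' : AssumptionA P D) : IsGδ (Tset P D) := by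
  apply IsGδ.iInter
  intro M
  apply IsGδ.iInter
  intro n
  apply IsGδ.biInter ((D n).finite_toSet.countable)
  intro A hA
  apply IsOpen.isGδ
  apply IsOpen.inter
  · have he : {g : Mart P D 1 | ∃ m B, n ≤ m ∧ M ≤ m ∧ B ∈ D m ∧ B ⊆ A ∧ (M:ℝ) < g.1 m B}
        = ⋃ (m : ℕ), ⋃ (_ : n ≤ m ∧ M ≤ m), ⋃ (B ∈ (D m : Set (Set Ω))), ⋃ (_ : B ⊆ A),
            {g : Mart P D 1 | (M:ℝ) < g.1 m B} := by
      ext g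
      simp only [Set.mem_iUnion, Set.mem_setOf_eq, Finset.mem_coe]
      constructor
      · rintro ⟨m, B, h1, h2, h3, h4, h5⟩
        exact ⟨m, ⟨h1, h2⟩, B, h3, h4, h5⟩
      · rintro ⟨m, ⟨h1, h2⟩, B, h3, h4, h5⟩
        exact ⟨m, B, h1, h2, h3, h4, h5⟩
    rw [he]
    exact isOpen_iUnion fun m => isOpen_iUnion fun _ => isOpen_iUnion fun B =>
      isOpen_iUnion fun hB => isOpen_iUnion fun _ =>
        isOpen_val_gt hp hA' m (Finset.mem_coe.1 hB) _
  · have he : {g : Mart P D 1 | ∃ m B, n ≤ m ∧ M ≤ m ∧ B ∈ D m ∧ B ⊆ A ∧ g.1 m B < -(M:ℝ)}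
        = ⋃ (m : ℕ), ⋃ (_ : n ≤ m ∧ M ≤ m), ⋃ (B ∈ (D m : Set (Set Ω))), ⋃ (_ : B ⊆ A),
            {g : Mart P D 1 | g.1 m B < -(M:ℝ)} := by
      ext g
      simp only [Set.mem_iUnion, Set.mem_setOf_eq, Finset.mem_coe]
      constructor
      · rintro ⟨m, B, h1, h2, h3, h4, h5⟩
        exact ⟨m, ⟨h1, h2⟩, B, h3, h4, h5⟩
      · rintro ⟨m, ⟨h1, h2⟩, B, h3, h4, h5⟩
        exact ⟨m, B, h1, h2, h3, h4, h5⟩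
    rw [he]
    exact isOpen_iUnion fun m => isOpen_iUnion fun _ => isOpen_iUnion fun B =>
      isOpen_iUnion fun hB => isOpen_iUnion fun _ =>
        isOpen_val_lt hp hA' m (Finset.mem_coe.1 hB) _

lemma exists_in_ball_Tset (hA' : AssumptionA P D) (f : Mart P D 1) {ε : ℝ≥0∞}
    (hε : 0 < ε) : ∃ g : Mart P D 1, g ∈ ball P D f ε ∧ g ∈ Tset P D := by
  obtain ⟨ε', hε', hlt⟩ : ∃ ε' : ℝ, 0 < ε' ∧ ENNReal.ofReal (4 * ε') < ε := by
    by_cases htop : ε = ⊤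
    · exact ⟨1, one_pos, by rw [htop]; exact ENNReal.ofReal_lt_top⟩
    · have htR : 0 < ε.toReal := ENNReal.toReal_pos (ne_of_gt hε) htop
      refine ⟨ε.toReal / 8, by positivity, ?_⟩
      have h1 : (4 : ℝ) * (ε.toReal / 8) = ε.toReal / 2 := by ring
      rw [h1]
      calc ENNReal.ofReal (ε.toReal / 2) < ENNReal.ofReal (ε.toReal) :=
            (ENNReal.ofReal_lt_ofReal_iff htR).2 (by linarith)
        _ = ε := ENNReal.ofReal_toReal htop
  obtain ⟨h, hmart, hnorm, hwit⟩ := main_construction hp hA' f.1 f.2.1 f.2.2 hε'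
  have hnfin : martNorm P D 1 (fun k E => f.1 k E + h k E) ≠ ⊤ := by
    apply ne_top_of_le_ne_top ?_ (martNorm_add_le hp f.1 h)
    exact ENNReal.add_ne_top.2 ⟨f.2.2, ne_top_of_le_ne_top ENNReal.ofReal_ne_top hnorm⟩
  refine ⟨⟨fun k E => f.1 k E + h k E, hmart, hnfin⟩, ?_, ?_⟩
  · show martNorm P D 1
        (fun k A => (fun k E => f.1 k E + h k E) k A - f.1 k A) < ε
    have hdiff : (fun k A => (fun k E => f.1 k E + h k E) k A - f.1 k A) = h := by
      funext k A
      show (f.1 k A + h k A) - f.1 k A = h k A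
      ring
    rw [hdiff]
    exact lt_of_le_of_lt hnorm hlt
  · apply mem_Tset.2
    intro M n A hA
    exact hwit M n A hA

lemma dense_Tset (hA' : AssumptionA P D) : Dense (Tset P D) := by
  rw [dense_iff_inter_open]
  rintro U hU ⟨f₀, hf₀⟩
  obtain ⟨ε, hε, hball⟩ := exists_ball_subset hp hU f₀ hf₀
  obtain ⟨g, h1, h2⟩ := exists_in_ball_Tset hp hA' f₀ hε
  exact ⟨g, hball h1, h2⟩

lemma dense_div_K (f : ℕ → Set Ω → ℝ)
    (hfT : ∀ M n : ℕ, ∀ A ∈ D n,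
      (∃ m B, n ≤ m ∧ M ≤ m ∧ B ∈ D m ∧ B ⊆ A ∧ (M:ℝ) < f m B) ∧
      (∃ m B, n ≤ m ∧ M ≤ m ∧ B ∈ D m ∧ B ⊆ A ∧ f m B < -(M:ℝ))) :
    Dense {x : Kt D | DivergesAt D f x} := by
  rw [dense_iff_inter_open]
  rintro U hU ⟨x, hx⟩
  obtain ⟨n, hcyl⟩ := cyl_basis hp hU hx
  obtain ⟨y, hy1, hy2⟩ := exists_div_chain hp f hfT (x.2.1 n)
  exact ⟨y, hcyl hy1, hy2⟩

lemma isGδ_S (hA' : AssumptionA P D) :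
    IsGδ {q : Mart P D 1 × Kt D | DivergesAt D q.1.1 q.2} := by
  have he : {q : Mart P D 1 × Kt D | DivergesAt D q.1.1 q.2}
      = ⋂ (M : ℕ), ({q : Mart P D 1 × Kt D | ∃ m, M ≤ m ∧ (M:ℝ) < q.1.1 m (q.2.1 m)}
          ∩ {q : Mart P D 1 × Kt D | ∃ m, M ≤ m ∧ q.1.1 m (q.2.1 m) < -(M:ℝ)}) := by
    ext q
    simp only [Set.mem_setOf_eq, Set.mem_iInter, Set.mem_inter_iff]
    exact div_iff q.1.1 q.2
  rw [he]
  apply IsGδ.iInter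
  intro M
  apply IsOpen.isGδ
  apply IsOpen.inter
  · have h2 : {q : Mart P D 1 × Kt D | ∃ m, M ≤ m ∧ (M:ℝ) < q.1.1 m (q.2.1 m)}
        = ⋃ (m : ℕ), ⋃ (_ : M ≤ m), ⋃ (B ∈ (D m : Set (Set Ω))),
            ({g : Mart P D 1 | (M:ℝ) < g.1 m B} ×ˢ {x : Kt D | x.1 m = B}) := by
      ext q
      simp only [Set.mem_iUnion, Set.mem_setOf_eq, Finset.mem_coe, Set.mem_prod]
      constructor
      · rintro ⟨m, h1, h2⟩
        exact ⟨m, h1, q.2.1 m, q.2.2.1 m, h2, rfl⟩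
      · rintro ⟨m, h1, B, hB, h3, h4⟩
        exact ⟨m, h1, by rw [h4]; exact h3⟩
    rw [h2]
    exact isOpen_iUnion fun m => isOpen_iUnion fun _ => isOpen_iUnion fun B =>
      isOpen_iUnion fun hB =>
        IsOpen.prod (isOpen_val_gt hp hA' m (Finset.mem_coe.1 hB) _) (isOpen_cyl D m B)
  · have h2 : {q : Mart P D 1 × Kt D | ∃ m, M ≤ m ∧ q.1.1 m (q.2.1 m) < -(M:ℝ)}
        = ⋃ (m : ℕ), ⋃ (_ : M ≤ m), ⋃ (B ∈ (D m : Set (Set Ω))),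
            ({g : Mart P D 1 | g.1 m B < -(M:ℝ)} ×ˢ {x : Kt D | x.1 m = B}) := by
      ext q
      simp only [Set.mem_iUnion, Set.mem_setOf_eq, Finset.mem_coe, Set.mem_prod]
      constructor
      · rintro ⟨m, h1, h2⟩
        exact ⟨m, h1, q.2.1 m, q.2.2.1 m, h2, rfl⟩
      · rintro ⟨m, h1, B, hB, h3, h4⟩
        exact ⟨m, h1, by rw [h4]; exact h3⟩
    rw [h2]
    exact isOpen_iUnion fun m => isOpen_iUnion fun _ => isOpen_iUnion fun B =>
      isOpen_iUnion fun hB =>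
        IsOpen.prod (isOpen_val_lt hp hA' m (Finset.mem_coe.1 hB) _) (isOpen_cyl D m B)

lemma dense_S (hA' : AssumptionA P D) :
    Dense {q : Mart P D 1 × Kt D | DivergesAt D q.1.1 q.2} := by
  rw [dense_iff_inter_open]
  rintro U hU ⟨⟨f₀, x₀⟩, hq⟩
  obtain ⟨u, v, hu, hv, hfu, hxv, huv⟩ := isOpen_prod_iff.1 hU f₀ x₀ hq
  obtain ⟨ε, hε, hball⟩ := exists_ball_subset hp hu f₀ hfu
  obtain ⟨g, hgball, hgT⟩ := exists_in_ball_Tset hp hA' f₀ hε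
  obtain ⟨n, hcyl⟩ := cyl_basis hp hv hxv
  obtain ⟨y, hy1, hy2⟩ := exists_div_chain hp g.1 (mem_Tset.1 hgT) (x₀.2.1 n)
  exact ⟨(g, y), huv (Set.mk_mem_prod (hball hgball) (hcyl hy1)), hy2⟩

end PartG

end Aux

/-- Theorem (main:pn for `Y = M₁`): the set of pairs `(f, x) ∈ M₁ × K` at which the
martingale `f` diverges in the strongest sense is a dense `G_δ` subset of `M₁ × K`;
in particular there is a dense `G_δ` set of martingales `f ∈ M₁` each of which diverges
in the strongest sense on a dense `G_δ` subset of `K`. -/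
theorem statement0 [MeasurableSpace Ω] (P : Measure Ω) [IsProbabilityMeasure P]
    (D : ℕ → Finset (Set Ω)) (hpart : IsPartitionSeq D) (hA : AssumptionA P D) :
    (IsGδ {q : Mart P D 1 × Kt D | DivergesAt D q.1.1 q.2} ∧
     Dense {q : Mart P D 1 × Kt D | DivergesAt D q.1.1 q.2}) ∧
    ∃ T : Set (Mart P D 1), IsGδ T ∧ Dense T ∧ ∀ f ∈ T,
      IsGδ {x : Kt D | DivergesAt D f.1 x} ∧ Dense {x : Kt D | DivergesAt D f.1 x} := by
  constructor
  · exact ⟨Aux.isGδ_S hpart hA, Aux.dense_S hpart hA⟩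
  · refine ⟨Aux.Tset P D, Aux.isGδ_Tset hpart hA, Aux.dense_Tset hpart hA, ?_⟩
    intro f hf
    exact ⟨Aux.isGδ_div_K f.1,
      Aux.dense_div_K hpart f.1 (Aux.mem_Tset.1 hf)⟩

end MartingalePaper
end
end

section
/- The set {(f, x) ∈ M_{∞,1} × K : limsup_{n→∞} f_n(x) = 1 and liminf_{n→∞} f_n(x) = −1} is a dense G_δ subset of M_{∞,1} × K. In particular, there is a dense G_δ set of f ∈ M_{∞,1} such that {x ∈ K : limsup_{n→∞} f_n(x) = 1 and liminf_{n→∞} f_n(x) = −1} is a dense G_δ subset of K. -/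
open MeasureTheory Filter Set
open scoped ENNReal Topology

noncomputable section

namespace MartingalePaper

variable {Ω : Type}

/-- `M_{p,1}`, the martingales of `‖·‖_p`-norm at most one. -/
def MartBall [MeasurableSpace Ω] (P : Measure Ω) (D : ℕ → Finset (Set Ω)) (p : ℝ≥0∞) :
    Type _ :=
  {f : ℕ → Set Ω → ℝ // IsMart P D f ∧ martNorm P D p f ≤ 1}

/-- The topology of pointwise convergence on `M_{p,1}`, inherited from the product
`∏ₙ L^p(Σ_n)` with coordinatewise norm topologies: it is generated by the subbasic sets
given by a coordinate `n` and an `L^p`-ball in that coordinate. -/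
instance [MeasurableSpace Ω] (P : Measure Ω) (D : ℕ → Finset (Set Ω)) (p : ℝ≥0∞) :
    TopologicalSpace (MartBall P D p) :=
  TopologicalSpace.generateFrom
    {s | ∃ (f : MartBall P D p) (n : ℕ) (ε : ℝ≥0∞), 0 < ε ∧
      s = {g : MartBall P D p | lpNorm P D p (fun k A => g.1 k A - f.1 k A) n < ε}}

/-- `limsup f_n(x) = 1` and `liminf f_n(x) = -1`. -/
def OscFullAt (D : ℕ → Finset (Set Ω)) (f : ℕ → Set Ω → ℝ) (x : Kt D) : Prop :=
  Filter.limsup (fun n => ((f n (x.1 n) : ℝ) : EReal)) Filter.atTop = (1 : EReal) ∧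
  Filter.liminf (fun n => ((f n (x.1 n) : ℝ) : EReal)) Filter.atTop = (-1 : EReal)


/-! ### Partition basics -/

attribute [local instance] Classical.propDecidable
set_option linter.unusedSectionVars false
set_option linter.unusedVariables false

section Basics
variable [MeasurableSpace Ω] {P : Measure Ω} {D : ℕ → Finset (Set Ω)}

lemma exists_atom (hp : IsPartitionSeq D) (n : ℕ) (w : Ω) : ∃ A ∈ D n, w ∈ A := by
  have h := hp.2.2.2.1 n
  have hw : w ∈ ⋃ A ∈ D n, A := by rw [h]; trivial
  simpa using hw

lemma atom_eq_of_mem (hp : IsPartitionSeq D) {n : ℕ} {A B : Set Ω} (hA : A ∈ D n)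
    (hB : B ∈ D n) {w : Ω} (hwA : w ∈ A) (hwB : w ∈ B) : A = B := by
  by_contra h
  exact (Set.disjoint_left.1 (hp.2.2.1 n hA hB h)) hwA hwB

lemma atom_eq_of_subset (hp : IsPartitionSeq D) {n : ℕ} {A B C : Set Ω} (hA : A ∈ D n)
    (hB : B ∈ D n) (hC : C.Nonempty) (h1 : C ⊆ A) (h2 : C ⊆ B) : A = B := by
  obtain ⟨w, hw⟩ := hC
  exact atom_eq_of_mem hp hA hB (h1 hw) (h2 hw)

lemma exists_anc (hp : IsPartitionSeq D) {n m : ℕ} (h : n ≤ m) {B : Set Ω} (hB : B ∈ D m) :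
    ∃ A ∈ D n, B ⊆ A := by
  induction m, h using Nat.le_induction generalizing B with
  | base => exact ⟨B, hB, subset_rfl⟩
  | succ m hnm ih =>
    obtain ⟨C, hC, hBC⟩ := hp.2.2.2.2 m B hB
    obtain ⟨A, hA, hCA⟩ := ih hC
    exact ⟨A, hA, hBC.trans hCA⟩

/-- The ancestor of `B` at level `n`. -/
def ancAt (D : ℕ → Finset (Set Ω)) (n : ℕ) (B : Set Ω) : Set Ω :=
  if h : ∃ A ∈ D n, B ⊆ A then h.choose else ∅

lemma ancAt_spec {n : ℕ} {B : Set Ω} (h : ∃ A ∈ D n, B ⊆ A) :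
    ancAt D n B ∈ D n ∧ B ⊆ ancAt D n B := by
  rw [ancAt, dif_pos h]
  exact ⟨h.choose_spec.1, h.choose_spec.2⟩

lemma ancAt_eq (hp : IsPartitionSeq D) {n : ℕ} {B C : Set Ω} (hB : B.Nonempty)
    (hC : C ∈ D n) (hBC : B ⊆ C) : ancAt D n B = C := by
  have h : ∃ A ∈ D n, B ⊆ A := ⟨C, hC, hBC⟩
  obtain ⟨h1, h2⟩ := ancAt_spec h
  exact atom_eq_of_subset hp h1 hC hB h2 hBC

lemma subset_of_le_of_nonempty_inter (hp : IsPartitionSeq D) {n m : ℕ} (h : n ≤ m)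
    {A B : Set Ω} (hA : A ∈ D n) (hB : B ∈ D m) (hne : (B ∩ A).Nonempty) : B ⊆ A := by
  obtain ⟨A', hA', hBA'⟩ := exists_anc hp h hB
  obtain ⟨w, hwB, hwA⟩ := hne
  rwa [atom_eq_of_mem hp hA hA' hwA (hBA' hwB)]

/-- The children of an atom `A ∈ D n` at level `n+1`. -/
def children (D : ℕ → Finset (Set Ω)) (n : ℕ) (A : Set Ω) : Finset (Set Ω) :=
  (D (n+1)).filter (· ⊆ A)

lemma mem_children {n : ℕ} {A B : Set Ω} : B ∈ children D n A ↔ B ∈ D (n+1) ∧ B ⊆ A := by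
  simp [children]

lemma children_cover (hp : IsPartitionSeq D) {n : ℕ} {A : Set Ω} (hA : A ∈ D n) :
    ⋃ B ∈ children D n A, B = A := by
  apply Set.Subset.antisymm
  · exact Set.iUnion₂_subset fun B hB => (mem_children.1 hB).2
  · intro w hw
    obtain ⟨B, hB, hwB⟩ := exists_atom hp (n+1) w
    have hBA : B ⊆ A := subset_of_le_of_nonempty_inter hp (Nat.le_succ n) hA hB ⟨w, hwB, hw⟩
    exact Set.mem_biUnion (mem_children.2 ⟨hB, hBA⟩) hwB

lemma children_nonempty (hp : IsPartitionSeq D) {n : ℕ} {A : Set Ω} (hA : A ∈ D n) :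
    (children D n A).Nonempty := by
  obtain ⟨w, hw⟩ := hp.2.1 n A hA
  obtain ⟨B, hB, hwB⟩ := exists_atom hp (n+1) w
  exact ⟨B, mem_children.2 ⟨hB, subset_of_le_of_nonempty_inter hp (Nat.le_succ n) hA hB ⟨w, hwB, hw⟩⟩⟩

lemma children_eq_singleton (hp : IsPartitionSeq D) {n : ℕ} {A : Set Ω} (hA : A ∈ D n)
    (hcard : (children D n A).card = 1) : children D n A = {A} ∧ A ∈ D (n+1) := by
  obtain ⟨B, hB⟩ := Finset.card_eq_one.1 hcard
  have hBA : B = A := by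
    have hcov := children_cover hp hA
    rw [hB] at hcov
    simpa using hcov
  subst hBA
  exact ⟨hB, (mem_children.1 (hB ▸ Finset.mem_singleton_self B)).1⟩

lemma two_le_card_children (hp : IsPartitionSeq D) {n : ℕ} {A : Set Ω} (hA : A ∈ D n)
    (hne : (children D n A).card ≠ 1) : 2 ≤ (children D n A).card := by
  have h1 : 0 < (children D n A).card := Finset.card_pos.2 (children_nonempty hp hA)
  omega

lemma eventually_splits (hp : IsPartitionSeq D) (hA : AssumptionA P D) {n : ℕ} {A : Set Ω}
    (hAn : A ∈ D n) : ∃ m, n ≤ m ∧ A ∈ D m ∧ (children D m A).card ≠ 1 := by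
  by_contra h
  push_neg at h
  have hall : ∀ m, n ≤ m → A ∈ D m := by
    intro m hm
    induction m, hm using Nat.le_induction with
    | base => exact hAn
    | succ m hnm ih => exact (children_eq_singleton hp ih (h m hnm ih)).2
  obtain ⟨m, hnm, hAm⟩ := hA.2 n A hAn
  exact hAm (hall m hnm.le)

lemma descend (hp : IsPartitionSeq D) {n m : ℕ} (h : n ≤ m) {A : Set Ω} (hA : A ∈ D n)
    (hAne : A.Nonempty) : ∃ B ∈ D m, B ⊆ A := by
  obtain ⟨w, hw⟩ := hAne
  obtain ⟨B, hB, hwB⟩ := exists_atom hp m w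
  exact ⟨B, hB, subset_of_le_of_nonempty_inter hp h hA hB ⟨w, hwB, hw⟩⟩

lemma sum_children_measure (hp : IsPartitionSeq D) {n : ℕ} {A : Set Ω} (hA : A ∈ D n) :
    ∑ B ∈ children D n A, P B = P A := by
  rw [← measure_biUnion_finset]
  · rw [children_cover hp hA]
  · intro B hB C hC hBC
    exact hp.2.2.1 (n+1) (mem_children.1 hB).1 (mem_children.1 hC).1 hBC
  · exact fun B hB => hp.1 (n+1) B (mem_children.1 hB).1

lemma filter_succ_eq_biUnion (hp : IsPartitionSeq D) {n m : ℕ} (h : n ≤ m) {A : Set Ω}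
    (hA : A ∈ D n) :
    (D (m+1)).filter (· ⊆ A) = ((D m).filter (· ⊆ A)).biUnion (fun B => children D m B) := by
  ext C
  simp only [Finset.mem_filter, Finset.mem_biUnion, mem_children]
  constructor
  · rintro ⟨hC, hCA⟩
    obtain ⟨B, hB, hCB⟩ := hp.2.2.2.2 m C hC
    have hCne : C.Nonempty := hp.2.1 (m+1) C hC
    have hBA : B ⊆ A := by
      apply subset_of_le_of_nonempty_inter hp h hA hB
      obtain ⟨w, hw⟩ := hCne
      exact ⟨w, hCB hw, hCA hw⟩
    exact ⟨B, ⟨hB, hBA⟩, hC, hCB⟩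
  · rintro ⟨B, ⟨hB, hBA⟩, hC, hCB⟩
    exact ⟨hC, hCB.trans hBA⟩

lemma children_pairwise_disjoint (hp : IsPartitionSeq D) {m : ℕ} {B C : Set Ω}
    (hB : B ∈ D m) (hC : C ∈ D m) (hBC : B ≠ C) :
    Disjoint (children D m B) (children D m C) := by
  rw [Finset.disjoint_left]
  intro E hEB hEC
  have hEne : E.Nonempty := hp.2.1 (m+1) E (mem_children.1 hEB).1
  exact hBC (atom_eq_of_subset hp hB hC hEne (mem_children.1 hEB).2 (mem_children.1 hEC).2)

end Basics

/-! ### mval, norms, martingale characterization -/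

section Mval
variable [MeasurableSpace Ω] {P : Measure Ω} {D : ℕ → Finset (Set Ω)}
  {f g h : ℕ → Set Ω → ℝ} {n m : ℕ} {A B : Set Ω}

lemma mval_eq_of_mem (hp : IsPartitionSeq D) (hA : A ∈ D n) {w : Ω} (hw : w ∈ A) :
    mval D f n w = f n A := by
  rw [mval, Finset.sum_eq_single A]
  · simp [Set.indicator_of_mem hw]
  · intro B hB hBA
    have : w ∉ B := fun hwB => hBA (atom_eq_of_mem hp hB hA hwB hw)
    simp [Set.indicator_of_notMem this]
  · intro hA'; exact absurd hA hA'

lemma mval_measurable (hp : IsPartitionSeq D) : Measurable (mval D f n) := by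
  apply Finset.measurable_sum
  intro A hA
  exact (measurable_const).indicator (hp.1 n A hA)

lemma mval_sub (w : Ω) :
    mval D (fun k B => g k B - f k B) n w = mval D g n w - mval D f n w := by
  simp only [mval, ← Finset.sum_sub_distrib]
  congr 1; ext A
  by_cases hw : w ∈ A <;> simp [hw]

lemma abs_mval_le (hp : IsPartitionSeq D) {C : ℝ} (hC : 0 ≤ C)
    (hf : ∀ A ∈ D n, |f n A| ≤ C) (w : Ω) : |mval D f n w| ≤ C := by
  obtain ⟨A, hA, hw⟩ := exists_atom hp n w
  rw [mval_eq_of_mem hp hA hw]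
  exact hf A hA

lemma lpNormTop_le [IsProbabilityMeasure P] (hp : IsPartitionSeq D) {C : ℝ} (hC : 0 ≤ C)
    (hf : ∀ A ∈ D n, |f n A| ≤ C) : lpNorm P D ∞ f n ≤ ENNReal.ofReal C := by
  have := eLpNorm_le_of_ae_bound (p := (∞ : ℝ≥0∞)) (μ := P) (f := mval D f n)
    (C := C) (Filter.Eventually.of_forall fun w => by
      rw [Real.norm_eq_abs]; exact abs_mval_le hp hC hf w)
  simpa [lpNorm] using this

lemma exists_mem_of_ae {Q : Ω → Prop} (hPA : 0 < P A) (hQ : ∀ᵐ w ∂P, Q w) :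
    ∃ w ∈ A, Q w := by
  by_contra hcon
  push_neg at hcon
  have hsub : A ⊆ {w | ¬ Q w} := fun w hw => hcon w hw
  have : P A = 0 := measure_mono_null hsub (by simpa [ae_iff] using hQ)
  exact absurd this hPA.ne'

lemma value_le_lpNormTop (hp : IsPartitionSeq D) (hPA : 0 < P A) (hA : A ∈ D n) :
    ENNReal.ofReal |f n A| ≤ lpNorm P D ∞ f n := by
  rw [lpNorm, eLpNorm_exponent_top, eLpNormEssSup]
  have hae : ∀ᵐ w ∂P, (‖mval D f n w‖₊ : ℝ≥0∞) ≤ essSup (fun w => (‖mval D f n w‖₊ : ℝ≥0∞)) P :=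
    ae_le_essSup
  obtain ⟨w, hw, hle⟩ := exists_mem_of_ae hPA hae
  rw [← Real.enorm_eq_ofReal_abs]
  rwa [mval_eq_of_mem hp hA hw] at hle

lemma martball_abs_le [IsProbabilityMeasure P] (hp : IsPartitionSeq D) (hA : AssumptionA P D)
    (f : MartBall P D ∞) (hAn : A ∈ D n) : |f.1 n A| ≤ 1 := by
  have h1 : ENNReal.ofReal |f.1 n A| ≤ lpNorm P D ∞ f.1 n :=
    value_le_lpNormTop hp (hA.1 n A hAn) hAn
  have h2 : lpNorm P D ∞ f.1 n ≤ 1 := le_trans (le_iSup _ n) f.2.2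
  exact ENNReal.ofReal_le_one.1 (h1.trans h2)

lemma lpNorm_sub_le (hp : IsPartitionSeq D) {p : ℝ≥0∞} (hp1 : 1 ≤ p) :
    lpNorm P D p (fun k B => h k B - f k B) n ≤
      lpNorm P D p (fun k B => h k B - g k B) n + lpNorm P D p (fun k B => g k B - f k B) n := by
  have key : (mval D (fun k B => h k B - f k B) n) =
      (mval D (fun k B => h k B - g k B) n) + (mval D (fun k B => g k B - f k B) n) := by
    funext w
    simp only [Pi.add_apply, mval_sub]
    ring
  rw [lpNorm, key]
  exact eLpNorm_add_le ((mval_measurable hp).aestronglyMeasurable)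
    ((mval_measurable hp).aestronglyMeasurable) hp1

lemma mval_self_sub_zero (w : Ω) : mval D (fun k B => f k B - f k B) n w = 0 := by
  simp [mval]

lemma lpNorm_self_sub {p : ℝ≥0∞} : lpNorm P D p (fun k B => f k B - f k B) n = 0 := by
  have : (mval D (fun k B => f k B - f k B) n) = (fun _ => (0:ℝ)) := funext mval_self_sub_zero
  rw [lpNorm, this]
  exact eLpNorm_zero

lemma setIntegral_mval [IsProbabilityMeasure P] (hp : IsPartitionSeq D) (hnm : n ≤ m)
    (hA : A ∈ D n) :
    ∫ w in A, mval D f m w ∂P = ∑ B ∈ (D m).filter (· ⊆ A), f m B * (P B).toReal := by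
  have hint : ∀ B ∈ D m, Integrable (B.indicator (fun _ => f m B)) (P.restrict A) :=
    fun B hB => (integrable_const _).indicator (hp.1 m B hB)
  simp only [mval]
  rw [show (∫ w in A, ∑ B ∈ D m, B.indicator (fun _ => f m B) w ∂P)
      = ∑ B ∈ D m, ∫ w in A, B.indicator (fun _ => f m B) w ∂P from
      integral_finset_sum _ hint]
  have hterm : ∀ B ∈ D m, ∫ w in A, B.indicator (fun _ => f m B) w ∂P
      = f m B * (P (A ∩ B)).toReal := by
    intro B hB
    rw [setIntegral_indicator (hp.1 m B hB), setIntegral_const, smul_eq_mul, mul_comm]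
    rfl
  rw [Finset.sum_congr rfl hterm]
  rw [← Finset.sum_filter_add_sum_filter_not (D m) (· ⊆ A)]
  have hzero : ∑ B ∈ (D m).filter (fun B => ¬ B ⊆ A), f m B * (P (A ∩ B)).toReal = 0 := by
    apply Finset.sum_eq_zero
    intro B hB
    rw [Finset.mem_filter] at hB
    have hempty : A ∩ B = ∅ := by
      by_contra hne
      have hne' : (A ∩ B).Nonempty := Set.nonempty_iff_ne_empty.2 hne
      exact hB.2 (subset_of_le_of_nonempty_inter hp hnm hA hB.1
        (by rwa [Set.inter_comm] at hne'))
    simp [hempty]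
  rw [hzero, add_zero]
  apply Finset.sum_congr rfl
  intro B hB
  rw [Finset.mem_filter] at hB
  rw [Set.inter_eq_right.2 hB.2]

lemma filter_self_level (hp : IsPartitionSeq D) (hA : A ∈ D n) :
    (D n).filter (· ⊆ A) = {A} := by
  ext B
  simp only [Finset.mem_filter, Finset.mem_singleton]
  constructor
  · rintro ⟨hB, hBA⟩
    exact atom_eq_of_subset hp hB hA (hp.2.1 n B hB) subset_rfl hBA
  · rintro rfl; exact ⟨hA, subset_rfl⟩

/-- One-step characterization of the martingale property. -/
lemma isMart_iff_onestep [IsProbabilityMeasure P] (hp : IsPartitionSeq D) :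
    IsMart P D f ↔ ((∀ k (B : Set Ω), B ∉ D k → f k B = 0) ∧
      ∀ k, ∀ A ∈ D k, f k A * (P A).toReal
        = ∑ B ∈ children D k A, f (k+1) B * (P B).toReal) := by
  have hsum : ∀ k, ∀ A ∈ D k, ∀ l, k ≤ l →
      ∫ w in A, mval D f l w ∂P = ∑ B ∈ (D l).filter (· ⊆ A), f l B * (P B).toReal :=
    fun k A hA l hkl => setIntegral_mval hp hkl hA
  constructor
  · rintro ⟨h0, hM⟩
    refine ⟨h0, fun k A hA => ?_⟩
    have h1 := hM k (k+1) (Nat.le_succ k) A hA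
    rw [hsum k A hA k le_rfl, hsum k A hA (k+1) (Nat.le_succ k)] at h1
    rw [filter_self_level hp hA, Finset.sum_singleton] at h1
    exact h1
  · rintro ⟨h0, hstep⟩
    refine ⟨h0, fun k l hkl A hA => ?_⟩
    rw [hsum k A hA k le_rfl, hsum k A hA l hkl, filter_self_level hp hA, Finset.sum_singleton]
    clear hsum
    induction l, hkl using Nat.le_induction with
    | base => rw [filter_self_level hp hA, Finset.sum_singleton]
    | succ l hkl ih =>
      rw [ih, filter_succ_eq_biUnion hp hkl hA, Finset.sum_biUnion]
      · apply Finset.sum_congr rfl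
        intro B hB
        rw [Finset.mem_filter] at hB
        exact hstep l B hB.1
      · intro B hB C hC hBC
        simp only [Finset.coe_filter, Set.mem_setOf_eq] at hB hC
        exact children_pairwise_disjoint hp hB.1 hC.1 hBC

end Mval

/-! ### Topology of `Kt` and `MartBall` -/

instance : DiscreteTopology (Set Ω) := ⟨rfl⟩

section Topology
variable [MeasurableSpace Ω] {P : Measure Ω} {D : ℕ → Finset (Set Ω)}

lemma kt_agree_below (hp : IsPartitionSeq D) {x y : Kt D} {n N : ℕ} (hnN : n ≤ N)
    (h : x.1 N = y.1 N) : x.1 n = y.1 n := by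
  apply atom_eq_of_subset hp (x.2.1 n) (y.2.1 n) (hp.2.1 N (x.1 N) (x.2.1 N))
  · exact x.2.2 n N hnN
  · rw [h]; exact y.2.2 n N hnN

lemma continuous_kt_eval (m : ℕ) : Continuous (fun x : Kt D => x.1 m) :=
  (continuous_apply m).comp continuous_subtype_val

lemma isOpen_kt_eq (m : ℕ) (B : Set Ω) : IsOpen {x : Kt D | x.1 m = B} := by
  have : {x : Kt D | x.1 m = B} = (fun x : Kt D => x.1 m) ⁻¹' {B} := rfl
  rw [this]
  exact (continuous_kt_eval m).isOpen_preimage _ (isOpen_discrete _)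

lemma kt_mem_nhds (hp : IsPartitionSeq D) {U : Set (Kt D)} (hU : IsOpen U) {x0 : Kt D}
    (hx0 : x0 ∈ U) : ∃ N, ∀ x : Kt D, x.1 N = x0.1 N → x ∈ U := by
  obtain ⟨V, hV, rfl⟩ := isOpen_induced_iff.1 hU
  obtain ⟨I, u, hIu, hsub⟩ := isOpen_pi_iff.1 hV x0.1 hx0
  refine ⟨I.sup id, fun x hx => ?_⟩
  apply hsub
  intro i hi
  have : x.1 i = x0.1 i := kt_agree_below hp (Finset.le_sup (f := id) hi) hx
  rw [this]
  exact (hIu i hi).2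

lemma kt_dense (hp : IsPartitionSeq D) {S : Set (Kt D)}
    (h : ∀ (x0 : Kt D) (N : ℕ), ∃ x ∈ S, x.1 N = x0.1 N) : Dense S := by
  rw [dense_iff_inter_open]
  rintro U hU ⟨x0, hx0⟩
  obtain ⟨N, hN⟩ := kt_mem_nhds hp hU hx0
  obtain ⟨x, hxS, hxN⟩ := h x0 N
  exact ⟨x, hN x hxN, hxS⟩

lemma isOpen_martball_ball (f : MartBall P D ∞) (n : ℕ) {ε : ℝ≥0∞} (hε : 0 < ε) :
    IsOpen {g : MartBall P D ∞ | lpNorm P D ∞ (fun k B => g.1 k B - f.1 k B) n < ε} :=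
  TopologicalSpace.isOpen_generateFrom_of_mem ⟨f, n, ε, hε, rfl⟩

lemma isOpen_martball_gt [IsProbabilityMeasure P] (hp : IsPartitionSeq D)
    (hA : AssumptionA P D) {n : ℕ} {A : Set Ω} (hAn : A ∈ D n) (c : ℝ) :
    IsOpen {g : MartBall P D ∞ | c < g.1 n A} := by
  have key : {g : MartBall P D ∞ | c < g.1 n A} =
      ⋃ g0 ∈ {g : MartBall P D ∞ | c < g.1 n A},
        {g : MartBall P D ∞ | lpNorm P D ∞ (fun k B => g.1 k B - g0.1 k B) n
          < ENNReal.ofReal (g0.1 n A - c)} := by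
    apply Set.Subset.antisymm
    · intro g hg
      apply Set.mem_biUnion hg
      simp only [Set.mem_setOf_eq, lpNorm_self_sub]
      exact ENNReal.ofReal_pos.2 (by simp only [Set.mem_setOf_eq] at hg; linarith)
    · intro g hg
      simp only [Set.mem_iUnion, Set.mem_setOf_eq] at hg ⊢
      obtain ⟨g0, hg0, hball⟩ := hg
      have h1 : ENNReal.ofReal |g.1 n A - g0.1 n A|
          ≤ lpNorm P D ∞ (fun k B => g.1 k B - g0.1 k B) n :=
        value_le_lpNormTop hp (hA.1 n A hAn) hAn
      have h2 := lt_of_le_of_lt h1 hball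
      rw [ENNReal.ofReal_lt_ofReal_iff (by linarith)] at h2
      have := abs_lt.1 h2
      linarith [this.1]
  rw [key]
  exact isOpen_biUnion fun g0 hg0 =>
    isOpen_martball_ball g0 n (ENNReal.ofReal_pos.2 (by simp only [Set.mem_setOf_eq] at hg0; linarith))

lemma isOpen_martball_lt [IsProbabilityMeasure P] (hp : IsPartitionSeq D)
    (hA : AssumptionA P D) {n : ℕ} {A : Set Ω} (hAn : A ∈ D n) (c : ℝ) :
    IsOpen {g : MartBall P D ∞ | g.1 n A < c} := by
  have key : {g : MartBall P D ∞ | g.1 n A < c} =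
      ⋃ g0 ∈ {g : MartBall P D ∞ | g.1 n A < c},
        {g : MartBall P D ∞ | lpNorm P D ∞ (fun k B => g.1 k B - g0.1 k B) n
          < ENNReal.ofReal (c - g0.1 n A)} := by
    apply Set.Subset.antisymm
    · intro g hg
      apply Set.mem_biUnion hg
      simp only [Set.mem_setOf_eq, lpNorm_self_sub]
      exact ENNReal.ofReal_pos.2 (by simp only [Set.mem_setOf_eq] at hg; linarith)
    · intro g hg
      simp only [Set.mem_iUnion, Set.mem_setOf_eq] at hg ⊢
      obtain ⟨g0, hg0, hball⟩ := hg
      have h1 : ENNReal.ofReal |g.1 n A - g0.1 n A|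
          ≤ lpNorm P D ∞ (fun k B => g.1 k B - g0.1 k B) n :=
        value_le_lpNormTop hp (hA.1 n A hAn) hAn
      have h2 := lt_of_le_of_lt h1 hball
      rw [ENNReal.ofReal_lt_ofReal_iff (by linarith)] at h2
      have := abs_lt.1 h2
      linarith [this.2]
  rw [key]
  exact isOpen_biUnion fun g0 hg0 =>
    isOpen_martball_ball g0 n (ENNReal.ofReal_pos.2 (by simp only [Set.mem_setOf_eq] at hg0; linarith))

lemma martball_mem_nhds [IsProbabilityMeasure P] (hp : IsPartitionSeq D)
    {U : Set (MartBall P D ∞)} (hU : IsOpen U) {g0 : MartBall P D ∞} (hg0 : g0 ∈ U) :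
    ∃ (N : ℕ) (η : ℝ), 0 < η ∧ ∀ g : MartBall P D ∞,
      (∀ k, k ≤ N → ∀ A ∈ D k, |g.1 k A - g0.1 k A| ≤ η) → g ∈ U := by
  have hgen : TopologicalSpace.GenerateOpen
      {s | ∃ (f : MartBall P D ∞) (n : ℕ) (ε : ℝ≥0∞), 0 < ε ∧
        s = {g : MartBall P D ∞ | lpNorm P D ∞ (fun k A => g.1 k A - f.1 k A) n < ε}} U := hU
  clear hU
  induction hgen with
  | @basic s hs =>
    obtain ⟨fc, nc, εc, hεc, rfl⟩ := hs
    set d := lpNorm P D ∞ (fun k A => g0.1 k A - fc.1 k A) nc with hd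
    have hdlt : d < εc := hg0
    have hdne : d ≠ ⊤ := hdlt.trans_le le_top |>.ne
    have key : ∀ (η : ℝ), 0 < η → ENNReal.ofReal η + d < εc ∨ εc = ⊤ → ∀ g : MartBall P D ∞,
        (∀ k, k ≤ nc → ∀ A ∈ D k, |g.1 k A - g0.1 k A| ≤ η) →
        lpNorm P D ∞ (fun k A => g.1 k A - fc.1 k A) nc < εc := by
      intro η hη hcase g hgclose
      have htri : lpNorm P D ∞ (fun k A => g.1 k A - fc.1 k A) nc
          ≤ lpNorm P D ∞ (fun k A => g.1 k A - g0.1 k A) nc + d :=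
        lpNorm_sub_le hp le_top
      have hb : lpNorm P D ∞ (fun k A => g.1 k A - g0.1 k A) nc ≤ ENNReal.ofReal η := by
        apply lpNormTop_le hp hη.le
        intro A hAn
        exact hgclose nc le_rfl A hAn
      rcases hcase with hlt | htop
      · exact lt_of_le_of_lt (htri.trans (add_le_add_left hb d)) hlt
      · rw [htop]
        apply lt_of_le_of_lt (htri.trans (add_le_add_left hb d))
        exact ENNReal.add_lt_top.2 ⟨ENNReal.ofReal_lt_top, hdne.lt_top⟩
    by_cases htop : εc = ⊤
    · exact ⟨nc, 1, one_pos, fun g hg => key 1 one_pos (Or.inr htop) g hg⟩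
    · have hpos : 0 < (εc - d).toReal := ENNReal.toReal_pos
        (by simpa [tsub_eq_zero_iff_le] using not_le.2 hdlt) (by simp [htop, ENNReal.sub_ne_top])
      refine ⟨nc, (εc - d).toReal / 2, by linarith, fun g hg => ?_⟩
      apply key _ (by linarith) _ g hg
      left
      have h1 : ENNReal.ofReal ((εc - d).toReal / 2) < εc - d := by
        conv_rhs => rw [← ENNReal.ofReal_toReal (a := εc - d) (by simp [htop, ENNReal.sub_ne_top])]
        rw [ENNReal.ofReal_lt_ofReal_iff hpos]
        linarith
      exact lt_tsub_iff_right.1 h1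
  | univ => exact ⟨0, 1, one_pos, fun g _ => trivial⟩
  | inter s t hs ht ihs iht =>
    obtain ⟨N1, η1, hη1, h1⟩ := ihs hg0.1
    obtain ⟨N2, η2, hη2, h2⟩ := iht hg0.2
    refine ⟨max N1 N2, min η1 η2, lt_min hη1 hη2, fun g hg => ?_⟩
    constructor
    · exact h1 g fun k hk A hAk =>
        (hg k (hk.trans (le_max_left _ _)) A hAk).trans (min_le_left _ _)
    · exact h2 g fun k hk A hAk =>
        (hg k (hk.trans (le_max_right _ _)) A hAk).trans (min_le_right _ _)
  | sUnion S hS ih =>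
    obtain ⟨t, htS, hgt⟩ := hg0
    obtain ⟨N, η, hη, h⟩ := ih t htS hgt
    exact ⟨N, η, hη, fun g hg => ⟨t, htS, h g hg⟩⟩

lemma martball_dense [IsProbabilityMeasure P] (hp : IsPartitionSeq D)
    {T : Set (MartBall P D ∞)}
    (h : ∀ (g0 : MartBall P D ∞) (N : ℕ) (η : ℝ), 0 < η →
      ∃ f ∈ T, ∀ k, k ≤ N → ∀ A ∈ D k, |f.1 k A - g0.1 k A| ≤ η) : Dense T := by
  rw [dense_iff_inter_open]
  rintro U hU ⟨g0, hg0⟩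
  obtain ⟨N, η, hη, hN⟩ := martball_mem_nhds hp hU hg0
  obtain ⟨f, hfT, hf⟩ := h g0 N η hη
  exact ⟨f, hN f hf, hfT⟩

end Topology

/-! ### Characterization of full oscillation, and Gδ structure -/

section Osc
variable [MeasurableSpace Ω] {P : Measure Ω} {D : ℕ → Finset (Set Ω)}

/-- The cutoff `1 - 1/(k+1)`. -/
def cutoff (k : ℕ) : ℝ := 1 - 1/(k+1)

lemma cutoff_lt_one (k : ℕ) : cutoff k < 1 := by
  have : (0:ℝ) < 1/(k+1) := by positivity
  simp only [cutoff]; linarith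

lemma cutoff_mono {k l : ℕ} (h : k ≤ l) : cutoff k ≤ cutoff l := by
  have h1 : (k:ℝ)+1 ≤ (l:ℝ)+1 := by exact_mod_cast by omega
  have h2 : (0:ℝ) < (k:ℝ)+1 := by positivity
  have := one_div_le_one_div_of_le h2 h1
  simp only [cutoff]; linarith

lemma exists_cutoff_gt {r : ℝ} (hr : r < 1) : ∃ k : ℕ, r < cutoff k := by
  obtain ⟨k, hk⟩ := exists_nat_one_div_lt (show (0:ℝ) < 1 - r by linarith)
  exact ⟨k, by simp only [cutoff]; linarith⟩

lemma limsup_eq_one_iff {a : ℕ → ℝ} (hbd : ∀ m, a m ≤ 1) :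
    Filter.limsup (fun m => ((a m : ℝ) : EReal)) Filter.atTop = (1 : EReal)
      ↔ ∀ k : ℕ, ∃ m, k ≤ m ∧ cutoff k < a m := by
  have h1E : ((1:ℝ) : EReal) = (1 : EReal) := by norm_num
  constructor
  · intro h k
    by_contra hcon
    push_neg at hcon
    have hev : ∀ᶠ m in Filter.atTop, ((a m : ℝ) : EReal) ≤ ((cutoff k : ℝ) : EReal) := by
      filter_upwards [Filter.eventually_atTop.2 ⟨k, fun m hm => hcon m hm⟩] with m hm
      exact EReal.coe_le_coe_iff.2 hm
    have := Filter.limsup_le_of_le (by isBoundedDefault) hev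
    rw [h] at this
    have hlt : ((cutoff k : ℝ) : EReal) < ((1:ℝ) : EReal) := EReal.coe_lt_coe_iff.2 (cutoff_lt_one k)
    rw [h1E] at hlt
    exact absurd this (not_le.2 hlt)
  · intro h
    have hup : Filter.limsup (fun m => ((a m : ℝ) : EReal)) Filter.atTop ≤ (1 : EReal) := by
      apply Filter.limsup_le_of_le (by isBoundedDefault)
      filter_upwards with m
      rw [← h1E]
      exact EReal.coe_le_coe_iff.2 (hbd m)
    have hlo : ∀ k : ℕ, ((cutoff k : ℝ) : EReal)
        ≤ Filter.limsup (fun m => ((a m : ℝ) : EReal)) Filter.atTop := by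
      intro k
      apply Filter.le_limsup_of_frequently_le ?_ (by isBoundedDefault)
      rw [Filter.frequently_atTop]
      intro l
      obtain ⟨m, hm, hme⟩ := h (max k l)
      refine ⟨m, le_trans (le_max_right _ _) hm, ?_⟩
      exact EReal.coe_le_coe_iff.2 ((cutoff_mono (le_max_left k l)).trans hme.le)
    refine le_antisymm hup ?_
    by_contra hcon
    have hlt : Filter.limsup (fun m => ((a m : ℝ) : EReal)) Filter.atTop < 1 := not_le.1 hcon
    obtain ⟨r, hr1, hr2⟩ := EReal.exists_between_coe_real hlt
    have hr1' : r < 1 := by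
      rw [← h1E] at hr2
      exact EReal.coe_lt_coe_iff.1 hr2
    obtain ⟨k, hk⟩ := exists_cutoff_gt hr1'
    have := (hlo k).trans_lt hr1
    exact absurd (EReal.coe_lt_coe_iff.1 (lt_trans (EReal.coe_lt_coe_iff.2 hk) this))
      (lt_irrefl r).elim
  -- unreachable

lemma liminf_eq_negone_iff {a : ℕ → ℝ} (hbd : ∀ m, -1 ≤ a m) :
    Filter.liminf (fun m => ((a m : ℝ) : EReal)) Filter.atTop = (-1 : EReal)
      ↔ ∀ k : ℕ, ∃ m, k ≤ m ∧ a m < -(cutoff k) := by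
  have h1E : ((-1:ℝ) : EReal) = (-1 : EReal) := by norm_num
  constructor
  · intro h k
    by_contra hcon
    push_neg at hcon
    have hev : ∀ᶠ m in Filter.atTop, ((-(cutoff k) : ℝ) : EReal) ≤ ((a m : ℝ) : EReal) := by
      filter_upwards [Filter.eventually_atTop.2 ⟨k, fun m hm => hcon m hm⟩] with m hm
      exact EReal.coe_le_coe_iff.2 hm
    have := Filter.le_liminf_of_le (by isBoundedDefault) hev
    rw [h] at this
    have hlt : ((-1:ℝ) : EReal) < ((-(cutoff k) : ℝ) : EReal) := by
      apply EReal.coe_lt_coe_iff.2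
      have := cutoff_lt_one k; linarith
    rw [h1E] at hlt
    exact absurd this (not_le.2 hlt)
  · intro h
    have hup : (-1 : EReal) ≤ Filter.liminf (fun m => ((a m : ℝ) : EReal)) Filter.atTop := by
      apply Filter.le_liminf_of_le (by isBoundedDefault)
      filter_upwards with m
      rw [← h1E]
      exact EReal.coe_le_coe_iff.2 (hbd m)
    have hlo : ∀ k : ℕ, Filter.liminf (fun m => ((a m : ℝ) : EReal)) Filter.atTop
        ≤ ((-(cutoff k) : ℝ) : EReal) := by
      intro k
      apply Filter.liminf_le_of_frequently_le ?_ (by isBoundedDefault)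
      rw [Filter.frequently_atTop]
      intro l
      obtain ⟨m, hm, hme⟩ := h (max k l)
      refine ⟨m, le_trans (le_max_right _ _) hm, ?_⟩
      apply EReal.coe_le_coe_iff.2
      have := cutoff_mono (le_max_left k l)
      linarith [hme.le]
    refine le_antisymm ?_ hup
    by_contra hcon
    have hlt : (-1 : EReal) < Filter.liminf (fun m => ((a m : ℝ) : EReal)) Filter.atTop :=
      not_le.1 hcon
    obtain ⟨r, hr1, hr2⟩ := EReal.exists_between_coe_real hlt
    have hr1' : -1 < r := by
      rw [← h1E] at hr1
      exact EReal.coe_lt_coe_iff.1 hr1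
    obtain ⟨k, hk⟩ := exists_cutoff_gt (show -r < 1 by linarith)
    have hk' : -(cutoff k) < r := by linarith
    have := hr2.trans_le (hlo k)
    exact absurd (EReal.coe_lt_coe_iff.1 (lt_trans this (EReal.coe_lt_coe_iff.2 hk')))
      (lt_irrefl r).elim

lemma oscFullAt_iff {f : ℕ → Set Ω → ℝ} {x : Kt D} (hbd : ∀ m, |f m (x.1 m)| ≤ 1) :
    OscFullAt D f x ↔ ∀ k : ℕ, (∃ m, k ≤ m ∧ cutoff k < f m (x.1 m))
      ∧ (∃ m, k ≤ m ∧ f m (x.1 m) < -(cutoff k)) := by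
  rw [OscFullAt, limsup_eq_one_iff (fun m => (abs_le.1 (hbd m)).2),
    liminf_eq_negone_iff (fun m => (abs_le.1 (hbd m)).1)]
  constructor
  · rintro ⟨h1, h2⟩ k; exact ⟨h1 k, h2 k⟩
  · intro h; exact ⟨fun k => (h k).1, fun k => (h k).2⟩

/-- The key oscillation property of a martingale: below every atom there are atoms with
values arbitrarily close to `1` and to `-1`, at arbitrarily deep levels. -/
def OscProp (D : ℕ → Finset (Set Ω)) (f : ℕ → Set Ω → ℝ) : Prop :=
  ∀ (n : ℕ), ∀ A ∈ D n, ∀ k : ℕ,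
    (∃ m, k ≤ m ∧ ∃ B ∈ D m, B ⊆ A ∧ cutoff k < f m B) ∧
    (∃ m, k ≤ m ∧ ∃ B ∈ D m, B ⊆ A ∧ f m B < -(cutoff k))

end Osc

/-! ### Chains through prescribed atoms; slices are dense Gδ -/

section Chains
variable [MeasurableSpace Ω] {P : Measure Ω} {D : ℕ → Finset (Set Ω)}

lemma kt_of_consecutive {x : ℕ → Set Ω} (h1 : ∀ l, x l ∈ D l) (h2 : ∀ l, x (l+1) ⊆ x l) :
    (∀ n, x n ∈ D n) ∧ ∀ n m : ℕ, n ≤ m → x m ⊆ x n := by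
  refine ⟨h1, fun n m hnm => ?_⟩
  induction m, hnm using Nat.le_induction with
  | base => exact subset_rfl
  | succ m hnm ih => exact (h2 m).trans ih

lemma chain_exists (hp : IsPartitionSeq D) (B : ℕ → Set Ω) (m : ℕ → ℕ)
    (hm : ∀ i, i ≤ m i) (hB : ∀ i, B i ∈ D (m i)) (hsub : ∀ i, B (i+1) ⊆ B i) :
    ∃ x : Kt D, ∀ i, x.1 (m i) = B i := by
  have hnested : ∀ i j, i ≤ j → B j ⊆ B i := by
    intro i j hij
    induction j, hij using Nat.le_induction with
    | base => exact subset_rfl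
    | succ j hij ih => exact (hsub j).trans ih
  set y : ℕ → Set Ω := fun l => ancAt D l (B l) with hy
  have hex : ∀ l, ∃ A ∈ D l, B l ⊆ A := fun l => exists_anc hp (hm l) (hB l)
  have hyD : ∀ l, y l ∈ D l := fun l => (ancAt_spec (hex l)).1
  have hyB : ∀ l, B l ⊆ y l := fun l => (ancAt_spec (hex l)).2
  have hycons : ∀ l, y (l+1) ⊆ y l := by
    intro l
    obtain ⟨A', hA', hsubA'⟩ := exists_anc hp (Nat.le_succ l) (hyD (l+1))
    have hBne : (B (l+1)).Nonempty := hp.2.1 _ _ (hB (l+1))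
    have hA'eq : A' = y l := by
      apply atom_eq_of_subset hp hA' (hyD l) hBne
      · exact ((hyB (l+1)).trans hsubA')
      · exact (hsub l).trans (hyB l)
    rw [← hA'eq]
    exact hsubA'
  obtain ⟨hKt1, hKt2⟩ := kt_of_consecutive hyD hycons
  refine ⟨⟨y, hKt1, hKt2⟩, fun i => ?_⟩
  show ancAt D (m i) (B (m i)) = B i
  exact ancAt_eq hp (hp.2.1 _ _ (hB (m i))) (hB i) (hnested i (m i) (hm i))

lemma kt_through_atom (hp : IsPartitionSeq D) {n : ℕ} {A : Set Ω} (hA : A ∈ D n) :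
    ∃ x : Kt D, x.1 n = A := by
  have hstep : ∀ (i : ℕ) (C : Set Ω), C ∈ D i → ∃ C', C' ∈ D (i+1) ∧ C' ⊆ C := by
    intro i C hC
    obtain ⟨C', hC'⟩ := children_nonempty hp hC
    exact ⟨C', (mem_children.1 hC').1, (mem_children.1 hC').2⟩
  choose ch hch1 hch2 using hstep
  let c : (i : ℕ) → {C : Set Ω // C ∈ D (n + i) ∧ C ⊆ A} := fun i => Nat.rec
    ⟨A, hA, subset_rfl⟩
    (fun i p => ⟨ch (n+i) p.1 p.2.1, hch1 (n+i) p.1 p.2.1, (hch2 (n+i) p.1 p.2.1).trans p.2.2⟩) i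
  obtain ⟨x, hx⟩ := chain_exists hp (fun i => (c i).1) (fun i => n + i)
    (fun i => Nat.le_add_left i n) (fun i => (c i).2.1)
    (fun i => hch2 (n+i) (c i).1 (c i).2.1)
  exact ⟨x, hx 0⟩

lemma isOpen_slice_gt (f : ℕ → Set Ω → ℝ) (k : ℕ) (c : ℝ) :
    IsOpen {x : Kt D | ∃ m, k ≤ m ∧ c < f m (x.1 m)} := by
  have key : {x : Kt D | ∃ m, k ≤ m ∧ c < f m (x.1 m)} =
      ⋃ (m : ℕ), ⋃ (_ : k ≤ m), ⋃ B ∈ (D m).filter (fun B => c < f m B),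
        {x : Kt D | x.1 m = B} := by
    ext x
    simp only [Set.mem_setOf_eq, Set.mem_iUnion, Finset.mem_filter]
    constructor
    · rintro ⟨m, hm, hc⟩
      exact ⟨m, hm, x.1 m, ⟨x.2.1 m, hc⟩, rfl⟩
    · rintro ⟨m, hm, B, ⟨hB, hc⟩, hx⟩
      exact ⟨m, hm, by rwa [hx]⟩
  rw [key]
  exact isOpen_iUnion fun m => isOpen_iUnion fun _ => isOpen_biUnion fun B _ => isOpen_kt_eq m B

lemma isOpen_slice_lt (f : ℕ → Set Ω → ℝ) (k : ℕ) (c : ℝ) :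
    IsOpen {x : Kt D | ∃ m, k ≤ m ∧ f m (x.1 m) < c} := by
  have key : {x : Kt D | ∃ m, k ≤ m ∧ f m (x.1 m) < c} =
      ⋃ (m : ℕ), ⋃ (_ : k ≤ m), ⋃ B ∈ (D m).filter (fun B => f m B < c),
        {x : Kt D | x.1 m = B} := by
    ext x
    simp only [Set.mem_setOf_eq, Set.mem_iUnion, Finset.mem_filter]
    constructor
    · rintro ⟨m, hm, hc⟩
      exact ⟨m, hm, x.1 m, ⟨x.2.1 m, hc⟩, rfl⟩
    · rintro ⟨m, hm, B, ⟨hB, hc⟩, hx⟩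
      exact ⟨m, hm, by rwa [hx]⟩
  rw [key]
  exact isOpen_iUnion fun m => isOpen_iUnion fun _ => isOpen_biUnion fun B _ => isOpen_kt_eq m B

lemma slice_isGδ [IsProbabilityMeasure P] (hp : IsPartitionSeq D) (hA : AssumptionA P D)
    (f : MartBall P D ∞) : IsGδ {x : Kt D | OscFullAt D f.1 x} := by
  have key : {x : Kt D | OscFullAt D f.1 x} = ⋂ (k : ℕ),
      ({x : Kt D | ∃ m, k ≤ m ∧ cutoff k < f.1 m (x.1 m)} ∩
       {x : Kt D | ∃ m, k ≤ m ∧ f.1 m (x.1 m) < -(cutoff k)}) := by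
    ext x
    rw [Set.mem_setOf_eq, oscFullAt_iff (fun m => martball_abs_le hp hA f (x.2.1 m))]
    simp only [Set.mem_iInter, Set.mem_inter_iff, Set.mem_setOf_eq]
  rw [key]
  exact IsGδ.iInter fun k =>
    ((isOpen_slice_gt f.1 k (cutoff k)).inter (isOpen_slice_lt f.1 k (-(cutoff k)))).isGδ

lemma slice_dense [IsProbabilityMeasure P] (hp : IsPartitionSeq D) (hA : AssumptionA P D)
    (f : MartBall P D ∞) (hosc : OscProp D f.1) : Dense {x : Kt D | OscFullAt D f.1 x} := by
  apply kt_dense hp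
  intro x0 N
  -- recursive construction of nested witnesses
  have hstep : ∀ (i m : ℕ) (B : Set Ω), B ∈ D m → ∃ (m' : ℕ) (B' : Set Ω),
      B' ∈ D m' ∧ B' ⊆ B ∧ m < m' ∧
      (i % 2 = 0 → cutoff i < f.1 m' B') ∧ (i % 2 = 1 → f.1 m' B' < -(cutoff i)) := by
    intro i m B hB
    rcases Nat.even_or_odd i with he | ho
    · obtain ⟨m', hm', B', hB', hsub, hval⟩ := (hosc m B hB (max (m+1) i)).1
      refine ⟨m', B', hB', hsub, lt_of_lt_of_le (Nat.lt_succ_self m)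
        (le_trans (le_max_left _ _) hm'), fun _ => ?_, fun hodd => ?_⟩
      · exact lt_of_le_of_lt (cutoff_mono (le_max_right (m+1) i)) hval
      · exact absurd hodd (by rcases he with ⟨j,hj⟩; omega)
    · obtain ⟨m', hm', B', hB', hsub, hval⟩ := (hosc m B hB (max (m+1) i)).2
      refine ⟨m', B', hB', hsub, lt_of_lt_of_le (Nat.lt_succ_self m)
        (le_trans (le_max_left _ _) hm'), fun hev => ?_, fun _ => ?_⟩
      · exact absurd hev (by rcases ho with ⟨j,hj⟩; omega)
      · have := cutoff_mono (le_max_right (m+1) i)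
        calc f.1 m' B' < -(cutoff (max (m+1) i)) := hval
        _ ≤ -(cutoff i) := by linarith
  choose M W hW hWsub hWlt hWup hWdn using hstep
  let s : (i : ℕ) → {p : ℕ × Set Ω // p.2 ∈ D p.1} := fun i => Nat.rec
    ⟨(N, x0.1 N), x0.2.1 N⟩
    (fun i p => ⟨(M i p.1.1 p.1.2 p.2, W i p.1.1 p.1.2 p.2), hW i p.1.1 p.1.2 p.2⟩) i
  have hs_succ : ∀ i, (s (i+1)).1 = (M i (s i).1.1 (s i).1.2 (s i).2,
      W i (s i).1.1 (s i).1.2 (s i).2) := fun i => rfl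
  have hsub : ∀ i, (s (i+1)).1.2 ⊆ (s i).1.2 := fun i => hWsub i _ _ _
  have hlt : ∀ i, (s i).1.1 < (s (i+1)).1.1 := fun i => hWlt i _ _ _
  have hge : ∀ i, i ≤ (s i).1.1 := by
    intro i
    induction i with
    | zero => exact Nat.zero_le _
    | succ i ih => exact Nat.lt_of_le_of_lt ih (hlt i)
  obtain ⟨x, hx⟩ := chain_exists hp (fun i => (s i).1.2) (fun i => (s i).1.1) hge
    (fun i => (s i).2) hsub
  refine ⟨x, ?_, hx 0⟩
  rw [Set.mem_setOf_eq, oscFullAt_iff (fun m => martball_abs_le hp hA f (x.2.1 m))]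
  intro k
  constructor
  · refine ⟨(s (2*k+1)).1.1, le_trans (by omega) (hge (2*k+1)), ?_⟩
    rw [hx (2*k+1)]
    have := hWup (2*k) (s (2*k)).1.1 (s (2*k)).1.2 (s (2*k)).2 (by omega)
    exact lt_of_le_of_lt (cutoff_mono (by omega : k ≤ 2*k)) this
  · refine ⟨(s (2*k+2)).1.1, le_trans (by omega) (hge (2*k+2)), ?_⟩
    rw [hx (2*k+2)]
    have := hWdn (2*k+1) (s (2*k+1)).1.1 (s (2*k+1)).1.2 (s (2*k+1)).2 (by omega)
    have hmono := cutoff_mono (by omega : k ≤ 2*k+1)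
    calc f.1 _ _ < -(cutoff (2*k+1)) := this
    _ ≤ -(cutoff k) := by linarith

end Chains

/-! ### The oscillating martingale construction: step definitions -/

section Construction
variable [MeasurableSpace Ω] {P : Measure Ω} {D : ℕ → Finset (Set Ω)}

/-- Margins `θ / 2^j`. -/
def eps (θ : ℝ) (j : ℕ) : ℝ := θ / 2^j

lemma eps_pos {θ : ℝ} (hθ : 0 < θ) (j : ℕ) : 0 < eps θ j := by
  have : (0:ℝ) < 2^j := by positivity
  exact div_pos hθ this

lemma eps_succ (θ : ℝ) (j : ℕ) : eps θ (j+1) = eps θ j / 2 := by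
  rw [eps, eps, pow_succ]
  ring

lemma eps_anti {θ : ℝ} (hθ : 0 < θ) {j l : ℕ} (h : j ≤ l) : eps θ l ≤ eps θ j := by
  apply div_le_div_of_nonneg_left hθ.le (by positivity)
  exact pow_le_pow_right₀ (by norm_num) h

lemma eps_le {θ : ℝ} (hθ : 0 < θ) {j : ℕ} (hj : 1 ≤ j) : eps θ j ≤ θ / 2 := by
  have := eps_anti hθ hj
  rwa [show eps θ 1 = θ / 2 by rw [eps]; norm_num] at this

/-- The chosen (minimal-measure) child of an atom. -/
def chosen (P : Measure Ω) (D : ℕ → Finset (Set Ω)) (m : ℕ) (A : Set Ω) : Set Ω :=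
  if h : (children D m A).Nonempty then
    (Finset.exists_min_image (children D m A) (fun B => (P B).toReal) h).choose else ∅

lemma chosen_spec {m : ℕ} {A : Set Ω} (h : (children D m A).Nonempty) :
    chosen P D m A ∈ children D m A ∧
      ∀ B ∈ children D m A, (P (chosen P D m A)).toReal ≤ (P B).toReal := by
  rw [chosen, dif_pos h]
  obtain ⟨h1, h2⟩ := (Finset.exists_min_image (children D m A) (fun B => (P B).toReal) h).choose_spec
  exact ⟨h1, h2⟩

/-- The relative weight of the chosen child. -/
def lam (P : Measure Ω) (D : ℕ → Finset (Set Ω)) (m : ℕ) (A : Set Ω) : ℝ :=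
  (P (chosen P D m A)).toReal / (P A).toReal

/-- One step of the state machine.  The state is `(value, phase, direction)`. -/
def stepSt (θ : ℝ) (l : ℝ) (s : ℝ × ℕ × Bool) (isChosen : Bool) : ℝ × ℕ × Bool :=
  let v := s.1; let j := s.2.1; let d := s.2.2
  let sg : ℝ := if d then 1 else -1
  let w := sg * v
  let a := (w + 1 - 2 * eps θ (j+1)) / 2
  let w' := min (1 - 2 * eps θ j) (w + a)
  if isChosen then
    if 1 - 2 * eps θ j ≤ w + a then (sg * (1 - 2 * eps θ j), j+1, !d)
    else (sg * (w + a), j, d)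
  else (sg * ((w - l * w') / (1 - l)), j+2, d)

/-- Invariant of the state machine. -/
def InvSt (θ : ℝ) (s : ℝ × ℕ × Bool) : Prop := 1 ≤ s.2.1 ∧ |s.1| ≤ 1 - 2 * eps θ s.2.1

lemma invSt_norm {θ : ℝ} (hθ : 0 < θ) {s : ℝ × ℕ × Bool} (h : InvSt θ s) : |s.1| ≤ 1 := by
  have := eps_pos hθ s.2.1
  have := h.2
  linarith

section StepFacts
variable {θ l : ℝ} {s : ℝ × ℕ × Bool}
  (hθ : 0 < θ) (hθ2 : θ ≤ 1/2) (hl : 0 < l) (hl2 : l ≤ 1/2) (hs : InvSt θ s)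

lemma stepSt_inv (hθ : 0 < θ) (hθ2 : θ ≤ 1/2) (hl : 0 < l) (hl2 : l ≤ 1/2)
    (hs : InvSt θ s) (b : Bool) : InvSt θ (stepSt θ l s b) := by
  obtain ⟨v, j, d⟩ := s
  obtain ⟨hj, hv⟩ := hs
  set sg : ℝ := if d then 1 else -1 with hsg
  have hsgabs : |sg| = 1 := by rcases d with _|_ <;> simp [hsg]
  have hsg2 : sg * sg = 1 := by rcases d with _|_ <;> simp [hsg]
  set w := sg * v with hw
  have hwabs : |w| ≤ 1 - 2 * eps θ j := by
    rw [hw, abs_mul, hsgabs, one_mul]; exact hv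
  have hepsj := eps_pos hθ j
  have hepsj1 := eps_pos hθ (j+1)
  have hepsj2 := eps_pos hθ (j+2)
  have hejle : 2 * eps θ j ≤ 1/2 := by have := eps_le hθ hj; linarith
  have he1 : eps θ (j+1) = eps θ j / 2 := eps_succ θ j
  have he2 : eps θ (j+2) = eps θ (j+1) / 2 := eps_succ θ (j+1)
  have hwlo : -(1 - 2*eps θ j) ≤ w := (abs_le.1 hwabs).1
  have hwhi : w ≤ 1 - 2*eps θ j := (abs_le.1 hwabs).2
  set a := (w + 1 - 2 * eps θ (j+1)) / 2 with ha
  have hapos : eps θ (j+1) ≤ a := by rw [ha, he1]; linarith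
  have ha0 : 0 ≤ a := le_trans hepsj1.le hapos
  set w' := min (1 - 2 * eps θ j) (w + a) with hw'
  have hw'ge : w ≤ w' := le_min hwhi (by linarith)
  have hw'le : w' ≤ w + a := min_le_right _ _
  have habs_of : ∀ z : ℝ, |z| ≤ 1 - 2 * eps θ j → |sg * z| ≤ 1 - 2 * eps θ j := by
    intro z hz; rwa [abs_mul, hsgabs, one_mul]
  rw [stepSt]
  simp only
  rcases b with _|_
  · -- sibling
    simp only [Bool.false_eq_true, if_false]
    set u := (w - l * w') / (1 - l) with hu
    have h1l : 0 < 1 - l := by linarith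
    have hule : u ≤ w := by
      rw [hu, div_le_iff₀ h1l]
      nlinarith
    have huge : w - a ≤ u := by
      rw [hu, le_div_iff₀ h1l]
      nlinarith
    constructor
    · show 1 ≤ j + 2; omega
    · show |sg * u| ≤ 1 - 2 * eps θ (j+2)
      rw [abs_mul, hsgabs, one_mul]
      rw [abs_le]
      constructor
      · have : -(1) + (3/2) * eps θ j ≤ u := by
          rw [ha, he1] at huge
          linarith
        have : -(1 - 2 * eps θ (j+2)) ≤ u := by
          rw [he2, he1] at *
          linarith
        exact this
      · have : u ≤ 1 - 2 * eps θ (j+2) := by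
          have hj2 : eps θ (j+2) ≤ eps θ j := eps_anti hθ (by omega)
          linarith
        exact this
  · -- chosen child
    simp only [if_true]
    by_cases hcap : 1 - 2 * eps θ j ≤ w + a
    · rw [if_pos hcap]
      constructor
      · show 1 ≤ j + 1; omega
      · show |sg * (1 - 2 * eps θ j)| ≤ 1 - 2 * eps θ (j+1)
        rw [abs_mul, hsgabs, one_mul]
        have hje : eps θ j = 2 * eps θ (j+1) := by rw [he1]; ring
        rw [abs_le]
        constructor <;> nlinarith [eps_pos hθ (j+1)]
    · rw [if_neg hcap]
      constructor
      · exact hj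
      · show |sg * (w + a)| ≤ 1 - 2 * eps θ j
        rw [abs_mul, hsgabs, one_mul, abs_le]
        constructor <;> linarith

end StepFacts

end Construction

section Construction2
variable [MeasurableSpace Ω] {P : Measure Ω} {D : ℕ → Finset (Set Ω)}

lemma toReal_sum_children [IsProbabilityMeasure P] (hp : IsPartitionSeq D) {m : ℕ} {A : Set Ω}
    (hAm : A ∈ D m) :
    ∑ B ∈ children D m A, (P B).toReal = (P A).toReal := by
  rw [← ENNReal.toReal_sum (fun B _ => measure_ne_top P B)]
  rw [sum_children_measure hp hAm]

lemma split_facts [IsProbabilityMeasure P] (hp : IsPartitionSeq D) (hA : AssumptionA P D)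
    {m : ℕ} {A : Set Ω} (hAm : A ∈ D m) (hsplit : (children D m A).card ≠ 1) :
    0 < lam P D m A ∧ lam P D m A ≤ 1/2 ∧ chosen P D m A ∈ children D m A ∧
      0 < (P A).toReal := by
  have hne := children_nonempty hp hAm
  obtain ⟨hch, hmin⟩ := chosen_spec (P := P) hne
  have hpa : 0 < (P A).toReal := ENNReal.toReal_pos (hA.1 m A hAm).ne' (measure_ne_top P A)
  have hpc : 0 < (P (chosen P D m A)).toReal :=
    ENNReal.toReal_pos (hA.1 (m+1) _ (mem_children.1 hch).1).ne' (measure_ne_top P _)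
  have hcard : 2 ≤ (children D m A).card := two_le_card_children hp hAm hsplit
  obtain ⟨B', hB', hBne⟩ := Finset.exists_mem_ne (s := children D m A) (by omega) (chosen P D m A)
  have hsum := toReal_sum_children hp hAm (P := P)
  have hpair : (P (chosen P D m A)).toReal + (P B').toReal
      ≤ ∑ B ∈ children D m A, (P B).toReal := by
    have hps : ∑ B ∈ ({chosen P D m A, B'} : Finset (Set Ω)), (P B).toReal
        = (P (chosen P D m A)).toReal + (P B').toReal := Finset.sum_pair (Ne.symm hBne)
    rw [← hps]
    apply Finset.sum_le_sum_of_subset_of_nonneg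
    · intro C hC
      simp only [Finset.mem_insert, Finset.mem_singleton] at hC
      rcases hC with rfl | rfl
      · exact hch
      · exact hB'
    · intro C _ _; exact ENNReal.toReal_nonneg
  have h2pc : 2 * (P (chosen P D m A)).toReal ≤ (P A).toReal := by
    have := hmin B' hB'
    linarith [hsum ▸ hpair]
  refine ⟨div_pos hpc hpa, ?_, hch, hpa⟩
  rw [lam, div_le_iff₀ hpa]
  linarith

lemma stepSt_chosen_val (θ l : ℝ) (s : ℝ × ℕ × Bool) :
    (stepSt θ l s true).1 = (if s.2.2 then (1:ℝ) else -1) *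
      (min (1 - 2 * eps θ s.2.1) ((if s.2.2 then (1:ℝ) else -1) * s.1 +
        ((if s.2.2 then (1:ℝ) else -1) * s.1 + 1 - 2 * eps θ (s.2.1+1)) / 2)) := by
  obtain ⟨v, j, d⟩ := s
  rw [stepSt]
  simp only [if_true]
  by_cases hcap : 1 - 2 * eps θ j ≤ (if d then (1:ℝ) else -1) * v +
      ((if d then (1:ℝ) else -1) * v + 1 - 2 * eps θ (j+1)) / 2
  · rw [if_pos hcap, min_eq_left hcap]
  · rw [if_neg hcap, min_eq_right (le_of_not_ge hcap)]

lemma step_avg [IsProbabilityMeasure P] (hp : IsPartitionSeq D) (hA : AssumptionA P D)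
    {θ : ℝ} {m : ℕ} {A : Set Ω} (hAm : A ∈ D m) (hsplit : (children D m A).card ≠ 1)
    (s : ℝ × ℕ × Bool) :
    ∑ B ∈ children D m A, (stepSt θ (lam P D m A) s (decide (B = chosen P D m A))).1
      * (P B).toReal = s.1 * (P A).toReal := by
  obtain ⟨hl, hl2, hch, hpa⟩ := split_facts hp hA hAm hsplit
  obtain ⟨v, j, d⟩ := s
  set sg : ℝ := if d then 1 else -1 with hsg
  have hsg2 : sg * sg = 1 := by rcases d with _|_ <;> simp [hsg]
  set w : ℝ := sg * v with hw
  set a : ℝ := (w + 1 - 2 * eps θ (j+1)) / 2 with ha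
  set w' : ℝ := min (1 - 2 * eps θ j) (w + a) with hw'
  set l : ℝ := lam P D m A with hliam
  set u : ℝ := (w - l * w') / (1 - l) with hu
  have h1l : 0 < 1 - l := by linarith
  have huml : u * (1 - l) = w - l * w' := div_mul_cancel₀ _ h1l.ne'
  have hvw : v = sg * w := by rw [hw, ← mul_assoc, hsg2, one_mul]
  set pc : ℝ := (P (chosen P D m A)).toReal with hpc
  set pa : ℝ := (P A).toReal with hpa'
  have hlpc : pc = l * pa := by
    rw [hliam, lam, div_mul_cancel₀]
    exact hpa.ne'
  rw [← Finset.add_sum_erase _ _ hch]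
  have hchval : (stepSt θ l ((v, j, d)) (decide ((chosen P D m A) = chosen P D m A))).1
      = sg * w' := by
    rw [decide_eq_true (by rfl)]
    rw [stepSt_chosen_val]
    try rfl
  rw [hchval]
  have hothers : ∀ B ∈ (children D m A).erase (chosen P D m A),
      (stepSt θ l ((v, j, d)) (decide (B = chosen P D m A))).1 * (P B).toReal
        = (sg * u) * (P B).toReal := by
    intro B hB
    have hBne : B ≠ chosen P D m A := (Finset.mem_erase.1 hB).1
    rw [decide_eq_false hBne]
    rfl
  rw [Finset.sum_congr rfl hothers, ← Finset.mul_sum]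
  have herase : ∑ B ∈ (children D m A).erase (chosen P D m A), (P B).toReal = pa - pc := by
    have := Finset.add_sum_erase _ (fun B => (P B).toReal) hch
    have hsum := toReal_sum_children hp hAm (P := P)
    rw [hsum] at this
    linarith [this]
  rw [herase]
  try rw [← hpc]
  linear_combination sg * pa * huml + (sg * w' - sg * u) * hlpc + pa * hvw + 2 * v * pa * hsg2

/-- The state machine along the filtration, started at level `N` from `(1-θ) g`. -/
def sig (P : Measure Ω) (D : ℕ → Finset (Set Ω)) (θ : ℝ) (g : ℕ → Set Ω → ℝ) (N : ℕ) :
    ℕ → Set Ω → ℝ × ℕ × Bool := fun k => Nat.rec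
  (fun A => ((1-θ) * g N A, 1, true))
  (fun k prev B =>
    if (children D (N+k) (ancAt D (N+k) B)).card = 1 then prev (ancAt D (N+k) B)
    else stepSt θ (lam P D (N+k) (ancAt D (N+k) B)) (prev (ancAt D (N+k) B))
      (decide (B = chosen P D (N+k) (ancAt D (N+k) B)))) k

lemma sig_zero (θ : ℝ) (g : ℕ → Set Ω → ℝ) (N : ℕ) (A : Set Ω) :
    sig P D θ g N 0 A = ((1-θ) * g N A, 1, true) := rfl

lemma sig_succ (θ : ℝ) (g : ℕ → Set Ω → ℝ) (N k : ℕ) (B : Set Ω) :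
    sig P D θ g N (k+1) B =
      if (children D (N+k) (ancAt D (N+k) B)).card = 1 then sig P D θ g N k (ancAt D (N+k) B)
      else stepSt θ (lam P D (N+k) (ancAt D (N+k) B)) (sig P D θ g N k (ancAt D (N+k) B))
        (decide (B = chosen P D (N+k) (ancAt D (N+k) B))) := rfl

lemma parent_spec (hp : IsPartitionSeq D) {k : ℕ} {B : Set Ω} (hB : B ∈ D (k+1)) :
    ancAt D k B ∈ D k ∧ B ⊆ ancAt D k B := by
  obtain ⟨C, hC, hBC⟩ := hp.2.2.2.2 k B hB
  exact ancAt_spec ⟨C, hC, hBC⟩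

lemma sig_inv [IsProbabilityMeasure P] (hp : IsPartitionSeq D) (hA : AssumptionA P D)
    {θ : ℝ} (hθ : 0 < θ) (hθ2 : θ ≤ 1/2) {g : ℕ → Set Ω → ℝ} {N : ℕ}
    (hgb : ∀ A ∈ D N, |g N A| ≤ 1) :
    ∀ k, ∀ A ∈ D (N+k), InvSt θ (sig P D θ g N k A) := by
  intro k
  induction k with
  | zero =>
    intro A hAm
    refine ⟨le_rfl, ?_⟩
    have h1 : |(1-θ) * g N A| ≤ (1-θ) := by
      rw [abs_mul, abs_of_nonneg (by linarith : (0:ℝ) ≤ 1-θ)]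
      have := hgb A (by simpa using hAm)
      nlinarith [abs_nonneg (g N A)]
    have he : eps θ 1 = θ/2 := by rw [eps]; norm_num
    calc |(sig P D θ g N 0 A).1| = |(1-θ) * g N A| := rfl
    _ ≤ 1-θ := h1
    _ = 1 - 2 * eps θ 1 := by rw [he]; ring
  | succ k ih =>
    intro B hB
    have hB' : B ∈ D (N+k+1) := hB
    obtain ⟨hpar, hsubpar⟩ := parent_spec hp hB'
    rw [sig_succ]
    by_cases hcard : (children D (N+k) (ancAt D (N+k) B)).card = 1
    · rw [if_pos hcard]
      exact ih _ hpar
    · rw [if_neg hcard]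
      obtain ⟨hl, hl2, _, _⟩ := split_facts hp hA hpar hcard
      exact stepSt_inv hθ hθ2 hl hl2 (ih _ hpar) _

/-- The constructed martingale values. -/
def mart (P : Measure Ω) (D : ℕ → Finset (Set Ω)) (θ : ℝ) (g : ℕ → Set Ω → ℝ) (N : ℕ) :
    ℕ → Set Ω → ℝ := fun m A =>
  if A ∈ D m then (if m ≤ N then (1-θ) * g m A else (sig P D θ g N (m - N) A).1) else 0

lemma mart_eq_sig {θ : ℝ} {g : ℕ → Set Ω → ℝ} {N m : ℕ} {A : Set Ω} (hm : N ≤ m)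
    (hA : A ∈ D m) : mart P D θ g N m A = (sig P D θ g N (m - N) A).1 := by
  rcases eq_or_lt_of_le hm with rfl | hlt
  · rw [mart, if_pos hA, if_pos le_rfl]
    rw [Nat.sub_self]
    rfl
  · rw [mart, if_pos hA, if_neg (by omega)]

lemma mart_abs_le [IsProbabilityMeasure P] (hp : IsPartitionSeq D) (hA : AssumptionA P D)
    {θ : ℝ} (hθ : 0 < θ) (hθ2 : θ ≤ 1/2) {g : ℕ → Set Ω → ℝ} {N : ℕ}
    (hgb : ∀ n, ∀ A ∈ D n, |g n A| ≤ 1) :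
    ∀ m, ∀ A ∈ D m, |mart P D θ g N m A| ≤ 1 := by
  intro m A hAm
  by_cases hm : m ≤ N
  · rw [mart, if_pos hAm, if_pos hm, abs_mul, abs_of_nonneg (by linarith : (0:ℝ) ≤ 1-θ)]
    nlinarith [hgb m A hAm, abs_nonneg (g m A)]
  · push_neg at hm
    rw [mart_eq_sig hm.le hAm]
    have hAm' : A ∈ D (N + (m - N)) := by
      rwa [Nat.add_sub_cancel' hm.le]
    exact invSt_norm hθ (sig_inv hp hA hθ hθ2 (fun B hB => hgb N B hB) (m-N) A hAm')

lemma mart_step [IsProbabilityMeasure P] (hp : IsPartitionSeq D) (hA : AssumptionA P D)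
    {θ : ℝ} {g : ℕ → Set Ω → ℝ} {N : ℕ}
    (hgs : ∀ k, ∀ A ∈ D k, g k A * (P A).toReal
      = ∑ B ∈ children D k A, g (k+1) B * (P B).toReal) :
    ∀ k, ∀ A ∈ D k, mart P D θ g N k A * (P A).toReal
      = ∑ B ∈ children D k A, mart P D θ g N (k+1) B * (P B).toReal := by
  intro k A hAk
  by_cases hk : k + 1 ≤ N
  · -- both levels below N
    have h1 : mart P D θ g N k A = (1-θ) * g k A := by
      rw [mart, if_pos hAk, if_pos (by omega)]
    have h2 : ∀ B ∈ children D k A, mart P D θ g N (k+1) B = (1-θ) * g (k+1) B := by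
      intro B hB
      rw [mart, if_pos (mem_children.1 hB).1, if_pos hk]
    rw [h1, Finset.sum_congr rfl (fun B hB => by rw [h2 B hB])]
    have := hgs k A hAk
    calc (1-θ) * g k A * (P A).toReal = (1-θ) * (g k A * (P A).toReal) := by ring
    _ = (1-θ) * (∑ B ∈ children D k A, g (k+1) B * (P B).toReal) := by rw [this]
    _ = ∑ B ∈ children D k A, (1-θ) * g (k+1) B * (P B).toReal := by
        rw [Finset.mul_sum]; apply Finset.sum_congr rfl; intros; ring
  · -- k ≥ N
    push_neg at hk
    have hNk : N ≤ k := by omega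
    have hsub : k + 1 - N = (k - N) + 1 := by omega
    have hNkk : N + (k - N) = k := Nat.add_sub_cancel' hNk
    have hval : mart P D θ g N k A = (sig P D θ g N (k - N) A).1 := mart_eq_sig hNk hAk
    have hchildval : ∀ B ∈ children D k A,
        mart P D θ g N (k+1) B = (sig P D θ g N ((k-N)+1) B).1 := by
      intro B hB
      rw [mart_eq_sig (by omega) (mem_children.1 hB).1, hsub]
    have hanc : ∀ B ∈ children D k A, ancAt D k B = A := by
      intro B hB
      exact ancAt_eq hp (hp.2.1 (k+1) B (mem_children.1 hB).1) hAk (mem_children.1 hB).2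
    rw [hval, Finset.sum_congr rfl (fun B hB => by rw [hchildval B hB])]
    by_cases hcard : (children D k A).card = 1
    · obtain ⟨hsingle, hAnext⟩ := children_eq_singleton hp hAk hcard
      rw [hsingle, Finset.sum_singleton]
      have : (sig P D θ g N ((k-N)+1) A).1 = (sig P D θ g N (k-N) A).1 := by
        rw [sig_succ, hNkk]
        have hancA : ancAt D k A = A := ancAt_eq hp (hp.2.1 k A hAk) hAk subset_rfl
        rw [hancA, if_pos hcard]
      rw [this]
    · have key : ∀ B ∈ children D k A, (sig P D θ g N ((k-N)+1) B).1
          = (stepSt θ (lam P D k A) (sig P D θ g N (k-N) A)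
              (decide (B = chosen P D k A))).1 := by
        intro B hB
        rw [sig_succ, hNkk, hanc B hB, if_neg hcard]
      rw [Finset.sum_congr rfl (fun B hB => by rw [key B hB])]
      rw [step_avg hp hA hAk hcard]

lemma mart_isMart [IsProbabilityMeasure P] (hp : IsPartitionSeq D) (hA : AssumptionA P D)
    {θ : ℝ} {g : ℕ → Set Ω → ℝ} {N : ℕ}
    (hgs : ∀ k, ∀ A ∈ D k, g k A * (P A).toReal
      = ∑ B ∈ children D k A, g (k+1) B * (P B).toReal) :
    IsMart P D (mart P D θ g N) := by
  apply (isMart_iff_onestep hp).2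
  refine ⟨fun k B hB => by rw [mart, if_neg hB], mart_step hp hA hgs⟩

lemma mart_close {θ : ℝ} (hθ : 0 < θ) {g : ℕ → Set Ω → ℝ} {N : ℕ}
    (hgb : ∀ n, ∀ A ∈ D n, |g n A| ≤ 1) :
    ∀ k, k ≤ N → ∀ A ∈ D k, |mart P D θ g N k A - g k A| ≤ θ := by
  intro k hk A hAk
  rw [mart, if_pos hAk, if_pos hk]
  have : (1-θ) * g k A - g k A = -θ * g k A := by ring
  rw [this, abs_mul, abs_neg, abs_of_nonneg hθ.le]
  nlinarith [hgb k A hAk, abs_nonneg (g k A)]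

end Construction2

section Construction3
variable [MeasurableSpace Ω] {P : Measure Ω} {D : ℕ → Finset (Set Ω)}

lemma stepSt_true_pos {θ l v : ℝ} {j : ℕ} {d : Bool}
    (hcap : 1 - 2*eps θ j ≤ (if d then (1:ℝ) else -1)*v
        + ((if d then (1:ℝ) else -1)*v + 1 - 2*eps θ (j+1))/2) :
    stepSt θ l (v,j,d) true = ((if d then (1:ℝ) else -1) * (1 - 2*eps θ j), j+1, !d) := by
  simp only [stepSt, eq_self_iff_true, if_true]
  rw [if_pos hcap]

lemma stepSt_true_neg {θ l v : ℝ} {j : ℕ} {d : Bool}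
    (hcap : ¬ (1 - 2*eps θ j ≤ (if d then (1:ℝ) else -1)*v
        + ((if d then (1:ℝ) else -1)*v + 1 - 2*eps θ (j+1))/2)) :
    stepSt θ l (v,j,d) true = ((if d then (1:ℝ) else -1) * ((if d then (1:ℝ) else -1)*v
        + ((if d then (1:ℝ) else -1)*v + 1 - 2*eps θ (j+1))/2), j, d) := by
  simp only [stepSt, eq_self_iff_true, if_true]
  rw [if_neg hcap]

lemma stepSt_phase_le (θ l : ℝ) (s : ℝ × ℕ × Bool) (b : Bool) :
    s.2.1 ≤ (stepSt θ l s b).2.1 := by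
  obtain ⟨v, j, d⟩ := s
  rcases b with _|_
  · exact Nat.le_add_right j 2
  · by_cases hcap : 1 - 2*eps θ j ≤ (if d then (1:ℝ) else -1)*v
        + ((if d then (1:ℝ) else -1)*v + 1 - 2*eps θ (j+1))/2
    · rw [stepSt_true_pos hcap]; simp
    · rw [stepSt_true_neg hcap]

/-- The main oscillation lemma: the constructed martingale has the oscillation property. -/
lemma mart_oscProp [IsProbabilityMeasure P] (hp : IsPartitionSeq D) (hA : AssumptionA P D)
    {θ : ℝ} (hθ : 0 < θ) (hθ2 : θ ≤ 1/2) {g : ℕ → Set Ω → ℝ} {N : ℕ}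
    (hgb : ∀ n, ∀ A ∈ D n, |g n A| ≤ 1) :
    OscProp D (mart P D θ g N) := by
  intro n₀ A₀ hA₀ k
  set k₀ := n₀ + 1 with hk₀
  set L := N + k₀ with hL
  obtain ⟨AS, hAS, hASsub⟩ := descend hp (show n₀ ≤ L by omega) hA₀ (hp.2.1 _ _ hA₀)
  -- the chosen chain
  set c : ℕ → Set Ω := fun i => Nat.rec AS
    (fun i ci => if (children D (L+i) ci).card = 1 then ci else chosen P D (L+i) ci) i with hc
  have hc0 : c 0 = AS := rfl
  have hcs : ∀ i, c (i+1) =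
      if (children D (L+i) (c i)).card = 1 then c i else chosen P D (L+i) (c i) := fun i => rfl
  have hcD : ∀ i, c i ∈ D (L+i) ∧ c i ⊆ AS := by
    intro i
    induction i with
    | zero => exact ⟨hAS, subset_rfl⟩
    | succ i ih =>
      rw [hcs i]
      by_cases hcard : (children D (L+i) (c i)).card = 1
      · rw [if_pos hcard]
        exact ⟨(children_eq_singleton hp ih.1 hcard).2, ih.2⟩
      · rw [if_neg hcard]
        have hch := (chosen_spec (P := P) (children_nonempty hp ih.1)).1
        exact ⟨(mem_children.1 hch).1, (mem_children.1 hch).2.trans ih.2⟩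
  -- the state along the chain
  set st : ℕ → ℝ × ℕ × Bool := fun i => sig P D θ g N (k₀ + i) (c i) with hstdef
  have hNL : ∀ i : ℕ, N + (k₀ + i) = L + i := fun i => by omega
  have hstinv : ∀ i, InvSt θ (st i) := by
    intro i
    apply sig_inv hp hA hθ hθ2 (fun B hB => hgb N B hB)
    rw [hNL i]
    exact (hcD i).1
  have hanc : ∀ i, ancAt D (L+i) (c (i+1)) = c i := by
    intro i
    rw [hcs i]
    by_cases hcard : (children D (L+i) (c i)).card = 1
    · rw [if_pos hcard]
      exact ancAt_eq hp (hp.2.1 _ _ (hcD i).1) (hcD i).1 subset_rfl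
    · rw [if_neg hcard]
      have hch := (chosen_spec (P := P) (children_nonempty hp (hcD i).1)).1
      exact ancAt_eq hp (hp.2.1 _ _ (mem_children.1 hch).1) (hcD i).1 (mem_children.1 hch).2
  have hstep1 : ∀ i, (children D (L+i) (c i)).card = 1 → st (i+1) = st i := by
    intro i hcard
    show sig P D θ g N ((k₀ + i) + 1) (c (i+1)) = sig P D θ g N (k₀ + i) (c i)
    rw [sig_succ, hNL i, hanc i, if_pos hcard]
  have hstep2 : ∀ i, (children D (L+i) (c i)).card ≠ 1 →
      st (i+1) = stepSt θ (lam P D (L+i) (c i)) (st i) true := by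
    intro i hcard
    show sig P D θ g N ((k₀ + i) + 1) (c (i+1)) = _
    rw [sig_succ, hNL i, hanc i, if_neg hcard]
    have hceq : c (i+1) = chosen P D (L+i) (c i) := by rw [hcs i, if_neg hcard]
    rw [hceq, decide_eq_true (rfl : chosen P D (L+i) (c i) = chosen P D (L+i) (c i))]
  have hmval : ∀ i, mart P D θ g N (L+i) (c i) = (st i).1 := by
    intro i
    rw [mart_eq_sig (by omega) (hcD i).1]
    congr 2
    omega
  -- infinitely many splits
  have hsplitinf : ∀ i, ∃ i', i ≤ i' ∧ (children D (L+i') (c i')).card ≠ 1 := by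
    intro i
    by_contra hcon
    push_neg at hcon
    have hconst : ∀ d, c (i+d) = c i ∧ c i ∈ D (L+i+d) := by
      intro d
      induction d with
      | zero => exact ⟨rfl, by simpa using (hcD i).1⟩
      | succ d ih =>
        have hcard := hcon (i+d) (by omega)
        rw [ih.1] at hcard
        have hcard' : (children D (L+i+d) (c i)).card = 1 := by
          have : L + (i+d) = L+i+d := by omega
          rwa [this] at hcard
        constructor
        · show c ((i+d)+1) = c i
          rw [hcs (i+d)]
          have : L + (i+d) = L+i+d := by omega
          rw [this, ih.1, if_pos hcard']
        · have := (children_eq_singleton hp ih.2 hcard').2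
          have heq : L+i+d+1 = L+i+(d+1) := by omega
          rwa [heq] at this
    obtain ⟨m, hm, hnot⟩ := hA.2 (L+i) (c i) (hcD i).1
    have := (hconst (m - (L+i))).2
    have heq : L + i + (m - (L+i)) = m := by omega
    rw [heq] at this
    exact hnot this
  -- first split with unchanged state
  have hfirst : ∀ i, ∃ i₁, i ≤ i₁ ∧ st i₁ = st i ∧ (children D (L+i₁) (c i₁)).card ≠ 1 := by
    intro i
    obtain ⟨i', hii', hcard⟩ := hsplitinf i
    have aux : ∀ (e : ℕ), ∀ i i' : ℕ, i ≤ i' → i' - i = e →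
        (children D (L+i') (c i')).card ≠ 1 →
        ∃ i₁, i ≤ i₁ ∧ st i₁ = st i ∧ (children D (L+i₁) (c i₁)).card ≠ 1 := by
      intro e
      induction e with
      | zero =>
        intro i i' h1 h2 h3
        have heq : i' = i := by omega
        rw [heq] at h3
        exact ⟨i, le_rfl, rfl, h3⟩
      | succ e ih =>
        intro i i' h1 h2 h3
        by_cases hcard : (children D (L+i) (c i)).card = 1
        · have hii : i < i' := by
            rcases eq_or_lt_of_le h1 with rfl | h
            · exact absurd hcard h3
            · exact h
          obtain ⟨i₁, g1, g2, g3⟩ := ih (i+1) i' (by omega) (by omega) h3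
          exact ⟨i₁, by omega, g2.trans (hstep1 i hcard), g3⟩
        · exact ⟨i, le_rfl, rfl, hcard⟩
    exact aux (i' - i) i i' hii' rfl hcard
  -- phase termination via a ceiling induction
  have hterm : ∀ i, ∃ i', i < i' ∧
      st i' = ((if (st i).2.2 then (1:ℝ) else -1) * (1 - 2 * eps θ (st i).2.1),
        (st i).2.1 + 1, !(st i).2.2) := by
    have key : ∀ b i, Nat.ceil ((1 - 2 * eps θ (st i).2.1
        - (if (st i).2.2 then (1:ℝ) else -1) * (st i).1) / eps θ ((st i).2.1 + 1)) ≤ b →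
        ∃ i', i < i' ∧
          st i' = ((if (st i).2.2 then (1:ℝ) else -1) * (1 - 2 * eps θ (st i).2.1),
            (st i).2.1 + 1, !(st i).2.2) := by
      intro b
      induction b with
      | zero =>
        intro i hb
        obtain ⟨i₁, hi₁, hsteq, hcard⟩ := hfirst i
        rcases hsti : st i with ⟨v, j, d⟩
        rw [hsti] at hb
        have hinv : InvSt θ (v, j, d) := hsti ▸ hstinv i
        have hvj : |v| ≤ 1 - 2 * eps θ j := hinv.2
        have hwabs : |(if d then (1:ℝ) else -1) * v| ≤ 1 - 2 * eps θ j := by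
          rcases d with _|_ <;> simpa using hvj
        have hX : (1 - 2 * eps θ j - (if d then (1:ℝ) else -1) * v) / eps θ (j+1) ≤ 0 := by
          have := Nat.ceil_le.1 hb
          simpa using this
        have he' := eps_pos hθ (j+1)
        have hwge : 1 - 2 * eps θ j ≤ (if d then (1:ℝ) else -1) * v := by
          by_contra hcon
          push_neg at hcon
          have : 0 < (1 - 2 * eps θ j - (if d then (1:ℝ) else -1) * v) / eps θ (j+1) :=
            div_pos (by linarith) he'
          linarith
        have hage : 0 ≤ ((if d then (1:ℝ) else -1) * v + 1 - 2*eps θ (j+1)) / 2 := by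
          have h1 := (abs_le.1 hwabs).1
          have h2 := eps_succ θ j
          have h3 := eps_pos hθ (j+1)
          nlinarith
        have hcap : 1 - 2*eps θ j ≤ (if d then (1:ℝ) else -1)*v
            + ((if d then (1:ℝ) else -1)*v + 1 - 2*eps θ (j+1))/2 := by linarith
        refine ⟨i₁ + 1, by omega, ?_⟩
        rw [hstep2 i₁ hcard, hsteq, hsti]
        exact stepSt_true_pos hcap
      | succ b ih =>
        intro i hb
        obtain ⟨i₁, hi₁, hsteq, hcard⟩ := hfirst i
        rcases hsti : st i with ⟨v, j, d⟩
        rw [hsti] at hb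
        have hinv : InvSt θ (v, j, d) := hsti ▸ hstinv i
        have hvj : |v| ≤ 1 - 2 * eps θ j := hinv.2
        have hwabs : |(if d then (1:ℝ) else -1) * v| ≤ 1 - 2 * eps θ j := by
          rcases d with _|_ <;> simpa using hvj
        have he' := eps_pos hθ (j+1)
        by_cases hcap : 1 - 2*eps θ j ≤ (if d then (1:ℝ) else -1)*v
            + ((if d then (1:ℝ) else -1)*v + 1 - 2*eps θ (j+1))/2
        · refine ⟨i₁ + 1, by omega, ?_⟩
          rw [hstep2 i₁ hcard, hsteq, hsti]
          exact stepSt_true_pos hcap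
        · -- one more step within the phase
          have hst1 : st (i₁+1) = ((if d then (1:ℝ) else -1) * ((if d then (1:ℝ) else -1)*v
              + ((if d then (1:ℝ) else -1)*v + 1 - 2*eps θ (j+1))/2), j, d) := by
            rw [hstep2 i₁ hcard, hsteq, hsti]
            exact stepSt_true_neg hcap
          have hdd : ∀ x : ℝ, (if d then (1:ℝ) else -1) * ((if d then (1:ℝ) else -1) * x) = x := by
            intro x; rcases d with _|_ <;> simp
          have hage : eps θ (j+1) ≤ ((if d then (1:ℝ) else -1)*v + 1 - 2*eps θ (j+1)) / 2 := by
            have h1 := (abs_le.1 hwabs).1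
            have h2 := eps_succ θ j
            linarith
          have hb' : Nat.ceil ((1 - 2 * eps θ (st (i₁+1)).2.1
              - (if (st (i₁+1)).2.2 then (1:ℝ) else -1) * (st (i₁+1)).1)
                / eps θ ((st (i₁+1)).2.1 + 1)) ≤ b := by
            rw [hst1]
            show Nat.ceil ((1 - 2 * eps θ j
              - (if d then (1:ℝ) else -1) * ((if d then (1:ℝ) else -1) * ((if d then (1:ℝ) else -1)*v
                + ((if d then (1:ℝ) else -1)*v + 1 - 2*eps θ (j+1))/2)))
                / eps θ (j + 1)) ≤ b
            rw [hdd]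
            apply Nat.ceil_le.2
            have hXb : (1 - 2 * eps θ j - (if d then (1:ℝ) else -1) * v) / eps θ (j+1)
                ≤ (b:ℝ) + 1 := by
              have h1 := Nat.le_ceil ((1 - 2 * eps θ j - (if d then (1:ℝ) else -1) * v)
                / eps θ (j+1))
              have h2 : ((Nat.ceil ((1 - 2 * eps θ j - (if d then (1:ℝ) else -1) * v)
                / eps θ (j+1)) : ℕ) : ℝ) ≤ ((b:ℝ) + 1) := by exact_mod_cast hb
              linarith
            rw [div_le_iff₀ he'] at hXb ⊢
            have : eps θ (j+1) * 1 ≤ ((if d then (1:ℝ) else -1)*v + 1 - 2*eps θ (j+1))/2 := by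
              rw [mul_one]; exact hage
            nlinarith [he']
          obtain ⟨i', h1, h2⟩ := ih (i₁+1) hb'
          refine ⟨i', by omega, ?_⟩
          rw [hst1] at h2
          exact h2
    intro i
    exact key (Nat.ceil ((1 - 2 * eps θ (st i).2.1
      - (if (st i).2.2 then (1:ℝ) else -1) * (st i).1) / eps θ ((st i).2.1 + 1))) i le_rfl
  -- completion states occur with arbitrarily high margins, alternating in sign
  have hcompl : ∀ r : ℕ, ∃ (i jj : ℕ) (d' : Bool), r ≤ i ∧ r ≤ jj ∧ 1 ≤ jj ∧
      st i = ((if d' then (1:ℝ) else -1) * (1 - 2*eps θ jj), jj+1, !d') := by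
    intro r
    induction r with
    | zero =>
      obtain ⟨i', h1, h2⟩ := hterm 0
      exact ⟨i', (st 0).2.1, (st 0).2.2, by omega, Nat.zero_le _, (hstinv 0).1, h2⟩
    | succ r ih =>
      obtain ⟨i, jj, d', hi, hjj, hjj1, heq⟩ := ih
      obtain ⟨i', h1, h2⟩ := hterm i
      rw [heq] at h2
      refine ⟨i', jj+1, !d', by omega, by omega, by omega, ?_⟩
      simpa using h2
  -- numeric bound
  have hcut : ∀ jj : ℕ, k + 1 ≤ jj → cutoff k < 1 - 2 * eps θ jj := by
    intro jj hjj
    have h2p : ((k:ℝ) + 1) < 2^(k+1) := by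
      exact_mod_cast Nat.lt_two_pow_self (n := k+1)
    have hpow : (2:ℝ)^(k+1) ≤ 2^jj := by
      apply pow_le_pow_right₀ (by norm_num) hjj
    have hp1 : (0:ℝ) < 2^(k+1) := by positivity
    have hp2 : (0:ℝ) < 2^jj := by positivity
    have hk1 : (0:ℝ) < (k:ℝ) + 1 := by positivity
    have heps : 2 * eps θ jj < 1 / ((k:ℝ)+1) := by
      rw [eps]
      have e1 : 2 * (θ / 2 ^ jj) = 2*θ/2^jj := by ring
      have e2 : 2*θ/2^jj ≤ 1/2^jj := by
        gcongr
        · linarith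
      have e3 : (1:ℝ)/2^jj ≤ 1/2^(k+1) := one_div_le_one_div_of_le hp1 hpow
      have e4 : (1:ℝ)/2^(k+1) < 1/((k:ℝ)+1) := one_div_lt_one_div_of_lt hk1 h2p
      linarith
    rw [cutoff]
    linarith
  -- extract the two witnesses
  obtain ⟨i, jj, d', hi, hjj, hjj1, heq⟩ := hcompl (k+1)
  obtain ⟨i₂, hlt₂, heq₂⟩ := hterm i
  rw [heq] at heq₂
  have hval₁ : mart P D θ g N (L+i) (c i) = (if d' then (1:ℝ) else -1) * (1 - 2*eps θ jj) := by
    rw [hmval i, heq]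
  have hval₂ : mart P D θ g N (L+i₂) (c i₂)
      = (if !d' then (1:ℝ) else -1) * (1 - 2*eps θ (jj+1)) := by
    rw [hmval i₂, heq₂]
  have hcut₁ : cutoff k < 1 - 2 * eps θ jj := hcut jj hjj
  have hcut₂ : cutoff k < 1 - 2 * eps θ (jj+1) := hcut (jj+1) (by omega)
  have hmem₁ : c i ∈ D (L+i) ∧ c i ⊆ A₀ := ⟨(hcD i).1, (hcD i).2.trans hASsub⟩
  have hmem₂ : c i₂ ∈ D (L+i₂) ∧ c i₂ ⊆ A₀ := ⟨(hcD i₂).1, (hcD i₂).2.trans hASsub⟩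
  rcases d' with _|_
  · -- d' = false : down-witness at i, up-witness at i₂
    constructor
    · refine ⟨L+i₂, by omega, c i₂, hmem₂.1, hmem₂.2, ?_⟩
      rw [hval₂]
      simpa using hcut₂
    · refine ⟨L+i, by omega, c i, hmem₁.1, hmem₁.2, ?_⟩
      rw [hval₁]
      simp only [Bool.false_eq_true, if_false]
      linarith
  · -- d' = true : up-witness at i, down-witness at i₂
    constructor
    · refine ⟨L+i, by omega, c i, hmem₁.1, hmem₁.2, ?_⟩
      rw [hval₁]
      simpa using hcut₁
    · refine ⟨L+i₂, by omega, c i₂, hmem₂.1, hmem₂.2, ?_⟩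
      rw [hval₂]
      simp only [Bool.not_true, Bool.false_eq_true, if_false]
      linarith


end Construction3

/-! ### Final assembly -/

section Assembly
variable [MeasurableSpace Ω] {P : Measure Ω} {D : ℕ → Finset (Set Ω)}

lemma construction_full [IsProbabilityMeasure P] (hp : IsPartitionSeq D) (hA : AssumptionA P D)
    (g0 : MartBall P D ∞) (N : ℕ) {η : ℝ} (hη : 0 < η) :
    ∃ f : MartBall P D ∞, OscProp D f.1 ∧
      ∀ k, k ≤ N → ∀ A ∈ D k, |f.1 k A - g0.1 k A| ≤ η := by
  set θ := min η (1/2) with hθdef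
  have hθ : 0 < θ := lt_min hη (by norm_num)
  have hθ2 : θ ≤ 1/2 := min_le_right _ _
  have hgb : ∀ n, ∀ A ∈ D n, |g0.1 n A| ≤ 1 := fun n A hA' => martball_abs_le hp hA g0 hA'
  have hgs := ((isMart_iff_onestep hp).1 g0.2.1).2
  have hb : ∀ m, ∀ A ∈ D m, |mart P D θ g0.1 N m A| ≤ 1 := mart_abs_le hp hA hθ hθ2 hgb
  have hnorm : martNorm P D ∞ (mart P D θ g0.1 N) ≤ 1 := by
    apply iSup_le
    intro n
    have := lpNormTop_le (P := P) (f := mart P D θ g0.1 N) (n := n) hp zero_le_one (hb n)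
    simpa [ENNReal.ofReal_one] using this
  refine ⟨⟨mart P D θ g0.1 N, mart_isMart hp hA hgs, hnorm⟩, mart_oscProp hp hA hθ hθ2 hgb, ?_⟩
  intro k hk A hAk
  exact (mart_close hθ hgb k hk A hAk).trans (min_le_left _ _)

lemma T_dense [IsProbabilityMeasure P] (hp : IsPartitionSeq D) (hA : AssumptionA P D) :
    Dense {f : MartBall P D ∞ | OscProp D f.1} := by
  apply martball_dense hp
  intro g0 N η hη
  obtain ⟨f, hosc, hclose⟩ := construction_full hp hA g0 N hη
  exact ⟨f, hosc, fun k hk A hAk => hclose k hk A hAk⟩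

lemma isOpen_osc_gt [IsProbabilityMeasure P] (hp : IsPartitionSeq D) (hA : AssumptionA P D)
    (A : Set Ω) (k : ℕ) (c : ℝ) :
    IsOpen {f : MartBall P D ∞ | ∃ m, k ≤ m ∧ ∃ B ∈ D m, B ⊆ A ∧ c < f.1 m B} := by
  have key : {f : MartBall P D ∞ | ∃ m, k ≤ m ∧ ∃ B ∈ D m, B ⊆ A ∧ c < f.1 m B} =
      ⋃ (m : ℕ), ⋃ (_ : k ≤ m), ⋃ B ∈ (D m).filter (· ⊆ A),
        {f : MartBall P D ∞ | c < f.1 m B} := by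
    ext f
    simp only [Set.mem_setOf_eq, Set.mem_iUnion, Finset.mem_filter]
    constructor
    · rintro ⟨m, hm, B, hB, hBA, hc⟩; exact ⟨m, hm, B, ⟨hB, hBA⟩, hc⟩
    · rintro ⟨m, hm, B, ⟨hB, hBA⟩, hc⟩; exact ⟨m, hm, B, hB, hBA, hc⟩
  rw [key]
  exact isOpen_iUnion fun m => isOpen_iUnion fun _ => isOpen_biUnion fun B hB =>
    isOpen_martball_gt hp hA (Finset.mem_filter.1 hB).1 c

lemma isOpen_osc_lt [IsProbabilityMeasure P] (hp : IsPartitionSeq D) (hA : AssumptionA P D)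
    (A : Set Ω) (k : ℕ) (c : ℝ) :
    IsOpen {f : MartBall P D ∞ | ∃ m, k ≤ m ∧ ∃ B ∈ D m, B ⊆ A ∧ f.1 m B < c} := by
  have key : {f : MartBall P D ∞ | ∃ m, k ≤ m ∧ ∃ B ∈ D m, B ⊆ A ∧ f.1 m B < c} =
      ⋃ (m : ℕ), ⋃ (_ : k ≤ m), ⋃ B ∈ (D m).filter (· ⊆ A),
        {f : MartBall P D ∞ | f.1 m B < c} := by
    ext f
    simp only [Set.mem_setOf_eq, Set.mem_iUnion, Finset.mem_filter]
    constructor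
    · rintro ⟨m, hm, B, hB, hBA, hc⟩; exact ⟨m, hm, B, ⟨hB, hBA⟩, hc⟩
    · rintro ⟨m, hm, B, ⟨hB, hBA⟩, hc⟩; exact ⟨m, hm, B, hB, hBA, hc⟩
  rw [key]
  exact isOpen_iUnion fun m => isOpen_iUnion fun _ => isOpen_biUnion fun B hB =>
    isOpen_martball_lt hp hA (Finset.mem_filter.1 hB).1 c

lemma T_isGδ [IsProbabilityMeasure P] (hp : IsPartitionSeq D) (hA : AssumptionA P D) :
    IsGδ {f : MartBall P D ∞ | OscProp D f.1} := by
  have key : {f : MartBall P D ∞ | OscProp D f.1} =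
      ⋂ (n : ℕ), ⋂ (k : ℕ), ⋂ A ∈ (↑(D n) : Set (Set Ω)),
        ({f : MartBall P D ∞ | ∃ m, k ≤ m ∧ ∃ B ∈ D m, B ⊆ A ∧ cutoff k < f.1 m B} ∩
         {f : MartBall P D ∞ | ∃ m, k ≤ m ∧ ∃ B ∈ D m, B ⊆ A ∧ f.1 m B < -(cutoff k)}) := by
    ext f
    simp only [Set.mem_setOf_eq, Set.mem_iInter, Set.mem_inter_iff, Finset.mem_coe]
    constructor
    · intro h n k A hA'
      exact ⟨(h n A hA' k).1, (h n A hA' k).2⟩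
    · intro h n A hA' k
      exact ⟨(h n k A hA').1, (h n k A hA').2⟩
  rw [key]
  refine IsGδ.iInter fun n => IsGδ.iInter fun k =>
    IsGδ.biInter (D n).countable_toSet fun A hA' =>
      ((isOpen_osc_gt hp hA A k (cutoff k)).inter
        (isOpen_osc_lt hp hA A k (-(cutoff k)))).isGδ

lemma isOpen_prodset_gt [IsProbabilityMeasure P] (hp : IsPartitionSeq D) (hA : AssumptionA P D)
    (k : ℕ) (c : ℝ) :
    IsOpen {q : MartBall P D ∞ × Kt D | ∃ m, k ≤ m ∧ c < q.1.1 m (q.2.1 m)} := by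
  have key : {q : MartBall P D ∞ × Kt D | ∃ m, k ≤ m ∧ c < q.1.1 m (q.2.1 m)} =
      ⋃ (m : ℕ), ⋃ (_ : k ≤ m), ⋃ B ∈ D m,
        ({g : MartBall P D ∞ | c < g.1 m B} ×ˢ {x : Kt D | x.1 m = B}) := by
    ext q
    simp only [Set.mem_setOf_eq, Set.mem_iUnion, Set.mem_prod]
    constructor
    · rintro ⟨m, hm, hc⟩
      exact ⟨m, hm, q.2.1 m, q.2.2.1 m, hc, rfl⟩
    · rintro ⟨m, hm, B, hB, hc, hx⟩
      exact ⟨m, hm, by rwa [hx]⟩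
  rw [key]
  exact isOpen_iUnion fun m => isOpen_iUnion fun _ => isOpen_biUnion fun B hB =>
    (isOpen_martball_gt hp hA hB c).prod (isOpen_kt_eq m B)

lemma isOpen_prodset_lt [IsProbabilityMeasure P] (hp : IsPartitionSeq D) (hA : AssumptionA P D)
    (k : ℕ) (c : ℝ) :
    IsOpen {q : MartBall P D ∞ × Kt D | ∃ m, k ≤ m ∧ q.1.1 m (q.2.1 m) < c} := by
  have key : {q : MartBall P D ∞ × Kt D | ∃ m, k ≤ m ∧ q.1.1 m (q.2.1 m) < c} =
      ⋃ (m : ℕ), ⋃ (_ : k ≤ m), ⋃ B ∈ D m,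
        ({g : MartBall P D ∞ | g.1 m B < c} ×ˢ {x : Kt D | x.1 m = B}) := by
    ext q
    simp only [Set.mem_setOf_eq, Set.mem_iUnion, Set.mem_prod]
    constructor
    · rintro ⟨m, hm, hc⟩
      exact ⟨m, hm, q.2.1 m, q.2.2.1 m, hc, rfl⟩
    · rintro ⟨m, hm, B, hB, hc, hx⟩
      exact ⟨m, hm, by rwa [hx]⟩
  rw [key]
  exact isOpen_iUnion fun m => isOpen_iUnion fun _ => isOpen_biUnion fun B hB =>
    (isOpen_martball_lt hp hA hB c).prod (isOpen_kt_eq m B)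

lemma prod_isGδ [IsProbabilityMeasure P] (hp : IsPartitionSeq D) (hA : AssumptionA P D) :
    IsGδ {q : MartBall P D ∞ × Kt D | OscFullAt D q.1.1 q.2} := by
  have key : {q : MartBall P D ∞ × Kt D | OscFullAt D q.1.1 q.2} = ⋂ (k : ℕ),
      ({q : MartBall P D ∞ × Kt D | ∃ m, k ≤ m ∧ cutoff k < q.1.1 m (q.2.1 m)} ∩
       {q : MartBall P D ∞ × Kt D | ∃ m, k ≤ m ∧ q.1.1 m (q.2.1 m) < -(cutoff k)}) := by
    ext ⟨f, x⟩
    rw [Set.mem_setOf_eq, oscFullAt_iff (fun m => martball_abs_le hp hA f (x.2.1 m))]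
    simp only [Set.mem_iInter, Set.mem_inter_iff, Set.mem_setOf_eq]
  rw [key]
  exact IsGδ.iInter fun k =>
    ((isOpen_prodset_gt hp hA k (cutoff k)).inter
      (isOpen_prodset_lt hp hA k (-(cutoff k)))).isGδ

lemma prod_dense [IsProbabilityMeasure P] (hp : IsPartitionSeq D) (hA : AssumptionA P D) :
    Dense {q : MartBall P D ∞ × Kt D | OscFullAt D q.1.1 q.2} := by
  rw [dense_iff_inter_open]
  rintro W hW ⟨⟨g0, x0⟩, hq⟩
  obtain ⟨u, v, hu, hv, hgu, hxv, hsub⟩ := isOpen_prod_iff.1 hW g0 x0 hq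
  obtain ⟨Nu, η, hη, hball⟩ := martball_mem_nhds hp hu hgu
  obtain ⟨f, hosc, hclose⟩ := construction_full hp hA g0 Nu hη
  have hfu : f ∈ u := hball f (fun k hk A hAk => hclose k hk A hAk)
  obtain ⟨Nv, hcyl⟩ := kt_mem_nhds hp hv hxv
  obtain ⟨x, hx1, hx2⟩ := (slice_dense hp hA f hosc).inter_open_nonempty _
    (isOpen_kt_eq Nv (x0.1 Nv)) ⟨x0, rfl⟩
  exact ⟨(f, x), hsub ⟨hfu, hcyl x hx1⟩, hx2⟩

end Assembly

/-- Theorem (main:ip): the set of pairs `(f, x) ∈ M_{∞,1} × K` with `limsup f_n(x) = 1`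
and `liminf f_n(x) = -1` is a dense `G_δ` subset of `M_{∞,1} × K` (with the topology of
pointwise convergence on `M_{∞,1}`); in particular a dense `G_δ` set of `f ∈ M_{∞,1}`
have this maximal oscillation at all points of a dense `G_δ` subset of `K`. -/
theorem statement6 [MeasurableSpace Ω] (P : Measure Ω) [IsProbabilityMeasure P]
    (D : ℕ → Finset (Set Ω)) (hpart : IsPartitionSeq D) (hA : AssumptionA P D) :
    (IsGδ {q : MartBall P D ∞ × Kt D | OscFullAt D q.1.1 q.2} ∧
     Dense {q : MartBall P D ∞ × Kt D | OscFullAt D q.1.1 q.2}) ∧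
    ∃ T : Set (MartBall P D ∞), IsGδ T ∧ Dense T ∧ ∀ f ∈ T,
      IsGδ {x : Kt D | OscFullAt D f.1 x} ∧ Dense {x : Kt D | OscFullAt D f.1 x} := by
  refine ⟨⟨prod_isGδ hpart hA, prod_dense hpart hA⟩,
    {f : MartBall P D ∞ | OscProp D f.1}, T_isGδ hpart hA, T_dense hpart hA, ?_⟩
  intro f hf
  exact ⟨slice_isGδ hpart hA f, slice_dense hpart hA f hf⟩

end MartingalePaper
end
end
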